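/- arXiv:1511.07949 — 11 statements merged into one kernel-verified Lean document; each statement's English description precedes it below -/
import Mathlib

section
/- Let A and B be finite nonempty types and let p be a probability mass function on A × B (nonnegative, summing to 1). Let p_A(a) = Σ_b p(a,b), p_B(b) = Σ_a p(a,b), and for a with p_A(a) > 0 let p_{B|A}(b|a) = p(a,b)/p_A(a). Then the Shannon mutual information I(A;B) = Σ_{(a,b): p(a,b)>0} p(a,b) · log₂( p(a,b) / (p_A(a)·p_B(b)) ) satisfies I(A;B) ≤ log₂( Σ_{b} max_{a : p_A(a)>0} p_{B|A}(b|a) ). -/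
/-- For a probability mass function `p` on `A × B` (finite nonempty types),
the Shannon mutual information `I(A;B)` is at most the Rényi mutual information of
order infinity, `I_∞(A;B) = log₂ (∑ b, max_{a : p_A(a) > 0} p_{B|A}(b|a))`. -/
theorem shannon_le_renyi_infty {A B : Type*} [Fintype A] [Fintype B]
    [Nonempty A] [Nonempty B]
    (p : A → B → ℝ)
    (hp0 : ∀ a b, 0 ≤ p a b)
    (hp1 : ∑ a : A, ∑ b : B, p a b = 1) :
    (∑ a : A, ∑ b : B,
        if 0 < p a b then
          p a b * Real.logb 2 (p a b / ((∑ b' : B, p a b') * (∑ a' : A, p a' b)))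
        else 0)
      ≤ Real.logb 2 (∑ b : B,
          ⨆ a : {a : A // 0 < ∑ b' : B, p a b'}, p a.1 b / (∑ b' : B, p a.1 b')) := by
  classical
  set pA : A → ℝ := fun a => ∑ b' : B, p a b' with hpA
  set pB : B → ℝ := fun b => ∑ a' : A, p a' b with hpB
  set M : B → ℝ := fun b => ⨆ a : {a : A // 0 < pA a}, p a.1 b / pA a.1 with hM
  have hpA0 : ∀ a, 0 ≤ pA a := fun a => Finset.sum_nonneg fun b _ => hp0 a b
  have hpB0 : ∀ b, 0 ≤ pB b := fun b => Finset.sum_nonneg fun a _ => hp0 a b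
  have hexA : ∃ a, 0 < pA a := by
    by_contra h
    push_neg at h
    have h0 : ∀ a, pA a = 0 := fun a => le_antisymm (h a) (hpA0 a)
    have : (∑ a : A, pA a) = 0 := by simp [h0]
    rw [hp1] at this; norm_num at this
  haveI : Nonempty {a : A // 0 < pA a} := ⟨⟨hexA.choose, hexA.choose_spec⟩⟩
  have hbdd : ∀ b, BddAbove (Set.range fun a : {a : A // 0 < pA a} => p a.1 b / pA a.1) :=
    fun b => Set.Finite.bddAbove (Set.finite_range _)
  have hM_ge : ∀ b (a : A), 0 < pA a → p a b / pA a ≤ M b := by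
    intro b a ha
    exact le_ciSup (hbdd b) ⟨a, ha⟩
  have hM0 : ∀ b, 0 ≤ M b := by
    intro b
    obtain ⟨a, ha⟩ := hexA
    exact le_trans (div_nonneg (hp0 a b) (hpA0 a)) (hM_ge b a ha)
  -- Step 1: termwise bound
  have step1 : (∑ a : A, ∑ b : B,
        if 0 < p a b then p a b * Real.logb 2 (p a b / (pA a * pB b)) else 0)
      ≤ ∑ b : B, pB b * Real.logb 2 (M b / pB b) := by
    rw [Finset.sum_comm]
    apply Finset.sum_le_sum
    intro b _
    have hterm : ∀ a : A, (if 0 < p a b then p a b * Real.logb 2 (p a b / (pA a * pB b)) else 0)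
        ≤ p a b * Real.logb 2 (M b / pB b) := by
      intro a
      split_ifs with h
      · have hpAa : 0 < pA a :=
          lt_of_lt_of_le h (Finset.single_le_sum (fun b' _ => hp0 a b') (Finset.mem_univ b))
        have hpBb : 0 < pB b :=
          lt_of_lt_of_le h (Finset.single_le_sum (fun a' _ => hp0 a' b) (Finset.mem_univ a))
        have harg : p a b / (pA a * pB b) = (p a b / pA a) / pB b := by
          field_simp
        have hle : p a b / (pA a * pB b) ≤ M b / pB b := by
          rw [harg]
          gcongr
          exact hM_ge b a hpAa
        have hpos : 0 < p a b / (pA a * pB b) := by positivity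
        exact mul_le_mul_of_nonneg_left (Real.logb_le_logb_of_le one_lt_two hpos hle) (hp0 a b)
      · have hz : p a b = 0 := le_antisymm (not_lt.mp h) (hp0 a b)
        simp [hz]
    calc ∑ a : A, (if 0 < p a b then p a b * Real.logb 2 (p a b / (pA a * pB b)) else 0)
        ≤ ∑ a : A, p a b * Real.logb 2 (M b / pB b) := Finset.sum_le_sum fun a _ => hterm a
      _ = pB b * Real.logb 2 (M b / pB b) := by rw [← Finset.sum_mul]
  -- Step 2: Jensen on the support of pB
  set S : Finset B := Finset.univ.filter (fun b => 0 < pB b) with hS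
  have hSsum : ∑ b ∈ S, pB b = 1 := by
    rw [hS, Finset.sum_filter]
    rw [show (∑ b : B, if 0 < pB b then pB b else 0) = ∑ b : B, pB b from
      Finset.sum_congr rfl fun b _ => by
        split_ifs with h
        · rfl
        · exact (le_antisymm (not_lt.mp h) (hpB0 b)).symm]
    rw [hpB, Finset.sum_comm]
    exact hp1
  have hMposS : ∀ b ∈ S, 0 < M b := by
    intro b hb
    rw [hS, Finset.mem_filter] at hb
    obtain ⟨a, _, ha⟩ := Finset.exists_lt_of_sum_lt (f := fun _ : A => (0:ℝ))
      (by simpa using hb.2)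
    have hpAa : 0 < pA a :=
      lt_of_lt_of_le ha (Finset.single_le_sum (fun b' _ => hp0 a b') (Finset.mem_univ b))
    exact lt_of_lt_of_le (by positivity) (hM_ge b a hpAa)
  have step2 : ∑ b : B, pB b * Real.logb 2 (M b / pB b)
      ≤ Real.logb 2 (∑ b ∈ S, M b) := by
    have hdrop : ∑ b : B, pB b * Real.logb 2 (M b / pB b)
        = ∑ b ∈ S, pB b * Real.logb 2 (M b / pB b) := by
      rw [hS, Finset.sum_filter]
      refine Finset.sum_congr rfl fun b _ => ?_
      split_ifs with h
      · rfl
      · have : pB b = 0 := le_antisymm (not_lt.mp h) (hpB0 b)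
        simp [this]
    rw [hdrop]
    have hjensen : ∑ b ∈ S, pB b • Real.log (M b / pB b)
        ≤ Real.log (∑ b ∈ S, pB b • (M b / pB b)) := by
      apply (strictConcaveOn_log_Ioi.concaveOn).le_map_sum
      · intro b _; exact hpB0 b
      · exact hSsum
      · intro b hb
        have hb' := hb
        rw [hS, Finset.mem_filter] at hb'
        exact Set.mem_Ioi.2 (div_pos (hMposS b hb) hb'.2)
    have hptsum : ∑ b ∈ S, pB b • (M b / pB b) = ∑ b ∈ S, M b := by
      refine Finset.sum_congr rfl fun b hb => ?_
      rw [hS, Finset.mem_filter] at hb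
      rw [smul_eq_mul, mul_comm, div_mul_cancel₀ _ (ne_of_gt hb.2)]
    rw [hptsum] at hjensen
    have hlog2 : (0:ℝ) < Real.log 2 := Real.log_pos one_lt_two
    calc ∑ b ∈ S, pB b * Real.logb 2 (M b / pB b)
        = (∑ b ∈ S, pB b * Real.log (M b / pB b)) / Real.log 2 := by
          rw [Finset.sum_div]
          exact Finset.sum_congr rfl fun b _ => by rw [Real.logb, mul_div_assoc]
      _ ≤ Real.log (∑ b ∈ S, M b) / Real.log 2 := by
          gcongr
          simpa [smul_eq_mul] using hjensen
      _ = Real.logb 2 (∑ b ∈ S, M b) := rfl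
  have hsubset : ∑ b ∈ S, M b ≤ ∑ b : B, M b :=
    Finset.sum_le_sum_of_subset_of_nonneg (Finset.subset_univ S) (fun b _ _ => hM0 b)
  have hSne : S.Nonempty := by
    apply Finset.nonempty_of_ne_empty
    intro h
    rw [h] at hSsum
    simp at hSsum
  have hSpos : 0 < ∑ b ∈ S, M b :=
    Finset.sum_pos hMposS hSne
  exact le_trans step1 (le_trans step2
    (Real.logb_le_logb_of_le one_lt_two hSpos hsubset))
end

section
/- Let X, Y, Z be finite nonempty types, let q be fixed, and let α : X → ℝ≥0 and β : Y → ℝ≥0 be nonnegative functions, and fix z_q ∈ Z. For a tile t = (X_t, Y_t, z_t) with X_t ⊆ X, Y_t ⊆ Y, z_t ∈ Z, define σ_t = min_{x ∈ X_t} α(x) − max_{x' ∉ X_t} α(x') and τ_t = min_{y ∈ Y_t} β(y) − max_{y' ∉ Y_t} β(y'), where a maximum over an empty set is taken to be 0 (and σ_t, τ_t are only considered for nonempty X_t, Y_t). Let T_q = { t : σ_t > 0, τ_t > 0, and z_t = z_q }. Then for every (x,y) ∈ X × Y: Σ_{t ∈ T_q : x ∈ X_t and y ∈ Y_t} σ_t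 · τ_t = α(x) · β(y). -/
open Finset

noncomputable def Pred (S : Finset ℝ) (v : ℝ) : ℝ :=
  sSup ((S.filter (fun w => w < v)) : Set ℝ)

lemma pred_lemmas (S : Finset ℝ) (h0 : (0:ℝ) ∈ S) (v : ℝ) (hv : 0 < v) :
    Pred S v ∈ S ∧ Pred S v < v ∧ 0 ≤ Pred S v ∧
      ∀ w ∈ S, w < v → w ≤ Pred S v := by
  have hne : ((S.filter (fun w => w < v)) : Set ℝ).Nonempty :=
    ⟨0, by simpa using ⟨h0, hv⟩⟩
  have hfin : ((S.filter (fun w => w < v)) : Set ℝ).Finite := Finset.finite_toSet _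
  have hmem : Pred S v ∈ ((S.filter (fun w => w < v)) : Set ℝ) :=
    hne.csSup_mem hfin
  simp only [Finset.coe_filter, Set.mem_setOf_eq, Finset.mem_coe] at hmem
  refine ⟨hmem.1, hmem.2, ?_, ?_⟩
  · exact le_csSup hfin.bddAbove (by simpa using ⟨h0, hv⟩)
  · intro w hw hwv
    exact le_csSup hfin.bddAbove (by simpa using ⟨hw, hwv⟩)

lemma telescope_general (S : Finset ℝ) (h0 : (0:ℝ) ∈ S) :
    ∀ (n : ℕ) (b : ℝ), b ∈ S → 0 ≤ b →
      (S.filter (fun v => 0 < v ∧ v ≤ b)).card ≤ n →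
      ∑ v ∈ S.filter (fun v => 0 < v ∧ v ≤ b), (v - Pred S v) = b := by
  intro n
  induction n with
  | zero =>
    intro b hb hb0 hcard
    rcases eq_or_lt_of_le hb0 with h | h
    · have : S.filter (fun v => 0 < v ∧ v ≤ b) = ∅ := by
        ext v; simp only [mem_filter, notMem_empty, iff_false, not_and]
        intro _ hv hvb; exact absurd (hvb.trans_lt (by linarith)) (lt_irrefl v).elim
      rw [this, Finset.sum_empty, ← h]
    · exfalso
      have : b ∈ S.filter (fun v => 0 < v ∧ v ≤ b) := by simp [hb, h]
      have := Finset.card_pos.mpr ⟨b, this⟩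
      omega
  | succ n ih =>
    intro b hb hb0 hcard
    rcases eq_or_lt_of_le hb0 with h | h
    · have : S.filter (fun v => 0 < v ∧ v ≤ b) = ∅ := by
        ext v; simp only [mem_filter, notMem_empty, iff_false, not_and]
        intro _ hv hvb; linarith
      rw [this, Finset.sum_empty, ← h]
    · obtain ⟨hpS, hplt, hp0, hpmax⟩ := pred_lemmas S h0 b h
      have hsplit : S.filter (fun v => 0 < v ∧ v ≤ b)
          = insert b (S.filter (fun v => 0 < v ∧ v ≤ Pred S b)) := by
        ext v
        simp only [mem_filter, mem_insert]
        constructor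
        · rintro ⟨hvS, hv0, hvb⟩
          rcases eq_or_lt_of_le hvb with h' | h'
          · exact Or.inl h'
          · exact Or.inr ⟨hvS, hv0, hpmax v hvS h'⟩
        · rintro (rfl | ⟨hvS, hv0, hvp⟩)
          · exact ⟨hb, h, le_refl _⟩
          · exact ⟨hvS, hv0, hvp.trans hplt.le⟩
      have hbnot : b ∉ S.filter (fun v => 0 < v ∧ v ≤ Pred S b) := by
        simp only [mem_filter, not_and]
        intro _ _ hc; exact absurd hc (not_le.mpr hplt)
      rw [hsplit, Finset.sum_insert hbnot]
      have hcard' : (S.filter (fun v => 0 < v ∧ v ≤ Pred S b)).card ≤ n := by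
        have := Finset.card_insert_of_notMem hbnot
        rw [hsplit] at hcard
        omega
      rw [ih (Pred S b) hpS hp0 hcard']
      ring


noncomputable def FF {X : Type*} [Fintype X] [DecidableEq X] (α : X → ℝ) (A : Finset X) : ℝ :=
  (⨅ x : A, α x.1) - (⨆ x : (Aᶜ : Finset X), α x.1)

lemma iInf_finset {X : Type*} (α : X → ℝ) (A : Finset X) :
    (⨅ x : A, α x.1) = sInf (α '' ↑A) := by
  rw [iInf]
  congr 1
  ext w
  simp [Set.mem_image]

lemma iSup_finset {X : Type*} (α : X → ℝ) (A : Finset X) :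
    (⨆ x : A, α x.1) = sSup (α '' ↑A) := by
  rw [iSup]
  congr 1
  ext w
  simp [Set.mem_image]

lemma FF_eq {X : Type*} [Fintype X] [DecidableEq X] (α : X → ℝ) (A : Finset X) :
    FF α A = sInf (α '' ↑A) - sSup (α '' (↑A)ᶜ) := by
  rw [FF, iInf_finset, iSup_finset, Finset.coe_compl]

lemma char {X : Type*} [Fintype X] [DecidableEq X]
    (α : X → ℝ) (hα : ∀ x, 0 ≤ α x) (A : Finset X) (hFA : 0 < FF α A) (hne : A.Nonempty) :
    sInf (α '' ↑A) ∈ α '' ↑A ∧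
    A = univ.filter (fun x' => sInf (α '' ↑A) ≤ α x') ∧
    0 < sInf (α '' ↑A) ∧
    FF α A = sInf (α '' ↑A) - Pred (insert 0 (Finset.image α univ)) (sInf (α '' ↑A)) := by
  set m := sInf (α '' ↑A) with hm
  have hAfin : (α '' (↑A : Set X)).Finite := (A.finite_toSet).image α
  have hAne : (α '' (↑A : Set X)).Nonempty := (Finset.coe_nonempty.mpr hne).image α
  have c1 : m ∈ α '' ↑A := hAne.csInf_mem hAfin
  have hlb : ∀ x' ∈ A, m ≤ α x' := fun x' hx' => csInf_le hAfin.bddBelow ⟨x', hx', rfl⟩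
  have hsup0 : 0 ≤ sSup (α '' (↑A : Set X)ᶜ) :=
    Real.sSup_nonneg (by rintro w ⟨x', _, rfl⟩; exact hα x')
  rw [FF_eq] at hFA
  have c3 : 0 < m := by rw [hm]; linarith
  have c2 : A = univ.filter (fun x' => m ≤ α x') := by
    ext x'
    simp only [mem_filter, mem_univ, true_and]
    constructor
    · exact hlb x'
    · intro hmx'
      by_contra hx'
      have hle : α x' ≤ sSup (α '' (↑A : Set X)ᶜ) :=
        le_csSup (Set.toFinite _).bddAbove ⟨x', hx', rfl⟩
      rw [← hm] at hFA
      linarith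
  refine ⟨c1, c2, c3, ?_⟩
  have hset : (((insert (0:ℝ) (Finset.image α univ)).filter (fun w => w < m)) : Set ℝ)
      = insert (0:ℝ) (α '' (↑A : Set X)ᶜ) := by
    ext w
    simp only [Finset.coe_filter, Set.mem_setOf_eq, Finset.mem_insert, Finset.mem_image,
      Finset.mem_univ, true_and, Set.mem_insert_iff, Set.mem_image, Set.mem_compl_iff,
      Finset.mem_coe]
    constructor
    · rintro ⟨(rfl | ⟨x', rfl⟩), hw⟩
      · exact Or.inl rfl
      · refine Or.inr ⟨x', ?_, rfl⟩
        intro hx'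
        exact absurd (hlb x' hx') (not_le.mpr hw)
    · rintro (rfl | ⟨x', hx', rfl⟩)
      · exact ⟨Or.inl rfl, c3⟩
      · refine ⟨Or.inr ⟨x', rfl⟩, ?_⟩
        by_contra hge
        exact hx' (by rw [c2]; simp only [mem_filter, mem_univ, true_and]; exact not_lt.mp hge)
  have hsup_eq : sSup (α '' (↑A : Set X)ᶜ) = Pred (insert 0 (Finset.image α univ)) m := by
    rw [Pred, hset]
    rcases (α '' (↑A : Set X)ᶜ).eq_empty_or_nonempty with he | hne'
    · rw [he]
      simp [Real.sSup_empty]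
    · rw [csSup_insert (Set.toFinite _).bddAbove hne', sup_eq_right.mpr hsup0]
  rw [FF_eq, hsup_eq, ← hm]

lemma inv_char {X : Type*} [Fintype X] [DecidableEq X]
    (α : X → ℝ) (v : ℝ) (hv0 : 0 < v) (x0 : X) (hx0 : α x0 = v) :
    sInf (α '' ↑(univ.filter (fun x' => v ≤ α x'))) = v ∧
    0 < FF α (univ.filter (fun x' => v ≤ α x')) := by
  set B := univ.filter (fun x' => v ≤ α x') with hB
  have hx0B : x0 ∈ B := by simp [hB, hx0]
  have h1 : sInf (α '' ↑B) = v := by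
    apply le_antisymm
    · calc sInf (α '' ↑B) ≤ α x0 := csInf_le (Set.toFinite _).bddBelow ⟨x0, by simpa using hx0B, rfl⟩
        _ = v := hx0
    · apply le_csInf (⟨α x0, ⟨x0, by simpa using hx0B, rfl⟩⟩ : (α '' (↑B : Set X)).Nonempty)
      rintro w ⟨x', hx', rfl⟩
      have : x' ∈ B := hx'
      simpa [hB] using this
  have h2 : sSup (α '' (↑B : Set X)ᶜ) < v := by
    rcases (α '' (↑B : Set X)ᶜ).eq_empty_or_nonempty with he | hne'
    · rw [he, Real.sSup_empty]; exact hv0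
    · obtain ⟨x', hx', hval⟩ := hne'.csSup_mem (Set.toFinite _)
      rw [← hval]
      have hx'B : x' ∉ B := hx'
      simp only [hB, mem_filter, mem_univ, true_and] at hx'B
      exact not_le.mp hx'B
  exact ⟨h1, by rw [FF_eq, h1]; linarith⟩

lemma side_sum {X : Type*} [Fintype X] [DecidableEq X]
    (α : X → ℝ) (hα : ∀ x, 0 ≤ α x) (x : X) :
    ∑ A ∈ univ.filter (fun A : Finset X => 0 < FF α A ∧ x ∈ A), FF α A = α x := by
  classical
  set S : Finset ℝ := insert 0 (Finset.image α univ) with hS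
  have h0S : (0:ℝ) ∈ S := mem_insert_self _ _
  have key : ∑ A ∈ univ.filter (fun A : Finset X => 0 < FF α A ∧ x ∈ A), FF α A
      = ∑ v ∈ S.filter (fun v => 0 < v ∧ v ≤ α x), (v - Pred S v) := by
    refine Finset.sum_nbij' (fun A => sInf (α '' ↑A))
      (fun v => univ.filter (fun x' => v ≤ α x')) ?_ ?_ ?_ ?_ ?_
    · intro A hA
      simp only [mem_filter, mem_univ, true_and] at hA
      obtain ⟨c1, c2, c3, _⟩ := char α hα A hA.1 ⟨x, hA.2⟩
      simp only [mem_filter, hS, Finset.mem_insert, Finset.mem_image, Finset.mem_univ, true_and]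
      refine ⟨?_, c3, ?_⟩
      · obtain ⟨x', _, hx'⟩ := c1
        exact Or.inr ⟨x', hx'⟩
      · have := hA.2
        rw [c2] at this
        simpa using this
    · intro v hv
      simp only [mem_filter, hS, Finset.mem_insert, Finset.mem_image, Finset.mem_univ,
        true_and] at hv
      obtain ⟨hvS, hv0, hvx⟩ := hv
      obtain ⟨x0, hx0⟩ : ∃ x0, α x0 = v := by
        rcases hvS with rfl | h
        · exact absurd hv0 (lt_irrefl 0)
        · exact h
      obtain ⟨_, h2⟩ := inv_char α v hv0 x0 hx0
      simp only [mem_filter, mem_univ, true_and]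
      exact ⟨h2, by simp [hvx]⟩
    · intro A hA
      simp only [mem_filter, mem_univ, true_and] at hA
      exact (char α hα A hA.1 ⟨x, hA.2⟩).2.1.symm
    · intro v hv
      simp only [mem_filter, hS, Finset.mem_insert, Finset.mem_image, Finset.mem_univ,
        true_and] at hv
      obtain ⟨hvS, hv0, hvx⟩ := hv
      obtain ⟨x0, hx0⟩ : ∃ x0, α x0 = v := by
        rcases hvS with rfl | h
        · exact absurd hv0 (lt_irrefl 0)
        · exact h
      exact (inv_char α v hv0 x0 hx0).1
    · intro A hA
      simp only [mem_filter, mem_univ, true_and] at hA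
      exact (char α hα A hA.1 ⟨x, hA.2⟩).2.2.2
  rw [key]
  exact telescope_general S h0S (S.filter (fun v => 0 < v ∧ v ≤ α x)).card (α x)
    (by simp [hS]) (hα x) le_rfl


/-- telescoping claim: Fix `z_q ∈ Z` and nonnegative `α : X → ℝ`,
`β : Y → ℝ`.  For a tile `t = (X_t, Y_t, z_t)` let
`σ t = min_{x ∈ X_t} α x − max_{x' ∉ X_t} α x'` and
`τ t = min_{y ∈ Y_t} β y − max_{y' ∉ Y_t} β y'` (suprema/infima over empty sets
being `0` in `ℝ`).  Then for every `(x, y)`, the sum of `σ t * τ t` over the tiles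
`t ∈ T_q = {t : σ t > 0, τ t > 0, z_t = z_q}` containing `(x, y)` equals `α x * β y`. -/
theorem telescope_claim {X Y Z : Type*} [Fintype X] [Fintype Y] [Fintype Z]
    [Nonempty X] [Nonempty Y] [Nonempty Z]
    [DecidableEq X] [DecidableEq Y] [DecidableEq Z]
    (α : X → ℝ) (β : Y → ℝ) (hα : ∀ x, 0 ≤ α x) (hβ : ∀ y, 0 ≤ β y)
    (zq : Z)
    (σ τ : Finset X × Finset Y × Z → ℝ)
    (hσ : ∀ t : Finset X × Finset Y × Z,
      σ t = (⨅ x : t.1, α x.1) - (⨆ x : (t.1ᶜ : Finset X), α x.1))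
    (hτ : ∀ t : Finset X × Finset Y × Z,
      τ t = (⨅ y : t.2.1, β y.1) - (⨆ y : (t.2.1ᶜ : Finset Y), β y.1))
    (x : X) (y : Y) :
    (∑ t ∈ Finset.univ.filter (fun t : Finset X × Finset Y × Z =>
        (0 < σ t ∧ 0 < τ t ∧ t.2.2 = zq) ∧ x ∈ t.1 ∧ y ∈ t.2.1),
      σ t * τ t) = α x * β y := by
  classical
  have hσ' : ∀ t : Finset X × Finset Y × Z, σ t = FF α t.1 := fun t => hσ t
  have hτ' : ∀ t : Finset X × Finset Y × Z, τ t = FF β t.2.1 := fun t => hτ t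
  have step1 : (∑ t ∈ Finset.univ.filter (fun t : Finset X × Finset Y × Z =>
        (0 < σ t ∧ 0 < τ t ∧ t.2.2 = zq) ∧ x ∈ t.1 ∧ y ∈ t.2.1),
      σ t * τ t)
      = ∑ t ∈ Finset.univ.filter (fun t : Finset X × Finset Y × Z =>
        (0 < FF α t.1 ∧ 0 < FF β t.2.1 ∧ t.2.2 = zq) ∧ x ∈ t.1 ∧ y ∈ t.2.1),
      FF α t.1 * FF β t.2.1 := by
    apply Finset.sum_congr
    · apply Finset.filter_congr
      intro t _
      rw [hσ' t, hτ' t]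
    · intro t _
      rw [hσ' t, hτ' t]
  rw [step1]
  have step2 : (∑ t ∈ Finset.univ.filter (fun t : Finset X × Finset Y × Z =>
        (0 < FF α t.1 ∧ 0 < FF β t.2.1 ∧ t.2.2 = zq) ∧ x ∈ t.1 ∧ y ∈ t.2.1),
      FF α t.1 * FF β t.2.1)
      = (∑ A ∈ univ.filter (fun A : Finset X => 0 < FF α A ∧ x ∈ A), FF α A) *
        (∑ B ∈ univ.filter (fun B : Finset Y => 0 < FF β B ∧ y ∈ B), FF β B) := by
    rw [Finset.sum_filter, Finset.sum_filter, Finset.sum_filter, Finset.sum_mul_sum,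
      Fintype.sum_prod_type]
    refine Finset.sum_congr rfl fun A _ => ?_
    rw [Fintype.sum_prod_type]
    refine Finset.sum_congr rfl fun B _ => ?_
    rw [ite_zero_mul_ite_zero]
    have hcond : ∀ z : Z, ((0 < FF α A ∧ 0 < FF β B ∧ z = zq) ∧ x ∈ A ∧ y ∈ B)
        = (z = zq ∧ ((0 < FF α A ∧ x ∈ A) ∧ (0 < FF β B ∧ y ∈ B))) := by
      intro z; apply propext; tauto
    simp only [hcond, ite_and]
    simp
  rw [step2, side_sum α hα x, side_sum β hβ y]
end

section
/- Let X, Y, Z be finite nonempty types, fix z_q ∈ Z, and let α : X → ℝ≥0, β : Y → ℝ≥0 be nonnegative functions. With σ_t, τ_t and T_q defined as follows — for a tile t = (X_t, Y_t, z_t), σ_t = min_{x ∈ X_t} α(x) − max_{x' ∉ X_t} α(x') and τ_t = min_{y ∈ Y_t} β(y) − max_{y' ∉ Y_t} β(y') (maximum over the empty set is 0), and T_q = { t : σ_t > 0, τ_t > 0, z_t = z_q } — one has Σ_{t ∈ T_q} σ_t · τ_t = ( max_{x ∈ X} α(x) ) · ( max_{y ∈ Y} β(y) ). -/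
open Finset

lemma iSup_coe_sup' {ι : Type*} (s : Finset ι) (h : s.Nonempty) (f : ι → ℝ) :
    (⨆ x : s, f x.1) = s.sup' h f := by
  rw [Finset.sup'_eq_csSup_image, iSup]
  congr 1
  ext y
  simp

lemma iInf_coe_inf' {ι : Type*} (s : Finset ι) (h : s.Nonempty) (f : ι → ℝ) :
    (⨅ x : s, f x.1) = s.inf' h f := by
  rw [Finset.inf'_eq_csInf_image, iInf]
  congr 1
  ext y
  simp

lemma iSup_coe_empty {ι : Type*} {s : Finset ι} (h : s = ∅) (f : ι → ℝ) :
    (⨆ x : s, f x.1) = 0 := by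
  haveI : IsEmpty s := Finset.isEmpty_coe_sort.mpr h
  exact Real.iSup_of_isEmpty _

lemma iInf_coe_empty {ι : Type*} {s : Finset ι} (h : s = ∅) (f : ι → ℝ) :
    (⨅ x : s, f x.1) = 0 := by
  haveI : IsEmpty s := Finset.isEmpty_coe_sort.mpr h
  exact Real.iInf_of_isEmpty _

lemma iSup_coe_id_sup' (s : Finset ℝ) (h : s.Nonempty) : (⨆ x : s, (x.1 : ℝ)) = s.sup' h id :=
  iSup_coe_sup' s h id

lemma iSup_coe_id_empty {s : Finset ℝ} (h : s = ∅) : (⨆ x : s, (x.1 : ℝ)) = 0 :=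
  iSup_coe_empty h id

/-- Sup of `α` over a finset equals the sup of the finset of positive values of `α` on it. -/
lemma sup_vals {X : Type*} [DecidableEq X] (α : X → ℝ) (hα : ∀ x, 0 ≤ α x) (C : Finset X) :
    (⨆ x : C, α x.1) =
      ⨆ w : ((C.image α).filter (fun w => 0 < w) : Finset ℝ), (w.1 : ℝ) := by
  rcases C.eq_empty_or_nonempty with hC | hC
  · rw [iSup_coe_empty hC, iSup_coe_id_empty (by simp [hC])]
  · rw [iSup_coe_sup' _ hC]
    set D := (C.image α).filter (fun w => 0 < w) with hD
    rcases D.eq_empty_or_nonempty with hDe | hDn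
    · rw [iSup_coe_id_empty hDe]
      have hle : ∀ x ∈ C, α x ≤ 0 := by
        intro x hx
        by_contra hpos
        have : α x ∈ D := by
          simp only [hD, Finset.mem_filter, Finset.mem_image]
          exact ⟨⟨x, hx, rfl⟩, lt_of_not_ge hpos⟩
        simp [hDe] at this
      refine le_antisymm (Finset.sup'_le _ _ hle) ?_
      obtain ⟨x, hx⟩ := hC
      exact le_trans (hα x) (Finset.le_sup' α hx)
    · rw [iSup_coe_id_sup' _ hDn]
      refine le_antisymm (Finset.sup'_le _ _ ?_) (Finset.sup'_le _ _ ?_)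
      · intro x hx
        rcases lt_or_ge 0 (α x) with hpos | hnp
        · exact Finset.le_sup' (id : ℝ → ℝ) (by
            simp only [hD, Finset.mem_filter, Finset.mem_image]
            exact ⟨⟨x, hx, rfl⟩, hpos⟩)
        · obtain ⟨d, hd⟩ := hDn
          have : (0:ℝ) < d := (Finset.mem_filter.mp hd).2
          exact le_trans (le_of_lt (lt_of_le_of_lt hnp this)) (Finset.le_sup' (id : ℝ → ℝ) hd)
      · intro w hw
        obtain ⟨⟨x, hx, rfl⟩, -⟩ := by
          simpa only [hD, Finset.mem_filter, Finset.mem_image] using hw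
        exact Finset.le_sup' α hx

/-- Telescoping sum over a finset of positive reals. -/
lemma tel (S : Finset ℝ) (hpos : ∀ v ∈ S, 0 < v) :
    ∑ v ∈ S, (v - ⨆ w : (S.filter (fun w => w < v) : Finset ℝ), (w.1 : ℝ)) =
      ⨆ w : (S : Finset ℝ), (w.1 : ℝ) := by
  induction S using Finset.induction_on_max with
  | empty => simp [iSup_coe_id_empty (rfl : (∅ : Finset ℝ) = ∅)]
  | insert a s ha ih =>
    have hans : a ∉ s := fun h => lt_irrefl a (ha a h)
    rw [Finset.sum_insert hans]
    have h1 : (insert a s).filter (fun w => w < a) = s := by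
      ext w
      simp only [Finset.mem_filter, Finset.mem_insert]
      constructor
      · rintro ⟨rfl | hw, hlt⟩
        · exact absurd hlt (lt_irrefl _)
        · exact hw
      · intro hw; exact ⟨Or.inr hw, ha w hw⟩
    have h2 : ∀ v ∈ s, (insert a s).filter (fun w => w < v) = s.filter (fun w => w < v) := by
      intro v hv
      ext w
      simp only [Finset.mem_filter, Finset.mem_insert]
      constructor
      · rintro ⟨rfl | hw, hlt⟩
        · exact absurd (lt_trans (ha v hv) hlt) (lt_irrefl _)
        · exact ⟨hw, hlt⟩
      · rintro ⟨hw, hlt⟩; exact ⟨Or.inr hw, hlt⟩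
    rw [h1, Finset.sum_congr rfl (fun v hv => by rw [h2 v hv]),
      ih (fun v hv => hpos v (Finset.mem_insert_of_mem hv))]
    have h3 : (⨆ w : (insert a s : Finset ℝ), (w.1 : ℝ)) = a := by
      rw [iSup_coe_id_sup' _ ⟨a, Finset.mem_insert_self a s⟩]
      refine le_antisymm (Finset.sup'_le _ _ ?_) (Finset.le_sup' (id : ℝ → ℝ) (Finset.mem_insert_self a s))
      intro w hw
      rcases Finset.mem_insert.mp hw with rfl | hw
      · exact le_refl _
      · exact le_of_lt (ha w hw)
    rw [h3]; ring

lemma key {X : Type*} [Fintype X] [Nonempty X] [DecidableEq X] (α : X → ℝ) (hα : ∀ x, 0 ≤ α x) :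
    ∑ A : Finset X, (if 0 < (⨅ x : A, α x.1) - (⨆ x : (Aᶜ : Finset X), α x.1) then
        (⨅ x : A, α x.1) - (⨆ x : (Aᶜ : Finset X), α x.1) else 0) = ⨆ x : X, α x := by
  classical
  set f : Finset X → ℝ := fun A => (⨅ x : A, α x.1) - (⨆ x : (Aᶜ : Finset X), α x.1) with hf
  set S : Finset ℝ := (Finset.univ.image α).filter (fun v => 0 < v) with hS
  set Av : ℝ → Finset X := fun v => Finset.univ.filter (fun x => v ≤ α x) with hAv
  have hSpos : ∀ v ∈ S, 0 < v := fun v hv => (Finset.mem_filter.mp hv).2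
  -- for v ∈ S, Av v is nonempty and its inf is v
  have hAvne : ∀ v ∈ S, (Av v).Nonempty := by
    intro v hv
    obtain ⟨⟨x, hxv⟩, -⟩ := by
      simpa only [hS, Finset.mem_filter, Finset.mem_image, Finset.mem_univ, true_and] using hv
    exact ⟨x, by simp [hAv, hxv.ge]⟩
  have hAvinf : ∀ v ∈ S, (⨅ x : (Av v : Finset X), α x.1) = v := by
    intro v hv
    obtain ⟨⟨x, hxv⟩, -⟩ := by
      simpa only [hS, Finset.mem_filter, Finset.mem_image, Finset.mem_univ, true_and] using hv
    rw [iInf_coe_inf' _ (hAvne v hv)]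
    refine le_antisymm ?_ (Finset.le_inf' _ _ fun y hy => (Finset.mem_filter.mp hy).2)
    exact le_of_le_of_eq (Finset.inf'_le α (by simp [hAv, hxv.ge])) hxv
  -- the complement's positive values are exactly S ∩ (·<v)
  have hfilter_eq : ∀ v, (((Av v)ᶜ).image α).filter (fun w => 0 < w)
      = S.filter (fun w => w < v) := by
    intro v
    ext w
    simp only [hS, hAv, Finset.mem_filter, Finset.mem_image, Finset.mem_compl,
      Finset.mem_univ, true_and, not_le]
    constructor
    · rintro ⟨⟨x, hxv, rfl⟩, hw⟩
      exact ⟨⟨⟨x, rfl⟩, hw⟩, hxv⟩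
    · rintro ⟨⟨⟨x, rfl⟩, hw⟩, hlt⟩
      exact ⟨⟨x, hlt, rfl⟩, hw⟩
  have hsupc : ∀ v, (⨆ x : ((Av v)ᶜ : Finset X), α x.1)
      = ⨆ w : (S.filter (fun w => w < v) : Finset ℝ), (w.1 : ℝ) := by
    intro v
    rw [sup_vals α hα ((Av v)ᶜ), hfilter_eq v]
  have hfAv : ∀ v ∈ S, f (Av v)
      = v - ⨆ w : (S.filter (fun w => w < v) : Finset ℝ), (w.1 : ℝ) := by
    intro v hv
    rw [hf]
    simp only
    rw [hAvinf v hv, hsupc v]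
  have hsup_lt : ∀ v ∈ S, (⨆ w : (S.filter (fun w => w < v) : Finset ℝ), (w.1 : ℝ)) < v := by
    intro v hv
    rcases (S.filter (fun w => w < v)).eq_empty_or_nonempty with he | hn
    · rw [iSup_coe_id_empty he]; exact hSpos v hv
    · rw [iSup_coe_id_sup' _ hn]
      exact (Finset.sup'_lt_iff hn).mpr fun w hw => (Finset.mem_filter.mp hw).2
  have hfpos : ∀ v ∈ S, 0 < f (Av v) := by
    intro v hv
    rw [hfAv v hv]
    exact sub_pos.mpr (hsup_lt v hv)
  -- nonnegativity of the complement sup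
  have hsup0 : ∀ A : Finset X, 0 ≤ ⨆ x : (Aᶜ : Finset X), α x.1 := by
    intro A
    rcases (Aᶜ).eq_empty_or_nonempty with he | hn
    · rw [iSup_coe_empty he]
    · rw [iSup_coe_sup' _ hn]
      obtain ⟨x, hx⟩ := hn
      exact le_trans (hα x) (Finset.le_sup' α hx)
  -- the set of positive-weight tiles is the image of S
  have hset : Finset.univ.filter (fun A : Finset X => 0 < f A) = S.image Av := by
    ext A
    simp only [Finset.mem_filter, Finset.mem_univ, true_and, Finset.mem_image]
    constructor
    · intro hfA
      have hAne : A.Nonempty := by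
        rcases A.eq_empty_or_nonempty with he | hn
        · exfalso
          rw [hf] at hfA
          simp only at hfA
          rw [iInf_coe_empty he] at hfA
          have := hsup0 A
          linarith
        · exact hn
      set v := A.inf' hAne α with hv
      have hinf : (⨅ x : (A : Finset X), α x.1) = v := iInf_coe_inf' A hAne α
      have hfA' : (⨆ x : (Aᶜ : Finset X), α x.1) < v := by
        rw [hf] at hfA; simp only at hfA; linarith [hfA, hinf.symm.le]
      have hv0 : 0 < v := lt_of_le_of_lt (hsup0 A) hfA'
      obtain ⟨x0, hx0A, hx0⟩ := Finset.exists_mem_eq_inf' hAne α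
      have hvS : v ∈ S := by
        simp only [hS, Finset.mem_filter, Finset.mem_image, Finset.mem_univ, true_and]
        exact ⟨⟨x0, hx0.symm⟩, hv0⟩
      refine ⟨v, hvS, ?_⟩
      ext x
      simp only [hAv, Finset.mem_filter, Finset.mem_univ, true_and]
      constructor
      · intro hxv
        by_contra hxA
        have hxc : x ∈ Aᶜ := Finset.mem_compl.mpr hxA
        have : α x ≤ ⨆ y : (Aᶜ : Finset X), α y.1 := by
          rw [iSup_coe_sup' _ ⟨x, hxc⟩]
          exact Finset.le_sup' α hxc
        linarith
      · intro hxA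
        exact Finset.inf'_le α hxA
    · rintro ⟨v, hvS, rfl⟩
      exact hfpos v hvS
  have hinj : ∀ v₁ ∈ S, ∀ v₂ ∈ S, Av v₁ = Av v₂ → v₁ = v₂ := by
    intro v₁ h₁ v₂ h₂ he
    rw [← hAvinf v₁ h₁, ← hAvinf v₂ h₂, he]
  calc ∑ A : Finset X, (if 0 < f A then f A else 0)
      = ∑ A ∈ Finset.univ.filter (fun A : Finset X => 0 < f A), f A := (Finset.sum_filter _ _).symm
    _ = ∑ v ∈ S, f (Av v) := by rw [hset]; exact Finset.sum_image hinj
    _ = ∑ v ∈ S, (v - ⨆ w : (S.filter (fun w => w < v) : Finset ℝ), (w.1 : ℝ)) :=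
        Finset.sum_congr rfl hfAv
    _ = ⨆ w : (S : Finset ℝ), (w.1 : ℝ) := tel S hSpos
    _ = ⨆ x : X, α x := by
        rw [← Finset.sup'_univ_eq_ciSup α, ← iSup_coe_sup' Finset.univ Finset.univ_nonempty α]
        exact (sup_vals α hα Finset.univ).symm

lemma ite_split (a b : ℝ) (c : Prop) [Decidable c] :
    (if (0 < a ∧ 0 < b ∧ c) then a * b else 0) =
      (if 0 < a then a else 0) * (if 0 < b then b else 0) * (if c then (1:ℝ) else 0) := by
  by_cases h1 : 0 < a <;> by_cases h2 : 0 < b <;> by_cases h3 : c <;> simp [h1, h2, h3]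

/-- With `σ`, `τ` and `T_q = {t : σ t > 0, τ t > 0, z_t = z_q}` as in the
slicing construction, the total sliced weight `∑_{t ∈ T_q} σ t * τ t` equals
`(max_x α x) * (max_y β y)`. -/
theorem total_sliced_weight {X Y Z : Type*} [Fintype X] [Fintype Y] [Fintype Z]
    [Nonempty X] [Nonempty Y] [Nonempty Z]
    [DecidableEq X] [DecidableEq Y] [DecidableEq Z]
    (α : X → ℝ) (β : Y → ℝ) (hα : ∀ x, 0 ≤ α x) (hβ : ∀ y, 0 ≤ β y)
    (zq : Z)
    (σ τ : Finset X × Finset Y × Z → ℝ)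
    (hσ : ∀ t : Finset X × Finset Y × Z,
      σ t = (⨅ x : t.1, α x.1) - (⨆ x : (t.1ᶜ : Finset X), α x.1))
    (hτ : ∀ t : Finset X × Finset Y × Z,
      τ t = (⨅ y : t.2.1, β y.1) - (⨆ y : (t.2.1ᶜ : Finset Y), β y.1)) :
    (∑ t ∈ Finset.univ.filter (fun t : Finset X × Finset Y × Z =>
        0 < σ t ∧ 0 < τ t ∧ t.2.2 = zq),
      σ t * τ t) = (⨆ x : X, α x) * (⨆ y : Y, β y) := by
  classical
  have step1 : (∑ t ∈ Finset.univ.filter (fun t : Finset X × Finset Y × Z =>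
        0 < σ t ∧ 0 < τ t ∧ t.2.2 = zq), σ t * τ t)
      = ∑ A : Finset X, ∑ B : Finset Y, ∑ z : Z,
          ((if 0 < (⨅ x : A, α x.1) - (⨆ x : (Aᶜ : Finset X), α x.1) then
              (⨅ x : A, α x.1) - (⨆ x : (Aᶜ : Finset X), α x.1) else 0) *
           (if 0 < (⨅ y : B, β y.1) - (⨆ y : (Bᶜ : Finset Y), β y.1) then
              (⨅ y : B, β y.1) - (⨆ y : (Bᶜ : Finset Y), β y.1) else 0) *
           (if z = zq then (1:ℝ) else 0)) := by
    rw [Finset.sum_filter, Fintype.sum_prod_type]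
    refine Finset.sum_congr rfl fun A _ => ?_
    rw [Fintype.sum_prod_type]
    refine Finset.sum_congr rfl fun B _ => Finset.sum_congr rfl fun z _ => ?_
    rw [hσ (A, B, z), hτ (A, B, z)]
    exact ite_split _ _ _
  rw [step1]
  have step2 : ∀ (a b : ℝ), (∑ z : Z, (a * b * (if z = zq then (1:ℝ) else 0))) = a * b := by
    intro a b
    rw [← Finset.mul_sum]
    simp [Finset.sum_ite_eq']
  simp only [step2]
  rw [← Finset.sum_mul_sum]
  rw [key α hα, key β hβ]
end

section
/- Let X, Y, Z be finite nonempty types, let f : X × Y → Set Z be a relation, let E : X × Y → ℝ be an error function, and let T be the finite set of all tiles for (X,Y,Z). Let Q be a finite type and let p : Q → X → Y → ℝ≥0 with output map q ↦ z_q ∈ Z be a pseudotranscript for f, i.e.: Σ_q p(q|x,y) = 1 for all (x,y), there exist α : Q × X → ℝ≥0 and β : Q × Y → ℝ≥0 with p(q|x,y) = α(q,x)·β(q,y) for all q,x,y, and Σ_{q : z_q ∉ f(x,y)} p(q|x,y) ≤ E(x,y) for all (x,y). Then there exists w : T → ℝ with 0 ≤ w(t) ≤ 1 for all t, such that: (i)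 Σ_{t : (x,y) ∈ t} w(t) = 1 for all (x,y); (ii) Σ_{t : (x,y) ∈ t, z_t ∉ f(x,y)} w(t) ≤ E(x,y) for all (x,y); and (iii) Σ_{t ∈ T} w(t) = Σ_{q ∈ Q} max_{(x,y) ∈ X × Y} p(q|x,y). -/
open Finset

noncomputable def predV (V : Finset ℝ) (v : ℝ) : ℝ :=
  (insert (0:ℝ) (V.filter (· < v))).max' (insert_nonempty _ _)

lemma max'_congr' {α : Type*} [LinearOrder α] {s t : Finset α} (h : s = t) (hs : s.Nonempty) :
    s.max' hs = t.max' (h ▸ hs) := by subst h; rfl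

lemma telescope (V : Finset ℝ) :
    (∀ v ∈ V, 0 < v) → ∀ c : ℝ,
    ∑ v ∈ V.filter (· ≤ c), (v - predV V v)
      = (insert (0:ℝ) (V.filter (· ≤ c))).max' (insert_nonempty _ _) := by
  induction V using Finset.induction_on_max with
  | empty => intro _ c; simp
  | insert M V' hlt ih =>
    intro hV c
    have hV' : ∀ v ∈ V', 0 < v := fun v hv => hV v (mem_insert_of_mem hv)
    have hM : 0 < M := hV M (mem_insert_self _ _)
    have hMnot : M ∉ V' := fun h => lt_irrefl M (hlt M h)
    have hpred : ∀ v ∈ V', predV (insert M V') v = predV V' v := by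
      intro v hv
      have : ¬ (M < v) := not_lt.2 (hlt v hv).le
      simp [predV, Finset.filter_insert, this]
    by_cases hMc : M ≤ c
    · rw [Finset.filter_insert, if_pos hMc, Finset.sum_insert (by simp [hMnot])]
      have hfil : V'.filter (· ≤ c) = V' :=
        Finset.filter_true_of_mem (fun v hv => (hlt v hv).le.trans hMc)
      have hsum : ∑ v ∈ V'.filter (· ≤ c), (v - predV (insert M V') v)
          = ∑ v ∈ V'.filter (· ≤ c), (v - predV V' v) := by
        refine Finset.sum_congr rfl fun v hv => ?_
        rw [hpred v (Finset.mem_of_mem_filter v hv)]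
      rw [hsum, ih hV' c, hfil]
      have hpM : predV (insert M V') M
          = (insert (0:ℝ) V').max' (insert_nonempty _ _) := by
        rw [predV]
        have h1 : (insert M V').filter (· < M) = V' := by
          rw [Finset.filter_insert, if_neg (lt_irrefl M),
            Finset.filter_true_of_mem (fun v hv => hlt v hv)]
        exact max'_congr' (by rw [h1]) _
      rw [hpM]
      have hRHS : (insert (0:ℝ) (insert M V')).max' (insert_nonempty _ _) = M := by
        apply le_antisymm
        · apply Finset.max'_le
          intro y hy
          rcases Finset.mem_insert.1 hy with h | h
          · exact h ▸ hM.le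
          · rcases Finset.mem_insert.1 h with h' | h'
            · exact h' ▸ le_rfl
            · exact (hlt y h').le
        · exact Finset.le_max' _ M (Finset.mem_insert_of_mem (Finset.mem_insert_self _ _))
      rw [hRHS]; ring
    · rw [Finset.filter_insert, if_neg hMc]
      have hsum : ∑ v ∈ V'.filter (· ≤ c), (v - predV (insert M V') v)
          = ∑ v ∈ V'.filter (· ≤ c), (v - predV V' v) := by
        refine Finset.sum_congr rfl fun v hv => ?_
        rw [hpred v (Finset.mem_of_mem_filter v hv)]
      rw [hsum, ih hV' c]

noncomputable def Vals {X : Type*} [Fintype X] (a : X → ℝ) : Finset ℝ :=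
  (Finset.univ.image a).filter (0 < ·)

noncomputable def levSet {X : Type*} [Fintype X] (a : X → ℝ) (v : ℝ) : Finset X :=
  Finset.univ.filter (fun x => v ≤ a x)

noncomputable def wOne {X : Type*} [Fintype X] [DecidableEq X] (a : X → ℝ) (S : Finset X) : ℝ :=
  ∑ v ∈ (Vals a).filter (fun v => S = levSet a v), (v - predV (Vals a) v)

lemma term_nonneg {X : Type*} [Fintype X] (a : X → ℝ) {v : ℝ} (hv : v ∈ Vals a) :
    0 ≤ v - predV (Vals a) v := by
  have hv0 : 0 < v := (Finset.mem_filter.1 hv).2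
  have : predV (Vals a) v ≤ v := by
    apply Finset.max'_le
    intro y hy
    rcases Finset.mem_insert.1 hy with h | h
    · exact h ▸ hv0.le
    · exact (Finset.mem_filter.1 h).2.le
  linarith

lemma wOne_nonneg {X : Type*} [Fintype X] [DecidableEq X] (a : X → ℝ) (S : Finset X) :
    0 ≤ wOne a S :=
  Finset.sum_nonneg fun v hv => term_nonneg a (Finset.mem_of_mem_filter v hv)

lemma wOne_ne_zero {X : Type*} [Fintype X] [DecidableEq X] {a : X → ℝ} {S : Finset X}
    (h : wOne a S ≠ 0) : S.Nonempty := by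
  obtain ⟨v, hv, -⟩ := Finset.exists_ne_zero_of_sum_ne_zero h
  obtain ⟨hvV, hS⟩ := Finset.mem_filter.1 hv
  obtain ⟨x, -, hx⟩ := Finset.mem_image.1 (Finset.mem_of_mem_filter v hvV)
  exact ⟨x, hS ▸ (Finset.mem_filter.2 ⟨Finset.mem_univ x, hx.ge⟩)⟩

lemma sum_wOne_mem {X : Type*} [Fintype X] [DecidableEq X] (a : X → ℝ)
    (ha : ∀ x, 0 ≤ a x) (x : X) :
    ∑ S ∈ (Finset.univ : Finset (Finset X)).filter (fun S => x ∈ S), wOne a S = a x := by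
  rw [Finset.sum_filter]
  have step1 : ∀ S : Finset X, (if x ∈ S then wOne a S else 0)
      = ∑ v ∈ Vals a, (if S = levSet a v ∧ x ∈ levSet a v then (v - predV (Vals a) v) else 0) := by
    intro S
    by_cases hx : x ∈ S
    · rw [if_pos hx, wOne, Finset.sum_filter]
      refine Finset.sum_congr rfl fun v _ => ?_
      by_cases hS : S = levSet a v
      · simp [hS, hS ▸ hx]
      · simp [hS]
    · rw [if_neg hx, eq_comm]
      apply Finset.sum_eq_zero
      intro v _
      by_cases hS : S = levSet a v
      · simp [hS, hS ▸ hx]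
      · simp [hS]
  rw [Finset.sum_congr rfl fun S _ => step1 S, Finset.sum_comm]
  have step2 : ∀ v ∈ Vals a,
      (∑ S : Finset X, if S = levSet a v ∧ x ∈ levSet a v then (v - predV (Vals a) v) else 0)
      = if v ≤ a x then (v - predV (Vals a) v) else 0 := by
    intro v _
    have hmem : x ∈ levSet a v ↔ v ≤ a x := by simp [levSet]
    calc (∑ S : Finset X, if S = levSet a v ∧ x ∈ levSet a v then (v - predV (Vals a) v) else 0)
        = ∑ S : Finset X, if S = levSet a v then
            (if x ∈ levSet a v then (v - predV (Vals a) v) else 0) else 0 := by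
          refine Finset.sum_congr rfl fun S _ => ?_
          by_cases h1 : S = levSet a v <;> by_cases h2 : x ∈ levSet a v <;> simp [h1, h2]
      _ = if v ≤ a x then (v - predV (Vals a) v) else 0 := by
          rw [Finset.sum_ite_eq' Finset.univ (levSet a v)]
          simp only [Finset.mem_univ, if_true, hmem]
  rw [Finset.sum_congr rfl step2, ← Finset.sum_filter, telescope (Vals a)
    (fun v hv => (Finset.mem_filter.1 hv).2) (a x)]
  rcases (ha x).eq_or_lt with h0 | h0
  · have : (Vals a).filter (· ≤ a x) = ∅ := by
      apply Finset.filter_false_of_mem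
      intro v hv
      have := (Finset.mem_filter.1 hv).2
      simp only [← h0]
      exact not_le.2 this
    rw [this]
    simp [← h0]
  · apply le_antisymm
    · apply Finset.max'_le
      intro y hy
      rcases Finset.mem_insert.1 hy with h | h
      · exact h ▸ (ha x)
      · exact (Finset.mem_filter.1 h).2
    · apply Finset.le_max'
      apply Finset.mem_insert_of_mem
      rw [Finset.mem_filter]
      exact ⟨Finset.mem_filter.2 ⟨Finset.mem_image_of_mem a (Finset.mem_univ x), h0⟩, le_rfl⟩


lemma sum_wOne_total {X : Type*} [Fintype X] [DecidableEq X] [Nonempty X] (a : X → ℝ)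
    (ha : ∀ x, 0 ≤ a x) :
    ∑ S : Finset X, wOne a S = Finset.univ.sup' Finset.univ_nonempty a := by
  set c : ℝ := (insert (0:ℝ) (Vals a)).max' (Finset.insert_nonempty _ _) with hc
  have hfil : (Vals a).filter (· ≤ c) = Vals a :=
    Finset.filter_true_of_mem (fun v hv => Finset.le_max' _ v (Finset.mem_insert_of_mem hv))
  have step1 : ∀ S : Finset X, wOne a S
      = ∑ v ∈ Vals a, (if S = levSet a v then (v - predV (Vals a) v) else 0) := by
    intro S; rw [wOne, Finset.sum_filter]
  have h1 : ∑ S : Finset X, wOne a S = ∑ v ∈ Vals a, (v - predV (Vals a) v) := by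
    rw [Finset.sum_congr rfl fun S _ => step1 S, Finset.sum_comm]
    refine Finset.sum_congr rfl fun v _ => ?_
    rw [Finset.sum_ite_eq' Finset.univ (levSet a v)]
    simp
  have h2 : ∑ v ∈ Vals a, (v - predV (Vals a) v)
      = ∑ v ∈ (Vals a).filter (· ≤ c), (v - predV (Vals a) v) := by rw [hfil]
  rw [h1, h2, telescope (Vals a) (fun v hv => (Finset.mem_filter.1 hv).2) c,
    max'_congr' (by rw [hfil]) _]
  apply le_antisymm
  · apply Finset.max'_le
    intro y hy
    rcases Finset.mem_insert.1 hy with h | h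
    · obtain ⟨x⟩ := (inferInstance : Nonempty X)
      exact h ▸ le_trans (ha x) (Finset.le_sup' a (Finset.mem_univ x))
    · obtain ⟨x, -, hx⟩ := Finset.mem_image.1 (Finset.mem_of_mem_filter y h)
      exact hx ▸ Finset.le_sup' a (Finset.mem_univ x)
  · apply Finset.sup'_le
    intro x _
    rcases (ha x).eq_or_lt with h0 | h0
    · exact le_trans h0.ge (Finset.le_max' _ 0 (Finset.mem_insert_self _ _))
    · apply Finset.le_max'
      apply Finset.mem_insert_of_mem
      exact Finset.mem_filter.2 ⟨Finset.mem_image_of_mem a (Finset.mem_univ x), h0⟩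

lemma sup_prod_eq {X Y : Type*} [Fintype X] [Fintype Y] [Nonempty X] [Nonempty Y]
    (a : X → ℝ) (b : Y → ℝ) (ha : ∀ x, 0 ≤ a x) (hb : ∀ y, 0 ≤ b y) :
    (Finset.univ.sup' Finset.univ_nonempty a) * (Finset.univ.sup' Finset.univ_nonempty b)
      = ⨆ xy : X × Y, a xy.1 * b xy.2 := by
  obtain ⟨x₀, -, hx₀⟩ := Finset.exists_mem_eq_sup' (Finset.univ_nonempty (α := X)) a
  obtain ⟨y₀, -, hy₀⟩ := Finset.exists_mem_eq_sup' (Finset.univ_nonempty (α := Y)) b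
  apply le_antisymm
  · rw [hx₀, hy₀]
    exact le_ciSup (Set.Finite.bddAbove (Set.finite_range (fun xy : X × Y => a xy.1 * b xy.2))) (x₀, y₀)
  · apply ciSup_le
    intro xy
    have h1 : a xy.1 ≤ Finset.univ.sup' Finset.univ_nonempty a :=
      Finset.le_sup' a (Finset.mem_univ _)
    have h2 : b xy.2 ≤ Finset.univ.sup' Finset.univ_nonempty b :=
      Finset.le_sup' b (Finset.mem_univ _)
    exact mul_le_mul h1 h2 (hb _) (le_trans (ha x₀) hx₀.ge)

lemma key_sum {X Y Z Q : Type*} [Fintype X] [Fintype Y] [Fintype Z] [Fintype Q]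
    [DecidableEq X] [DecidableEq Y] [DecidableEq Z]
    (z : Q → Z) (a : Q → X → ℝ) (b : Q → Y → ℝ)
    (ha : ∀ q x, 0 ≤ a q x) (hb : ∀ q y, 0 ≤ b q y)
    (x : X) (y : Y) (P : Z → Prop) [DecidablePred P] :
    ∑ t ∈ Finset.univ.filter (fun t : Finset X × Finset Y × Z =>
        (x ∈ t.1 ∧ y ∈ t.2.1) ∧ P t.2.2),
      (∑ q : Q, if t.2.2 = z q then wOne (a q) t.1 * wOne (b q) t.2.1 else 0)
    = ∑ q ∈ Finset.univ.filter (fun q => P (z q)), (a q x * b q y) := by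
  rw [Finset.sum_filter, Finset.sum_filter]
  calc ∑ t : Finset X × Finset Y × Z, (if (x ∈ t.1 ∧ y ∈ t.2.1) ∧ P t.2.2 then
          (∑ q : Q, if t.2.2 = z q then wOne (a q) t.1 * wOne (b q) t.2.1 else 0) else 0)
      = ∑ t : Finset X × Finset Y × Z, ∑ q : Q,
          (if ((x ∈ t.1 ∧ y ∈ t.2.1) ∧ P t.2.2) ∧ t.2.2 = z q then
            wOne (a q) t.1 * wOne (b q) t.2.1 else 0) := by
        refine Finset.sum_congr rfl fun t _ => ?_
        by_cases h : (x ∈ t.1 ∧ y ∈ t.2.1) ∧ P t.2.2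
        · rw [if_pos h]
          refine Finset.sum_congr rfl fun q _ => ?_
          by_cases h2 : t.2.2 = z q
          · rw [if_pos h2, if_pos ⟨h, h2⟩]
          · rw [if_neg h2, if_neg (fun hc => h2 hc.2)]
        · rw [if_neg h]
          symm; apply Finset.sum_eq_zero
          intro q _
          rw [if_neg (fun hc => h hc.1)]
    _ = ∑ q : Q, ∑ t : Finset X × Finset Y × Z,
          (if ((x ∈ t.1 ∧ y ∈ t.2.1) ∧ P t.2.2) ∧ t.2.2 = z q then
            wOne (a q) t.1 * wOne (b q) t.2.1 else 0) := Finset.sum_comm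
    _ = ∑ q : Q, (if P (z q) then a q x * b q y else 0) := by
        refine Finset.sum_congr rfl fun q _ => ?_
        rw [Fintype.sum_prod_type]
        have hζ : ∀ (S : Finset X) (T : Finset Y),
            ∑ p : Finset Y × Z, (if ((x ∈ S ∧ y ∈ p.1) ∧ P p.2) ∧ p.2 = z q then
              wOne (a q) S * wOne (b q) p.1 else 0)
            = ∑ T : Finset Y, (if (x ∈ S ∧ y ∈ T) ∧ P (z q) then
              wOne (a q) S * wOne (b q) T else 0) := by
          intro S T
          rw [Fintype.sum_prod_type]
          refine Finset.sum_congr rfl fun T' _ => ?_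
          calc ∑ ζ : Z, (if ((x ∈ S ∧ y ∈ T') ∧ P ζ) ∧ ζ = z q then
                  wOne (a q) S * wOne (b q) T' else 0)
              = ∑ ζ : Z, (if ζ = z q then (if (x ∈ S ∧ y ∈ T') ∧ P (z q) then
                  wOne (a q) S * wOne (b q) T' else 0) else 0) := by
                refine Finset.sum_congr rfl fun ζ _ => ?_
                by_cases h1 : ζ = z q
                · subst h1; simp
                · simp [h1]
            _ = (if (x ∈ S ∧ y ∈ T') ∧ P (z q) then
                  wOne (a q) S * wOne (b q) T' else 0) := by
                rw [Finset.sum_ite_eq' Finset.univ (z q)]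
                simp
        rw [Finset.sum_congr rfl (fun S _ => hζ S ∅)]
        by_cases hP : P (z q)
        · rw [if_pos hP]
          have : ∀ (S : Finset X) (T : Finset Y),
              (if (x ∈ S ∧ y ∈ T) ∧ P (z q) then wOne (a q) S * wOne (b q) T else 0)
              = (if x ∈ S then wOne (a q) S else 0) * (if y ∈ T then wOne (b q) T else 0) := by
            intro S T
            by_cases h1 : x ∈ S <;> by_cases h2 : y ∈ T <;> simp [h1, h2, hP]
          calc ∑ S : Finset X, ∑ T : Finset Y,
                (if (x ∈ S ∧ y ∈ T) ∧ P (z q) then wOne (a q) S * wOne (b q) T else 0)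
              = (∑ S : Finset X, if x ∈ S then wOne (a q) S else 0) *
                (∑ T : Finset Y, if y ∈ T then wOne (b q) T else 0) := by
                rw [Finset.sum_mul_sum]
                exact Finset.sum_congr rfl fun S _ => Finset.sum_congr rfl fun T _ => this S T
            _ = a q x * b q y := by
                rw [← Finset.sum_filter, ← Finset.sum_filter,
                  sum_wOne_mem (a q) (ha q) x, sum_wOne_mem (b q) (hb q) y]
        · rw [if_neg hP]
          apply Finset.sum_eq_zero; intro S _
          apply Finset.sum_eq_zero; intro T _
          rw [if_neg (fun hc => hP hc.2)]

lemma key_total {X Y Z Q : Type*} [Fintype X] [Fintype Y] [Fintype Z] [Fintype Q]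
    [Nonempty X] [Nonempty Y]
    [DecidableEq X] [DecidableEq Y] [DecidableEq Z]
    (z : Q → Z) (a : Q → X → ℝ) (b : Q → Y → ℝ)
    (ha : ∀ q x, 0 ≤ a q x) (hb : ∀ q y, 0 ≤ b q y) :
    ∑ t : Finset X × Finset Y × Z,
      (∑ q : Q, if t.2.2 = z q then wOne (a q) t.1 * wOne (b q) t.2.1 else 0)
    = ∑ q : Q, (Finset.univ.sup' Finset.univ_nonempty (a q)) *
        (Finset.univ.sup' Finset.univ_nonempty (b q)) := by
  rw [Finset.sum_comm]
  refine Finset.sum_congr rfl fun q _ => ?_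
  rw [Fintype.sum_prod_type]
  have hζ : ∀ (S : Finset X),
      ∑ p : Finset Y × Z, (if p.2 = z q then wOne (a q) S * wOne (b q) p.1 else 0)
      = ∑ T : Finset Y, wOne (a q) S * wOne (b q) T := by
    intro S
    rw [Fintype.sum_prod_type]
    refine Finset.sum_congr rfl fun T _ => ?_
    rw [Finset.sum_ite_eq' Finset.univ (z q)]
    simp
  rw [Finset.sum_congr rfl (fun S _ => hζ S), ← Finset.sum_mul_sum,
    sum_wOne_total (a q) (ha q), sum_wOne_total (b q) (hb q)]


/-- Every pseudotranscript `p : Q → X → Y → ℝ≥0` for a relation `f`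
(normalized, factorizing, with error at most `E`) yields a feasible weighting `w`
for the partition bound with the same error, whose total weight `∑_t w t` equals
the Rényi-∞ information cost `∑_q max_{x,y} p(q|x,y)`. -/
theorem pseudotranscript_gives_tiling {X Y Z Q : Type*}
    [Fintype X] [Fintype Y] [Fintype Z] [Fintype Q]
    [Nonempty X] [Nonempty Y] [Nonempty Z] [Nonempty Q]
    [DecidableEq X] [DecidableEq Y] [DecidableEq Z]
    (f : X × Y → Set Z) [∀ xy : X × Y, DecidablePred (· ∈ f xy)]
    (E : X × Y → ℝ)
    (p : Q → X → Y → ℝ) (z : Q → Z)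
    (hp0 : ∀ q x y, 0 ≤ p q x y)
    (hp1 : ∀ x y, ∑ q : Q, p q x y = 1)
    (hfac : ∃ (a : Q → X → ℝ) (b : Q → Y → ℝ),
      (∀ q x, 0 ≤ a q x) ∧ (∀ q y, 0 ≤ b q y) ∧ ∀ q x y, p q x y = a q x * b q y)
    (herr : ∀ x y,
      ∑ q ∈ Finset.univ.filter (fun q : Q => z q ∉ f (x, y)), p q x y ≤ E (x, y)) :
    ∃ w : Finset X × Finset Y × Z → ℝ,
      (∀ t, 0 ≤ w t ∧ w t ≤ 1) ∧
      (∀ x y,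
        ∑ t ∈ Finset.univ.filter (fun t : Finset X × Finset Y × Z => x ∈ t.1 ∧ y ∈ t.2.1),
          w t = 1) ∧
      (∀ x y,
        ∑ t ∈ Finset.univ.filter (fun t : Finset X × Finset Y × Z =>
            (x ∈ t.1 ∧ y ∈ t.2.1) ∧ t.2.2 ∉ f (x, y)), w t ≤ E (x, y)) ∧
      ((∑ t : Finset X × Finset Y × Z, w t)
        = ∑ q : Q, ⨆ xy : X × Y, p q xy.1 xy.2) := by
  obtain ⟨a, b, ha0, hb0, hab⟩ := hfac
  refine ⟨fun t => ∑ q : Q, if t.2.2 = z q then wOne (a q) t.1 * wOne (b q) t.2.1 else 0,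
    ?_, ?_, ?_, ?_⟩
  · intro t
    have hnn : ∀ t : Finset X × Finset Y × Z,
        0 ≤ ∑ q : Q, if t.2.2 = z q then wOne (a q) t.1 * wOne (b q) t.2.1 else 0 := by
      intro t
      apply Finset.sum_nonneg
      intro q _
      split_ifs
      · exact mul_nonneg (wOne_nonneg _ _) (wOne_nonneg _ _)
      · exact le_rfl
    refine ⟨hnn t, ?_⟩
    by_cases h : ∀ q : Q, (if t.2.2 = z q then wOne (a q) t.1 * wOne (b q) t.2.1 else 0) = 0
    · show (∑ q : Q, if t.2.2 = z q then wOne (a q) t.1 * wOne (b q) t.2.1 else 0) ≤ 1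
      rw [Finset.sum_eq_zero fun q _ => h q]; norm_num
    · push_neg at h
      obtain ⟨q, hq⟩ := h
      have hzq : t.2.2 = z q := by by_contra hc; exact hq (if_neg hc)
      rw [if_pos hzq] at hq
      have h1 : wOne (a q) t.1 ≠ 0 := fun hc => hq (by rw [hc, zero_mul])
      have h2 : wOne (b q) t.2.1 ≠ 0 := fun hc => hq (by rw [hc, mul_zero])
      obtain ⟨x, hx⟩ := wOne_ne_zero h1
      obtain ⟨y, hy⟩ := wOne_ne_zero h2
      calc (∑ q : Q, if t.2.2 = z q then wOne (a q) t.1 * wOne (b q) t.2.1 else 0)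
          ≤ ∑ t' ∈ Finset.univ.filter
              (fun t' : Finset X × Finset Y × Z => x ∈ t'.1 ∧ y ∈ t'.2.1),
              ∑ q : Q, (if t'.2.2 = z q then wOne (a q) t'.1 * wOne (b q) t'.2.1 else 0) := by
            apply Finset.single_le_sum (f := fun t' : Finset X × Finset Y × Z =>
              ∑ q : Q, if t'.2.2 = z q then wOne (a q) t'.1 * wOne (b q) t'.2.1 else 0)
              (fun t' _ => hnn t')
            exact Finset.mem_filter.2 ⟨Finset.mem_univ _, hx, hy⟩
        _ = 1 := by
            have hk := key_sum z a b ha0 hb0 x y (fun _ => True)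
            simp only [and_true, Finset.filter_true] at hk
            rw [hk]
            calc ∑ q : Q, a q x * b q y = ∑ q : Q, p q x y :=
                  Finset.sum_congr rfl fun q _ => (hab q x y).symm
              _ = 1 := hp1 x y
  · intro x y
    have hk := key_sum z a b ha0 hb0 x y (fun _ => True)
    simp only [and_true, Finset.filter_true] at hk
    rw [hk]
    calc ∑ q : Q, a q x * b q y = ∑ q : Q, p q x y :=
          Finset.sum_congr rfl fun q _ => (hab q x y).symm
      _ = 1 := hp1 x y
  · intro x y
    have hk := key_sum z a b ha0 hb0 x y (fun ζ => ζ ∉ f (x, y))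
    rw [hk]
    calc (∑ q ∈ Finset.univ.filter (fun q => z q ∉ f (x, y)), a q x * b q y)
        = ∑ q ∈ Finset.univ.filter (fun q => z q ∉ f (x, y)), p q x y :=
          Finset.sum_congr rfl fun q _ => (hab q x y).symm
      _ ≤ E (x, y) := herr x y
  · rw [key_total z a b ha0 hb0]
    refine Finset.sum_congr rfl fun q _ => ?_
    rw [sup_prod_eq (a q) (b q) (ha0 q) (hb0 q)]
    exact iSup_congr fun xy => (hab q xy.1 xy.2).symm
end

section
/- Let X, Y, Z be finite nonempty types, let f : X × Y → Set Z be a relation, let E : X × Y → ℝ be an error function, and let T be the finite set of all tiles for (X,Y,Z). Define A = { Σ_{t∈T} w(t) : w : T → ℝ, 0 ≤ w(t) ≤ 1 for all t, Σ_{t : (x,y)∈t} w(t) = 1 and Σ_{t : (x,y)∈t, z_t ∉ f(x,y)} w(t) ≤ E(x,y) for all (x,y) } and B = { Σ_{q ∈ Fin n} max_{(x,y)} p(q|x,y) : n ∈ ℕ, p a pseudotranscript for f on alphabet Fin n with Σ_{q : z_q ∉ f(x,y)} p(q|x,y) ≤ E(x,y) for all (x,y) }. Then the infimum (in ℝ)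 of A equals the infimum of B (and in particular one is nonempty iff the other is). -/
open Finset

lemma sum_ite_eq_combine {Z : Type*} [Fintype Z] [DecidableEq Z] (z0 : Z)
    (P : Z → Prop) [DecidablePred P] (c : ℝ) :
    ∑ zv : Z, (if P zv then (if z0 = zv then c else 0) else 0) = if P z0 then c else 0 := by
  have h : ∀ zv, (if P zv then (if z0 = zv then c else 0) else 0)
      = if z0 = zv then (if P z0 then c else 0) else 0 := by
    intro zv
    by_cases h1 : z0 = zv
    · subst h1; simp
    · simp [h1]
  rw [Finset.sum_congr rfl fun zv _ => h zv, Finset.sum_ite_eq Finset.univ z0 (fun _ => if P z0 then c else 0), if_pos (mem_univ _)]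

lemma prod_sup {X Y : Type*} [Fintype X] [Fintype Y] [Nonempty X] [Nonempty Y]
    (a : X → ℝ) (b : Y → ℝ) (ha : ∀ x, 0 ≤ a x) (hb : ∀ y, 0 ≤ b y) :
    ⨆ xy : X × Y, a xy.1 * b xy.2
      = (Finset.univ.sup' Finset.univ_nonempty a) * (Finset.univ.sup' Finset.univ_nonempty b) := by
  rw [← Finset.sup'_univ_eq_ciSup]
  obtain ⟨x₀, -, hx₀⟩ := Finset.exists_mem_eq_sup' (Finset.univ_nonempty (α := X)) a
  obtain ⟨y₀, -, hy₀⟩ := Finset.exists_mem_eq_sup' (Finset.univ_nonempty (α := Y)) b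
  apply le_antisymm
  · apply Finset.sup'_le
    intro xy _
    rw [hx₀, hy₀]
    exact mul_le_mul (hx₀ ▸ Finset.le_sup' a (mem_univ xy.1))
      (hy₀ ▸ Finset.le_sup' b (mem_univ xy.2)) (hb xy.2) (hx₀ ▸ ha x₀)
  · rw [hx₀, hy₀]
    exact Finset.le_sup' (fun xy : X × Y => a xy.1 * b xy.2) (mem_univ (x₀, y₀))

lemma staircase_aux {X : Type*} [Fintype X] [Nonempty X] [DecidableEq X] :
    ∀ (n : ℕ) (a : X → ℝ), (Finset.univ.image a).card ≤ n → (∀ x, 0 ≤ a x) →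
    ∃ c : Finset X → ℝ, (∀ S, 0 ≤ c S) ∧ c ∅ = 0 ∧
      (∀ x, ∑ S ∈ Finset.univ.filter (fun S => x ∈ S), c S = a x) ∧
      (∑ S, c S = Finset.univ.sup' Finset.univ_nonempty a) := by
  intro n
  induction n with
  | zero =>
    intro a hcard _
    exfalso
    have h2 : 0 < (Finset.univ.image a).card := ((univ_nonempty).image a).card_pos
    omega
  | succ n ih =>
    intro a hcard ha0
    set M := Finset.univ.sup' Finset.univ_nonempty a with hM
    have hMmem : ∃ x, a x = M := by
      obtain ⟨x, _, hx⟩ := Finset.exists_mem_eq_sup' Finset.univ_nonempty a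
      exact ⟨x, hx.symm⟩
    have hle : ∀ x, a x ≤ M := fun x => Finset.le_sup' a (mem_univ x)
    have hM0 : 0 ≤ M := le_trans (ha0 (Classical.arbitrary X)) (hle _)
    by_cases hB : (Finset.univ.filter (fun x => a x < M)).Nonempty
    · set M₂ := (Finset.univ.filter (fun x => a x < M)).sup' hB a with hM2
      obtain ⟨x₀, hx₀mem, hx₀⟩ := Finset.exists_mem_eq_sup' hB a
      have hM2eq : M₂ = a x₀ := hx₀
      have hx₀lt : a x₀ < M := (mem_filter.mp hx₀mem).2
      have hM2lt : M₂ < M := by rw [hM2eq]; exact hx₀lt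
      have hM20 : 0 ≤ M₂ := by rw [hM2eq]; exact ha0 x₀
      set a' : X → ℝ := fun x => min (a x) M₂ with ha'
      have ha'0 : ∀ x, 0 ≤ a' x := fun x => le_min (ha0 x) hM20
      have ha'card : (Finset.univ.image a').card ≤ n := by
        have hsub : Finset.univ.image a' ⊆ (Finset.univ.image a).erase M := by
          intro v hv
          obtain ⟨x, _, hx⟩ := mem_image.mp hv
          by_cases h : a x < M
          · have hxle : a x ≤ M₂ := Finset.le_sup' a (mem_filter.mpr ⟨mem_univ x, h⟩)
            have : a' x = a x := min_eq_left hxle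
            rw [← hx, this]
            exact mem_erase.mpr ⟨ne_of_lt h, mem_image_of_mem a (mem_univ x)⟩
          · have : a' x = M₂ := min_eq_right (le_of_lt (by
              have := hle x; have : a x = M := le_antisymm (hle x) (not_lt.mp h)
              rw [this]; exact hM2lt))
            rw [← hx, this, hM2eq]
            exact mem_erase.mpr ⟨by rw [← hM2eq]; exact ne_of_lt hM2lt, mem_image_of_mem a (mem_univ x₀)⟩
        have hMmem' : M ∈ Finset.univ.image a := by
          obtain ⟨x, hx⟩ := hMmem
          exact hx ▸ mem_image_of_mem a (mem_univ x)
        calc (Finset.univ.image a').card ≤ ((Finset.univ.image a).erase M).card :=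
              Finset.card_le_card hsub
          _ = (Finset.univ.image a).card - 1 := Finset.card_erase_of_mem hMmem'
          _ ≤ n := by omega
      obtain ⟨c', hc'0, hc'e, hc'sum, hc'tot⟩ := ih a' ha'card ha'0
      have hsup' : Finset.univ.sup' Finset.univ_nonempty a' = M₂ := by
        apply le_antisymm
        · exact Finset.sup'_le _ _ fun x _ => min_le_right _ _
        · have h1 : a' x₀ = M₂ := by
            show min (a x₀) M₂ = M₂
            rw [hM2eq, min_self]
          exact h1 ▸ Finset.le_sup' a' (mem_univ x₀)
      set Sstar : Finset X := Finset.univ.filter (fun x => a x = M) with hSstar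
      have hSstarne : Sstar ≠ ∅ := by
        obtain ⟨x, hx⟩ := hMmem
        exact Finset.ne_empty_of_mem (mem_filter.mpr ⟨mem_univ x, hx⟩)
      refine ⟨fun S => c' S + if S = Sstar then M - M₂ else 0, ?_, ?_, ?_, ?_⟩
      · intro S
        show 0 ≤ c' S + if S = Sstar then M - M₂ else 0
        have : (0:ℝ) ≤ if S = Sstar then M - M₂ else 0 := by
          split
          · linarith
          · exact le_refl 0
        linarith [hc'0 S]
      · show c' ∅ + (if (∅ : Finset X) = Sstar then M - M₂ else 0) = 0
        rw [hc'e, if_neg (fun h => hSstarne h.symm)]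
        ring
      · intro x
        simp only
        rw [Finset.sum_add_distrib, hc'sum x]
        rw [Finset.sum_ite_eq' (Finset.univ.filter (fun S => x ∈ S)) Sstar (fun _ => M - M₂)]
        by_cases hx : a x = M
        · have hxS : Sstar ∈ Finset.univ.filter (fun S => x ∈ S) := by
            simp [hSstar, mem_filter, hx]
          rw [if_pos hxS]
          have : a' x = M₂ := by
            simp only [ha']; rw [hx]; exact min_eq_right (le_of_lt hM2lt)
          rw [this]; linarith
        · have hxS : Sstar ∉ Finset.univ.filter (fun S => x ∈ S) := by
            simp only [mem_filter, mem_univ, true_and]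
            intro hmem
            exact hx (mem_filter.mp hmem).2
          rw [if_neg hxS]
          have hxlt : a x < M := lt_of_le_of_ne (hle x) hx
          have hxle : a x ≤ M₂ := Finset.le_sup' a (mem_filter.mpr ⟨mem_univ x, hxlt⟩)
          have : a' x = a x := min_eq_left hxle
          rw [this]; ring
      · simp only
        rw [Finset.sum_add_distrib, hc'tot, hsup']
        rw [Finset.sum_ite_eq' Finset.univ Sstar (fun _ => M - M₂)]
        rw [if_pos (mem_univ _)]
        ring
    · -- all values equal M
      have hall : ∀ x, a x = M := by
        intro x
        by_contra h
        exact hB ⟨x, mem_filter.mpr ⟨mem_univ x, lt_of_le_of_ne (hle x) h⟩⟩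
      refine ⟨fun S => if S = Finset.univ then M else 0, ?_, ?_, ?_, ?_⟩
      · intro S
        show 0 ≤ if S = Finset.univ then M else 0
        split
        · exact hM0
        · exact le_refl 0
      · show (if (∅ : Finset X) = Finset.univ then M else 0) = 0
        rw [if_neg]; exact fun h => (Finset.univ_nonempty (α := X)).ne_empty h.symm
      · intro x
        simp only
        rw [Finset.sum_ite_eq' (Finset.univ.filter (fun S => x ∈ S)) Finset.univ (fun _ => M)]
        rw [if_pos (by simp)]
        exact (hall x).symm
      · simp only
        rw [Finset.sum_ite_eq' Finset.univ Finset.univ (fun _ => M), if_pos (mem_univ _)]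

lemma dirA {X Y Z : Type*} [Fintype X] [Fintype Y] [Fintype Z]
    [Nonempty X] [Nonempty Y] [Nonempty Z]
    [DecidableEq X] [DecidableEq Y] [DecidableEq Z]
    (f : X × Y → Set Z) [∀ xy : X × Y, DecidablePred (· ∈ f xy)] (E : X × Y → ℝ)
    (w : Finset X × Finset Y × Z → ℝ)
    (hw0 : ∀ t, 0 ≤ w t)
    (hfeas : ∀ x y, ∑ t ∈ Finset.univ.filter
      (fun t : Finset X × Finset Y × Z => x ∈ t.1 ∧ y ∈ t.2.1), w t = 1)
    (herr : ∀ x y, ∑ t ∈ Finset.univ.filter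
      (fun t : Finset X × Finset Y × Z => (x ∈ t.1 ∧ y ∈ t.2.1) ∧ t.2.2 ∉ f (x, y)),
        w t ≤ E (x, y)) :
    ∃ (n : ℕ) (p : Fin n → X → Y → ℝ) (z : Fin n → Z),
      (∀ q x y, 0 ≤ p q x y) ∧
      (∀ x y, ∑ q : Fin n, p q x y = 1) ∧
      (∃ (a : Fin n → X → ℝ) (b : Fin n → Y → ℝ),
        (∀ q x, 0 ≤ a q x) ∧ (∀ q y, 0 ≤ b q y) ∧ ∀ q x y, p q x y = a q x * b q y) ∧
      (∀ x y, ∑ q ∈ Finset.univ.filter (fun q : Fin n => z q ∉ f (x, y)), p q x y ≤ E (x, y)) ∧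
      (∑ q : Fin n, ⨆ xy : X × Y, p q xy.1 xy.2) ≤ ∑ t : Finset X × Finset Y × Z, w t := by
  obtain ⟨e⟩ : Nonempty (Fin (Fintype.card (Finset X × Finset Y × Z))
      ≃ Finset X × Finset Y × Z) := ⟨(Fintype.equivFin _).symm⟩
  have hi1 : ∀ (x : X) (t : Finset X × Finset Y × Z),
      (0:ℝ) ≤ if x ∈ t.1 then 1 else 0 := by
    intro x t; split <;> norm_num
  have hi2 : ∀ (y : Y) (t : Finset X × Finset Y × Z),
      (0:ℝ) ≤ if y ∈ t.2.1 then 1 else 0 := by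
    intro y t; split <;> norm_num
  have hpwt : ∀ (x : X) (y : Y) (t : Finset X × Finset Y × Z),
      (w t * (if x ∈ t.1 then 1 else 0)) * (if y ∈ t.2.1 then 1 else 0)
        = if x ∈ t.1 ∧ y ∈ t.2.1 then w t else 0 := by
    intro x y t
    by_cases h1 : x ∈ t.1 <;> by_cases h2 : y ∈ t.2.1 <;> simp [h1, h2]
  refine ⟨Fintype.card (Finset X × Finset Y × Z),
    fun q x y => (w (e q) * (if x ∈ (e q).1 then 1 else 0)) * (if y ∈ (e q).2.1 then 1 else 0),
    fun q => (e q).2.2, ?_, ?_, ⟨fun q x => w (e q) * (if x ∈ (e q).1 then 1 else 0),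
      fun q y => (if y ∈ (e q).2.1 then 1 else 0), ?_, ?_, fun _ _ _ => rfl⟩, ?_, ?_⟩
  · intro q x y
    exact mul_nonneg (mul_nonneg (hw0 _) (hi1 x (e q))) (hi2 y (e q))
  · intro x y
    simp only
    rw [Fintype.sum_equiv e _
      (fun t : Finset X × Finset Y × Z =>
        (w t * (if x ∈ t.1 then 1 else 0)) * (if y ∈ t.2.1 then 1 else 0)) (fun q => rfl)]
    rw [Finset.sum_congr rfl fun t _ => hpwt x y t, ← Finset.sum_filter]
    exact hfeas x y
  · intro q x
    exact mul_nonneg (hw0 _) (hi1 x (e q))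
  · intro q y
    exact hi2 y (e q)
  · intro x y
    rw [Finset.sum_filter]
    simp only
    rw [Fintype.sum_equiv e _
      (fun t : Finset X × Finset Y × Z => if t.2.2 ∉ f (x, y) then
        (w t * (if x ∈ t.1 then 1 else 0)) * (if y ∈ t.2.1 then 1 else 0) else 0) (fun q => rfl)]
    have hpt2 : ∀ t : Finset X × Finset Y × Z,
        (if t.2.2 ∉ f (x, y) then
          (w t * (if x ∈ t.1 then 1 else 0)) * (if y ∈ t.2.1 then 1 else 0) else 0)
          = if (x ∈ t.1 ∧ y ∈ t.2.1) ∧ t.2.2 ∉ f (x, y) then w t else 0 := by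
      intro t
      rw [hpwt x y t]
      by_cases h1 : t.2.2 ∉ f (x, y) <;> by_cases h2 : x ∈ t.1 ∧ y ∈ t.2.1 <;> simp [h1, h2]
    rw [Finset.sum_congr rfl fun t _ => hpt2 t, ← Finset.sum_filter]
    exact herr x y
  · simp only
    rw [← Fintype.sum_equiv e (fun q => w (e q)) w (fun q => rfl)]
    apply Finset.sum_le_sum
    intro q _
    apply ciSup_le
    intro xy
    rw [hpwt xy.1 xy.2 (e q)]
    split
    · exact le_refl _
    · exact hw0 _

/-- The set `A` of values of feasible weightings for the partition bound
`prt(f,E)` and the set `B` of Rényi-∞ information costs `∑_q max_{x,y} p(q|x,y)` of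
pseudotranscripts for `f` with error at most `E` have the same infimum in `ℝ`
(and one is nonempty iff the other is): `p̂IC_∞(f,E) = log₂ prt(f,E)`. -/
theorem pICinfty_eq_log_prt {X Y Z : Type*} [Fintype X] [Fintype Y] [Fintype Z]
    [Nonempty X] [Nonempty Y] [Nonempty Z]
    [DecidableEq X] [DecidableEq Y] [DecidableEq Z]
    (f : X × Y → Set Z) [∀ xy : X × Y, DecidablePred (· ∈ f xy)]
    (E : X × Y → ℝ)
    (A B : Set ℝ)
    (hA : A = { s : ℝ | ∃ w : Finset X × Finset Y × Z → ℝ,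
      (∀ t, 0 ≤ w t ∧ w t ≤ 1) ∧
      (∀ x y,
        ∑ t ∈ Finset.univ.filter (fun t : Finset X × Finset Y × Z => x ∈ t.1 ∧ y ∈ t.2.1),
          w t = 1) ∧
      (∀ x y,
        ∑ t ∈ Finset.univ.filter (fun t : Finset X × Finset Y × Z =>
            (x ∈ t.1 ∧ y ∈ t.2.1) ∧ t.2.2 ∉ f (x, y)), w t ≤ E (x, y)) ∧
      s = ∑ t : Finset X × Finset Y × Z, w t })
    (hB : B = { s : ℝ | ∃ (n : ℕ) (p : Fin n → X → Y → ℝ) (z : Fin n → Z),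
      (∀ q x y, 0 ≤ p q x y) ∧
      (∀ x y, ∑ q : Fin n, p q x y = 1) ∧
      (∃ (a : Fin n → X → ℝ) (b : Fin n → Y → ℝ),
        (∀ q x, 0 ≤ a q x) ∧ (∀ q y, 0 ≤ b q y) ∧ ∀ q x y, p q x y = a q x * b q y) ∧
      (∀ x y,
        ∑ q ∈ Finset.univ.filter (fun q : Fin n => z q ∉ f (x, y)), p q x y ≤ E (x, y)) ∧
      s = ∑ q : Fin n, ⨆ xy : X × Y, p q xy.1 xy.2 }) :
    sInf A = sInf B ∧ (A.Nonempty ↔ B.Nonempty) := by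
  -- Direction 1 : B ⊆ A
  have hBsubA : B ⊆ A := by
    intro s hs
    rw [hB] at hs
    obtain ⟨n, p, z, hp0, hpsum, ⟨a, b, ha0, hb0, hab⟩, herr, hsval⟩ := hs
    -- staircase decompositions
    have hcA := fun q : Fin n => staircase_aux (Finset.univ.image (a q)).card (a q) le_rfl (ha0 q)
    choose cA hcA0 hcAe hcAsum hcAtot using hcA
    have hcB := fun q : Fin n => staircase_aux (Finset.univ.image (b q)).card (b q) le_rfl (hb0 q)
    choose cB hcB0 hcBe hcBsum hcBtot using hcB
    set w : Finset X × Finset Y × Z → ℝ :=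
      fun t => ∑ q : Fin n, if z q = t.2.2 then cA q t.1 * cB q t.2.1 else 0 with hw
    have hw0 : ∀ t, 0 ≤ w t := by
      intro t
      apply Finset.sum_nonneg
      intro q _
      split
      · exact mul_nonneg (hcA0 q _) (hcB0 q _)
      · exact le_refl 0
    -- the key computation
    have key : ∀ (x : X) (y : Y) (q : Fin n) (G : Z → Prop) [DecidablePred G],
        ∑ t : Finset X × Finset Y × Z,
          (if (x ∈ t.1 ∧ y ∈ t.2.1) ∧ G t.2.2 then
            (if z q = t.2.2 then cA q t.1 * cB q t.2.1 else 0) else 0)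
          = if G (z q) then a q x * b q y else 0 := by
      intro x y q G _
      simp only [Fintype.sum_prod_type]
      have hinner : ∀ (S : Finset X) (T : Finset Y),
          ∑ zv : Z, (if (x ∈ S ∧ y ∈ T) ∧ G zv then
              (if z q = zv then cA q S * cB q T else 0) else 0)
            = if (x ∈ S ∧ y ∈ T) ∧ G (z q) then cA q S * cB q T else 0 := by
        intro S T
        exact sum_ite_eq_combine (z q) (fun zv => (x ∈ S ∧ y ∈ T) ∧ G zv) (cA q S * cB q T)
      rw [Finset.sum_congr rfl fun S _ => Finset.sum_congr rfl fun T _ => hinner S T]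
      by_cases hG : G (z q)
      · simp only [hG, and_true, if_true]
        have hsplit : ∀ (S : Finset X) (T : Finset Y),
            (if x ∈ S ∧ y ∈ T then cA q S * cB q T else 0)
              = (if x ∈ S then cA q S else 0) * (if y ∈ T then cB q T else 0) := by
          intro S T
          by_cases h1 : x ∈ S <;> by_cases h2 : y ∈ T <;> simp [h1, h2]
        rw [Finset.sum_congr rfl fun S _ => Finset.sum_congr rfl fun T _ => hsplit S T]
        rw [← Finset.sum_mul_sum]
        rw [← Finset.sum_filter, ← Finset.sum_filter, hcAsum q x, hcBsum q y]
      · simp only [hG, and_false, if_false]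
        simp
    have key1 : ∀ (x : X) (y : Y) (q : Fin n),
        ∑ t : Finset X × Finset Y × Z,
          (if x ∈ t.1 ∧ y ∈ t.2.1 then
            (if z q = t.2.2 then cA q t.1 * cB q t.2.1 else 0) else 0)
          = a q x * b q y := by
      intro x y q
      have h := key x y q (fun _ => True)
      simp only [and_true, if_true] at h
      exact h
    -- the feasibility sum
    have hfeas : ∀ (x : X) (y : Y),
        ∑ t ∈ Finset.univ.filter (fun t : Finset X × Finset Y × Z => x ∈ t.1 ∧ y ∈ t.2.1),
          w t = 1 := by
      intro x y
      rw [Finset.sum_filter]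
      have hswap : ∀ t : Finset X × Finset Y × Z,
          (if x ∈ t.1 ∧ y ∈ t.2.1 then w t else 0)
            = ∑ q : Fin n, (if x ∈ t.1 ∧ y ∈ t.2.1 then
                (if z q = t.2.2 then cA q t.1 * cB q t.2.1 else 0) else 0) := by
        intro t
        split
        · rfl
        · simp
      rw [Finset.sum_congr rfl fun t _ => hswap t, Finset.sum_comm]
      rw [Finset.sum_congr rfl fun q _ => key1 x y q]
      rw [← hpsum x y]
      exact Finset.sum_congr rfl fun q _ => (hab q x y).symm
    rw [hA]
    refine ⟨w, ?_, hfeas, ?_, ?_⟩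
    · -- 0 ≤ w ≤ 1
      intro t
      refine ⟨hw0 t, ?_⟩
      by_cases h1 : t.1.Nonempty
      · by_cases h2 : t.2.1.Nonempty
        · obtain ⟨x, hx⟩ := h1
          obtain ⟨y, hy⟩ := h2
          calc w t ≤ ∑ t' ∈ Finset.univ.filter
                (fun t' : Finset X × Finset Y × Z => x ∈ t'.1 ∧ y ∈ t'.2.1), w t' := by
                apply Finset.single_le_sum (fun t' _ => hw0 t')
                exact Finset.mem_filter.mpr ⟨mem_univ t, hx, hy⟩
            _ = 1 := hfeas x y
        · rw [Finset.not_nonempty_iff_eq_empty] at h2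
          have : w t = 0 := by
            apply Finset.sum_eq_zero
            intro q _
            rw [h2, hcBe q, mul_zero, ite_self]
          rw [this]; norm_num
      · rw [Finset.not_nonempty_iff_eq_empty] at h1
        have : w t = 0 := by
          apply Finset.sum_eq_zero
          intro q _
          rw [h1, hcAe q, zero_mul, ite_self]
        rw [this]; norm_num
    · -- error
      intro x y
      rw [Finset.sum_filter]
      have hswap : ∀ t : Finset X × Finset Y × Z,
          (if (x ∈ t.1 ∧ y ∈ t.2.1) ∧ t.2.2 ∉ f (x, y) then w t else 0)
            = ∑ q : Fin n, (if (x ∈ t.1 ∧ y ∈ t.2.1) ∧ t.2.2 ∉ f (x, y) then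
                (if z q = t.2.2 then cA q t.1 * cB q t.2.1 else 0) else 0) := by
        intro t
        split
        · rfl
        · simp
      rw [Finset.sum_congr rfl fun t _ => hswap t, Finset.sum_comm]
      rw [Finset.sum_congr rfl fun q _ => key x y q (fun zv => zv ∉ f (x, y))]
      calc ∑ q : Fin n, (if z q ∉ f (x, y) then a q x * b q y else 0)
          = ∑ q ∈ Finset.univ.filter (fun q : Fin n => z q ∉ f (x, y)), a q x * b q y := by
            rw [← Finset.sum_filter]
        _ = ∑ q ∈ Finset.univ.filter (fun q : Fin n => z q ∉ f (x, y)), p q x y :=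
            Finset.sum_congr rfl fun q _ => (hab q x y).symm
        _ ≤ E (x, y) := herr x y
    · -- total value
      rw [hsval]
      have hswap : ∀ q : Fin n,
          ∑ t : Finset X × Finset Y × Z, (if z q = t.2.2 then cA q t.1 * cB q t.2.1 else 0)
            = ⨆ xy : X × Y, p q xy.1 xy.2 := by
        intro q
        simp only [Fintype.sum_prod_type]
        have hinner : ∀ (S : Finset X) (T : Finset Y),
            ∑ zv : Z, (if z q = zv then cA q S * cB q T else 0) = cA q S * cB q T := by
          intro S T
          rw [Finset.sum_ite_eq Finset.univ (z q) (fun _ => cA q S * cB q T),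
            if_pos (mem_univ _)]
        rw [Finset.sum_congr rfl fun S _ => Finset.sum_congr rfl fun T _ => hinner S T]
        rw [← Finset.sum_mul_sum, hcAtot q, hcBtot q]
        have : (⨆ xy : X × Y, p q xy.1 xy.2) = ⨆ xy : X × Y, a q xy.1 * b q xy.2 := by
          congr 1
          funext xy
          exact hab q xy.1 xy.2
        rw [this, prod_sup (a q) (b q) (ha0 q) (hb0 q)]
      have h0 : ∑ t : Finset X × Finset Y × Z, w t
          = ∑ t : Finset X × Finset Y × Z, ∑ q : Fin n,
              (if z q = t.2.2 then cA q t.1 * cB q t.2.1 else 0) := rfl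
      rw [h0, Finset.sum_comm]
      exact (Finset.sum_congr rfl fun q _ => hswap q).symm
  -- Direction 2 : every element of A dominates an element of B
  have hAdom : ∀ s ∈ A, ∃ s' ∈ B, s' ≤ s := by
    intro s hs
    rw [hA] at hs
    obtain ⟨w, hw01, hfeas, herr, hsval⟩ := hs
    obtain ⟨n, p, z, hp0, hpsum, hfac, herr', hle⟩ :=
      dirA f E w (fun t => (hw01 t).1) hfeas herr
    refine ⟨∑ q : Fin n, ⨆ xy : X × Y, p q xy.1 xy.2, ?_, ?_⟩
    · rw [hB]
      exact ⟨n, p, z, hp0, hpsum, hfac, herr', rfl⟩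
    · rw [hsval]
      exact hle
  -- Assemble
  have hNe : A.Nonempty ↔ B.Nonempty := by
    constructor
    · rintro ⟨s, hs⟩
      obtain ⟨s', hs', -⟩ := hAdom s hs
      exact ⟨s', hs'⟩
    · rintro ⟨s, hs⟩
      exact ⟨s, hBsubA hs⟩
  have hbddA : BddBelow A := by
    refine ⟨0, fun s hs => ?_⟩
    rw [hA] at hs
    obtain ⟨w, hw01, -, -, hsval⟩ := hs
    rw [hsval]
    exact Finset.sum_nonneg fun t _ => (hw01 t).1
  have hbddB : BddBelow B := by
    refine ⟨0, fun s hs => ?_⟩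
    rw [hB] at hs
    obtain ⟨n, p, z, hp0, -, -, -, hsval⟩ := hs
    rw [hsval]
    apply Finset.sum_nonneg
    intro q _
    obtain ⟨xy⟩ : Nonempty (X × Y) := inferInstance
    exact le_trans (hp0 q xy.1 xy.2)
      (le_ciSup (f := fun xy : X × Y => p q xy.1 xy.2)
        (Set.Finite.bddAbove (Set.finite_range _)) xy)
  refine ⟨?_, hNe⟩
  by_cases hBne : B.Nonempty
  · have hAne : A.Nonempty := hNe.mpr hBne
    apply le_antisymm
    · exact csInf_le_csInf hbddA hBne hBsubA
    · apply le_csInf hAne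
      intro s hs
      obtain ⟨s', hs', hle⟩ := hAdom s hs
      exact le_trans (csInf_le hbddB hs') hle
  · have hAne : ¬A.Nonempty := fun h => hBne (hNe.mp h)
    rw [Set.not_nonempty_iff_eq_empty] at hBne hAne
    rw [hBne, hAne]
end

section
/- Let Q, X, Y be finite nonempty types, let μ be a probability mass function on X × Y, and let p : Q → X → Y → ℝ≥0 satisfy Σ_q p(q|x,y) = 1 for all (x,y). Set p(q,x,y) = μ(x,y)·p(q|x,y) and p(q) = Σ_{(x,y)} μ(x,y)·p(q|x,y). Then Σ over those (q,x,y) with p(q,x,y) > 0 and p(q|x,y) < p(q) of p(q,x,y)·log₂( p(q)/p(q|x,y) ) is at most 1 (in fact at most (log₂ e)/e). -/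
lemma aux_mul_log_le (P p : ℝ) (hp : 0 < p) (hP : p ≤ P) :
    p * Real.log (P / p) ≤ P / Real.exp 1 := by
  have hPpos : 0 < P := lt_of_lt_of_le hp hP
  have h1 : 0 < P / (Real.exp 1 * p) := by positivity
  have h2 := Real.log_le_sub_one_of_pos h1
  have h3 : Real.log (P / (Real.exp 1 * p)) = Real.log (P / p) - 1 := by
    rw [Real.log_div (ne_of_gt hPpos) (by positivity),
      Real.log_mul (by positivity) (ne_of_gt hp), Real.log_exp,
      Real.log_div (ne_of_gt hPpos) (ne_of_gt hp)]
    ring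
  rw [h3] at h2
  have h4 : Real.log (P / p) ≤ P / (Real.exp 1 * p) := by linarith
  have h5 : p * Real.log (P / p) ≤ p * (P / (Real.exp 1 * p)) :=
    mul_le_mul_of_nonneg_left h4 hp.le
  have h6 : p * (P / (Real.exp 1 * p)) = P / Real.exp 1 := by
    field_simp
  linarith

/-- The total magnitude of the negative terms in the expansion of the
mutual information `I(XY;Q)` is at most `1`: the sum, over triples `(q,x,y)` with
`p(q,x,y) > 0` and `p(q|x,y) < p(q)`, of `p(q,x,y) · log₂(p(q)/p(q|x,y))` is `≤ 1`. -/
theorem negative_terms_small {Q X Y : Type*} [Fintype Q] [Fintype X] [Fintype Y]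
    [Nonempty Q] [Nonempty X] [Nonempty Y]
    (μ : X → Y → ℝ) (hμ0 : ∀ x y, 0 ≤ μ x y) (hμ1 : ∑ x : X, ∑ y : Y, μ x y = 1)
    (p : Q → X → Y → ℝ) (hp0 : ∀ q x y, 0 ≤ p q x y)
    (hp1 : ∀ x y, ∑ q : Q, p q x y = 1)
    (pq : Q → ℝ) (hpq : ∀ q, pq q = ∑ x : X, ∑ y : Y, μ x y * p q x y) :
    (∑ q : Q, ∑ x : X, ∑ y : Y,
        if 0 < μ x y * p q x y ∧ p q x y < pq q then
          μ x y * p q x y * Real.logb 2 (pq q / p q x y)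
        else 0) ≤ 1 := by
  set c := (Real.exp 1 * Real.log 2)⁻¹ with hc
  have hlog2 : (0.6931471803 : ℝ) < Real.log 2 := Real.log_two_gt_d9
  have he : (2.7182818283 : ℝ) < Real.exp 1 := Real.exp_one_gt_d9
  have hel : 0 < Real.exp 1 * Real.log 2 := by nlinarith
  have hc0 : 0 ≤ c := by rw [hc]; positivity
  have hc1 : c ≤ 1 := by
    have h := inv_mul_cancel₀ (ne_of_gt hel)
    rw [hc]; nlinarith
  have hpq0 : ∀ q, 0 ≤ pq q := by
    intro q; rw [hpq]
    exact Finset.sum_nonneg fun x _ => Finset.sum_nonneg fun y _ =>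
      mul_nonneg (hμ0 x y) (hp0 q x y)
  have key : ∀ q x y, (if 0 < μ x y * p q x y ∧ p q x y < pq q then
          μ x y * p q x y * Real.logb 2 (pq q / p q x y)
        else 0) ≤ μ x y * pq q * c := by
    intro q x y
    split_ifs with h
    · obtain ⟨h1, h2⟩ := h
      rcases mul_pos_iff.mp h1 with ⟨hμpos, hppos⟩ | ⟨hneg, _⟩
      · have h5 := aux_mul_log_le (pq q) (p q x y) hppos h2.le
        have hlogb : Real.logb 2 (pq q / p q x y)
            = Real.log (pq q / p q x y) / Real.log 2 := rfl
        rw [hlogb]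
        have hlog2pos : 0 < Real.log 2 := by linarith
        have step : μ x y * (p q x y * Real.log (pq q / p q x y))
            ≤ μ x y * (pq q / Real.exp 1) := mul_le_mul_of_nonneg_left h5 hμpos.le
        have : μ x y * p q x y * (Real.log (pq q / p q x y) / Real.log 2)
            = μ x y * (p q x y * Real.log (pq q / p q x y)) / Real.log 2 := by ring
        rw [this]
        have : μ x y * pq q * c = μ x y * (pq q / Real.exp 1) / Real.log 2 := by
          rw [hc]; field_simp
        rw [this]
        gcongr
      · exact absurd (hμ0 x y) (not_le.mpr hneg)
    · exact mul_nonneg (mul_nonneg (hμ0 x y) (hpq0 q)) hc0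
  have hsum1 : ∑ q : Q, pq q = 1 := by
    simp only [hpq]
    rw [Finset.sum_comm]
    have : ∀ x : X, ∑ q : Q, ∑ y : Y, μ x y * p q x y = ∑ y : Y, μ x y := by
      intro x
      rw [Finset.sum_comm]
      refine Finset.sum_congr rfl fun y _ => ?_
      rw [← Finset.mul_sum, hp1, mul_one]
    rw [Finset.sum_congr rfl fun x _ => this x, hμ1]
  calc (∑ q : Q, ∑ x : X, ∑ y : Y,
        if 0 < μ x y * p q x y ∧ p q x y < pq q then
          μ x y * p q x y * Real.logb 2 (pq q / p q x y)
        else 0)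
      ≤ ∑ q : Q, ∑ x : X, ∑ y : Y, μ x y * pq q * c :=
        Finset.sum_le_sum fun q _ => Finset.sum_le_sum fun x _ =>
          Finset.sum_le_sum fun y _ => key q x y
    _ = ∑ q : Q, pq q * c := by
        refine Finset.sum_congr rfl fun q _ => ?_
        have : ∀ x : X, ∑ y : Y, μ x y * pq q * c = (∑ y : Y, μ x y) * (pq q * c) := by
          intro x; rw [Finset.sum_mul]
          exact Finset.sum_congr rfl fun y _ => by ring
        rw [Finset.sum_congr rfl fun x _ => this x, ← Finset.sum_mul]
        rw [show (∑ x : X, ∑ y : Y, μ x y) = 1 from hμ1, one_mul]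
    _ = c := by rw [← Finset.sum_mul, hsum1, one_mul]
    _ ≤ 1 := hc1
end

section
/- Let Q, X, Y be finite nonempty types, let μ be a probability mass function on X × Y, and let p : Q → X → Y → ℝ≥0 satisfy Σ_q p(q|x,y) = 1 for all (x,y). Set p(q,x,y) = μ(x,y)·p(q|x,y), p(q) = Σ_{(x,y)} μ(x,y)·p(q|x,y), and I(XY;Q) = Σ_{(q,x,y): p(q,x,y)>0} p(q,x,y)·log₂( p(q|x,y)/p(q) ). Then I(XY;Q) ≥ ( Σ over those (q,x,y) with p(q,x,y) > 0 and p(q|x,y) ≥ p(q) of p(q,x,y)·log₂( p(q|x,y)/p(q) ) ) − 1. -/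
lemma aux_log_le_div_e (u : ℝ) (hu : 0 < u) : Real.log u ≤ u / Real.exp 1 := by
  have h := Real.log_le_sub_one_of_pos (show 0 < u / Real.exp 1 by positivity)
  rw [Real.log_div hu.ne' (Real.exp_pos 1).ne', Real.log_exp] at h
  linarith

lemma aux_term_bound (a b c : ℝ) (ha : 0 < a) (hb : 0 < b) (hbc : b < c) :
    -(a * c) ≤ a * b * Real.logb 2 (b / c) := by
  have hc : 0 < c := hb.trans hbc
  have h1 : Real.log (c / b) ≤ (c / b) / Real.exp 1 :=
    aux_log_le_div_e _ (by positivity)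
  have h2 : a * b * Real.log (c / b) ≤ a * c / Real.exp 1 := by
    have := mul_le_mul_of_nonneg_left h1 (by positivity : (0:ℝ) ≤ a * b)
    calc a * b * Real.log (c / b) ≤ a * b * ((c / b) / Real.exp 1) := this
      _ = a * c / Real.exp 1 := by field_simp
  have he : (2:ℝ) ≤ Real.exp 1 := by
    have := Real.add_one_le_exp 1; linarith
  have hlog2 : (0.6931471803 : ℝ) < Real.log 2 := Real.log_two_gt_d9
  have helog : 1 ≤ Real.exp 1 * Real.log 2 := by nlinarith
  have hlogb : Real.logb 2 (b / c) = - (Real.log (c / b) / Real.log 2) := by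
    rw [Real.logb, Real.log_div hb.ne' hc.ne', Real.log_div hc.ne' hb.ne']
    ring
  rw [hlogb]
  have h3 : a * b * Real.log (c / b) / Real.log 2 ≤ a * c := by
    rw [div_le_iff₀ (by linarith : (0:ℝ) < Real.log 2)]
    calc a * b * Real.log (c / b) ≤ a * c / Real.exp 1 := h2
      _ ≤ a * c * Real.log 2 := by
          rw [div_le_iff₀ (Real.exp_pos 1)]
          nlinarith [mul_pos ha hc]
  calc -(a * c) ≤ -(a * b * Real.log (c / b) / Real.log 2) := by linarith
    _ = a * b * -(Real.log (c / b) / Real.log 2) := by ring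

/-- Discarding the negative terms of the pointwise mutual information
expansion of `I(XY;Q)` increases it by at most one bit:
`I(XY;Q) ≥ (∑ over (q,x,y) with p(q,x,y) > 0 and p(q|x,y) ≥ p(q) of
p(q,x,y)·log₂(p(q|x,y)/p(q))) − 1`. -/
theorem mutual_info_ge_positive_part {Q X Y : Type*} [Fintype Q] [Fintype X] [Fintype Y]
    [Nonempty Q] [Nonempty X] [Nonempty Y]
    (μ : X → Y → ℝ) (hμ0 : ∀ x y, 0 ≤ μ x y) (hμ1 : ∑ x : X, ∑ y : Y, μ x y = 1)
    (p : Q → X → Y → ℝ) (hp0 : ∀ q x y, 0 ≤ p q x y)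
    (hp1 : ∀ x y, ∑ q : Q, p q x y = 1)
    (pq : Q → ℝ) (hpq : ∀ q, pq q = ∑ x : X, ∑ y : Y, μ x y * p q x y)
    (I : ℝ)
    (hI : I = ∑ q : Q, ∑ x : X, ∑ y : Y,
        if 0 < μ x y * p q x y then
          μ x y * p q x y * Real.logb 2 (p q x y / pq q)
        else 0) :
    I ≥ (∑ q : Q, ∑ x : X, ∑ y : Y,
        if 0 < μ x y * p q x y ∧ pq q ≤ p q x y then
          μ x y * p q x y * Real.logb 2 (p q x y / pq q)
        else 0) - 1 := by
  have hpq0 : ∀ q, 0 ≤ pq q := by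
    intro q; rw [hpq]
    exact Finset.sum_nonneg fun x _ => Finset.sum_nonneg fun y _ =>
      mul_nonneg (hμ0 x y) (hp0 q x y)
  -- split I
  have hsplit : I = (∑ q : Q, ∑ x : X, ∑ y : Y,
        if 0 < μ x y * p q x y ∧ pq q ≤ p q x y then
          μ x y * p q x y * Real.logb 2 (p q x y / pq q) else 0)
      + (∑ q : Q, ∑ x : X, ∑ y : Y,
        if 0 < μ x y * p q x y ∧ p q x y < pq q then
          μ x y * p q x y * Real.logb 2 (p q x y / pq q) else 0) := by
    rw [hI, ← Finset.sum_add_distrib]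
    refine Finset.sum_congr rfl fun q _ => ?_
    rw [← Finset.sum_add_distrib]
    refine Finset.sum_congr rfl fun x _ => ?_
    rw [← Finset.sum_add_distrib]
    refine Finset.sum_congr rfl fun y _ => ?_
    rcases le_or_gt (pq q) (p q x y) with h | h
    · by_cases h0 : 0 < μ x y * p q x y <;>
        simp [h0, h, not_lt.mpr h]
    · by_cases h0 : 0 < μ x y * p q x y <;>
        simp [h0, h, not_le.mpr h]
  -- total mass
  have htot : ∑ q : Q, ∑ x : X, ∑ y : Y, μ x y * pq q = 1 := by
    have : ∀ q : Q, ∑ x : X, ∑ y : Y, μ x y * pq q = pq q := by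
      intro q
      simp only [← Finset.sum_mul]
      rw [hμ1, one_mul]
    rw [Finset.sum_congr rfl fun q _ => this q]
    have : ∑ q : Q, pq q = ∑ x : X, ∑ y : Y, μ x y := by
      simp only [hpq]
      rw [Finset.sum_comm]
      refine Finset.sum_congr rfl fun x _ => ?_
      rw [Finset.sum_comm]
      refine Finset.sum_congr rfl fun y _ => ?_
      rw [← Finset.mul_sum, hp1, mul_one]
    rw [this, hμ1]
  -- bound negative part
  have hneg : (∑ q : Q, ∑ x : X, ∑ y : Y,
        if 0 < μ x y * p q x y ∧ p q x y < pq q then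
          μ x y * p q x y * Real.logb 2 (p q x y / pq q) else 0) ≥ -1 := by
    have hb : ∀ q x y, -(μ x y * pq q) ≤
        (if 0 < μ x y * p q x y ∧ p q x y < pq q then
          μ x y * p q x y * Real.logb 2 (p q x y / pq q) else 0) := by
      intro q x y
      split_ifs with h
      · obtain ⟨h0, hlt⟩ := h
        have ha : 0 < μ x y := by
          rcases lt_or_ge 0 (μ x y) with h' | h'
          · exact h'
          · exfalso; nlinarith [hp0 q x y]
        have hb' : 0 < p q x y := by nlinarith
        exact aux_term_bound (μ x y) (p q x y) (pq q) ha hb' hlt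
      · have : 0 ≤ μ x y * pq q := mul_nonneg (hμ0 x y) (hpq0 q)
        linarith
    calc (∑ q : Q, ∑ x : X, ∑ y : Y,
          if 0 < μ x y * p q x y ∧ p q x y < pq q then
            μ x y * p q x y * Real.logb 2 (p q x y / pq q) else 0)
        ≥ ∑ q : Q, ∑ x : X, ∑ y : Y, -(μ x y * pq q) :=
          Finset.sum_le_sum fun q _ => Finset.sum_le_sum fun x _ =>
            Finset.sum_le_sum fun y _ => hb q x y
      _ = -1 := by
          simp only [Finset.sum_neg_distrib, htot]
  linarith [hsplit, hneg]
end

section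
/- Let X, Y, Z be finite nonempty types, Q a finite nonempty type, μ a probability mass function on X × Y, and let α : Q × X → ℝ≥0, β : Q × Y → ℝ≥0 be such that p(q|x,y) := α(q,x)·β(q,y) satisfies Σ_q p(q|x,y) = 1 for all (x,y). For a tile t = (X_t, Y_t, z_t) define σ_{q,t} = min_{x∈X_t} α(q,x) − max_{x'∉X_t} α(q,x') and τ_{q,t} = min_{y∈Y_t} β(q,y) − max_{y'∉Y_t} β(q,y') (maxima over empty sets are 0); fix an output map q ↦ z_q and let T_q = { t : σ_{q,t} > 0, τ_{q,t} > 0, z_t = z_q } and ω_{q,t} = σ_{q,t}·τ_{q,t} for t ∈ T_q. Let p(q) = Σ_{(x,y)} μ(x,y) p(q|x,y), let I = Σ_{(q,x,y): μ(x,y)p(q|x,y)>0} μ(x,y) p(q|x,y) log₂( p(q|x,y)/p(q) ), let δ ∈ (0,1], Δ = (I+1)/δ, and θ_q = p(q)·2^Δ. For t ∈ T_q put α̂(q,t) = min_{x∈X_t} α(q,x) and β̂(q,t) = min_{y∈Y_t} β(q,y). Then Σ over pairs (q, t) with t ∈ T_q and α̂(q,t)·β̂(q,t) ≥ θ_q of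 ω_{q,t} · ( Σ_{(x,y)∈t} μ(x,y) ) ≤ δ. -/
open MeasureTheory in
/-- Sum of lengths of pairwise-disjoint subintervals `(a i, b i] ⊆ (0, M]` is at most `M`. -/
lemma sum_length_le {ι : Type*} (F : Finset ι) (a b : ι → ℝ) (M : ℝ) (hM : 0 ≤ M)
    (h0 : ∀ i ∈ F, 0 ≤ a i) (hab : ∀ i ∈ F, a i ≤ b i) (hbM : ∀ i ∈ F, b i ≤ M)
    (hdisj : (F : Set ι).PairwiseDisjoint fun i => Set.Ioc (a i) (b i)) :
    ∑ i ∈ F, (b i - a i) ≤ M := by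
  rw [← ENNReal.ofReal_le_ofReal_iff hM]
  calc ENNReal.ofReal (∑ i ∈ F, (b i - a i))
      = ∑ i ∈ F, ENNReal.ofReal (b i - a i) :=
        ENNReal.ofReal_sum_of_nonneg (fun i hi => by linarith [hab i hi])
    _ = ∑ i ∈ F, volume (Set.Ioc (a i) (b i)) := by
        refine Finset.sum_congr rfl fun i hi => ?_
        rw [Real.volume_Ioc]
    _ = volume (⋃ i ∈ F, Set.Ioc (a i) (b i)) :=
        (measure_biUnion_finset hdisj fun i _ => measurableSet_Ioc).symm
    _ ≤ volume (Set.Ioc (0:ℝ) M) := by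
        apply measure_mono
        exact Set.iUnion₂_subset fun i hi => Set.Ioc_subset_Ioc (h0 i hi) (hbM i hi)
    _ = ENNReal.ofReal M := by rw [Real.volume_Ioc, sub_zero]

/-- Telescoping bound for the slicing: the total weight of all positive slices
containing `x` is at most `α x`. -/
lemma sum_slices_le {X : Type*} [Fintype X] [DecidableEq X] (α : X → ℝ)
    (hα : ∀ x, 0 ≤ α x) (x : X) :
    ∑ S : Finset X, (if 0 < ((⨅ x' : S, α x'.1) - (⨆ x' : (Sᶜ : Finset X), α x'.1)) ∧ x ∈ S
        then ((⨅ x' : S, α x'.1) - (⨆ x' : (Sᶜ : Finset X), α x'.1)) else 0) ≤ α x := by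
  classical
  rw [← Finset.sum_filter]
  set a : Finset X → ℝ := fun S => ⨆ x' : (Sᶜ : Finset X), α x'.1 with ha
  set b : Finset X → ℝ := fun S => ⨅ x' : S, α x'.1 with hb
  have hble : ∀ (S : Finset X) (x' : X), x' ∈ S → b S ≤ α x' := fun S x' hx' =>
    ciInf_le (f := fun x'' : S => α x''.1)
      (Set.Finite.bddBelow (Set.finite_range _)) (⟨x', hx'⟩ : S)
  have hale : ∀ (S : Finset X) (x' : X), x' ∉ S → α x' ≤ a S := fun S x' hx' =>
    le_ciSup (f := fun x'' : (Sᶜ : Finset X) => α x''.1)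
      (Set.Finite.bddAbove (Set.finite_range _))
      (⟨x', Finset.mem_compl.mpr hx'⟩ : (Sᶜ : Finset X))
  apply sum_length_le _ a b (α x) (hα x)
  · intro S _
    exact Real.iSup_nonneg fun i => hα i.1
  · intro S hS
    rw [Finset.mem_filter] at hS
    linarith [hS.2.1]
  · intro S hS
    rw [Finset.mem_filter] at hS
    exact hble S x hS.2.2
  · intro S _ S' _ hne
    by_contra hcon
    rw [Function.onFun, Set.not_disjoint_iff] at hcon
    obtain ⟨c, hc1, hc2⟩ := hcon
    have hkey : ∀ T : Finset X, c ∈ Set.Ioc (a T) (b T) →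
        T = Finset.univ.filter (fun x' => c ≤ α x') := by
      intro T hcT
      ext x'
      simp only [Finset.mem_filter, Finset.mem_univ, true_and]
      constructor
      · intro h
        exact le_trans hcT.2 (hble T x' h)
      · intro h
        by_contra hx'
        linarith [hale T x' hx', hcT.1]
    exact hne ((hkey S hc1).trans (hkey S' hc2).symm)

/-- The analytic bound `r · (−log₂ r) ≤ 1/(e·ln 2)` for `r > 0`. -/
lemma mul_neg_logb_le (r : ℝ) (hr : 0 < r) :
    r * (-Real.logb 2 r) ≤ 1 / (Real.exp 1 * Real.log 2) := by
  have hlog2 : 0 < Real.log 2 := Real.log_pos one_lt_two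
  have he : 0 < Real.exp 1 := Real.exp_pos 1
  have h1 : Real.log (1 / (r * Real.exp 1)) ≤ 1 / (r * Real.exp 1) - 1 :=
    Real.log_le_sub_one_of_pos (by positivity)
  have h2 : Real.log (1 / (r * Real.exp 1)) = -Real.log r - 1 := by
    rw [Real.log_div one_ne_zero (by positivity), Real.log_one,
      Real.log_mul (ne_of_gt hr) (ne_of_gt he), Real.log_exp]
    ring
  have h4 : -Real.log r ≤ 1 / (r * Real.exp 1) := by
    rw [h2] at h1; linarith
  have h3 : r * (-Real.log r) ≤ 1 / Real.exp 1 := by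
    calc r * (-Real.log r) ≤ r * (1 / (r * Real.exp 1)) :=
          mul_le_mul_of_nonneg_left h4 hr.le
      _ = 1 / Real.exp 1 := by field_simp
  have heq : r * (-Real.logb 2 r) = r * (-Real.log r) / Real.log 2 := by
    rw [Real.logb]; ring
  rw [heq, ← div_div]
  gcongr

/-- Factorization of the sum over product tiles. -/
lemma prod_sum_helper {A B C : Type*} [Fintype A] [Fintype B] [Fintype C] [DecidableEq C]
    (g1 : A → ℝ) (g2 : B → ℝ) (c0 : C) :
    (∑ t : A × B × C, if t.2.2 = c0 then g1 t.1 * g2 t.2.1 else 0)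
      = (∑ a : A, g1 a) * (∑ b : B, g2 b) := by
  rw [Fintype.sum_prod_type, Finset.sum_mul]
  refine Finset.sum_congr rfl fun a _ => ?_
  rw [Fintype.sum_prod_type, Finset.mul_sum]
  refine Finset.sum_congr rfl fun b _ => ?_
  simp [Finset.sum_ite_eq']

/-- mass of the bad set: In the slicing construction for a factorized
kernel `p(q|x,y) = α(q,x)·β(q,y)` with input distribution `μ`, the total probability
mass `∑ ω_{q,t} · μ(t)` of the pairs `(q, t)` with `t ∈ T_q` and
`α̂(q,t)·β̂(q,t) ≥ θ_q = p(q)·2^Δ`, where `Δ = (I + 1)/δ`, is at most `δ`. -/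
theorem bad_set_mass_le {X Y Z Q : Type*}
    [Fintype X] [Fintype Y] [Fintype Z] [Fintype Q]
    [Nonempty X] [Nonempty Y] [Nonempty Z] [Nonempty Q]
    [DecidableEq X] [DecidableEq Y] [DecidableEq Z]
    (μ : X → Y → ℝ) (hμ0 : ∀ x y, 0 ≤ μ x y) (hμ1 : ∑ x : X, ∑ y : Y, μ x y = 1)
    (α : Q → X → ℝ) (β : Q → Y → ℝ)
    (hα : ∀ q x, 0 ≤ α q x) (hβ : ∀ q y, 0 ≤ β q y)
    (hp1 : ∀ x y, ∑ q : Q, α q x * β q y = 1)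
    (z : Q → Z)
    (σ τ ω : Q → Finset X × Finset Y × Z → ℝ)
    (hσ : ∀ q (t : Finset X × Finset Y × Z),
      σ q t = (⨅ x : t.1, α q x.1) - (⨆ x : (t.1ᶜ : Finset X), α q x.1))
    (hτ : ∀ q (t : Finset X × Finset Y × Z),
      τ q t = (⨅ y : t.2.1, β q y.1) - (⨆ y : (t.2.1ᶜ : Finset Y), β q y.1))
    (hω : ∀ q t, ω q t = σ q t * τ q t)
    (pq : Q → ℝ) (hpq : ∀ q, pq q = ∑ x : X, ∑ y : Y, μ x y * (α q x * β q y))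
    (I : ℝ)
    (hI : I = ∑ q : Q, ∑ x : X, ∑ y : Y,
        if 0 < μ x y * (α q x * β q y) then
          μ x y * (α q x * β q y) * Real.logb 2 ((α q x * β q y) / pq q)
        else 0)
    (δ : ℝ) (hδ0 : 0 < δ) (hδ1 : δ ≤ 1)
    (Δ : ℝ) (hΔ : Δ = (I + 1) / δ)
    (θ : Q → ℝ) (hθ : ∀ q, θ q = pq q * (2 : ℝ) ^ Δ)
    (αhat βhat : Q → Finset X × Finset Y × Z → ℝ)
    (hαhat : ∀ q (t : Finset X × Finset Y × Z), αhat q t = ⨅ x : t.1, α q x.1)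
    (hβhat : ∀ q (t : Finset X × Finset Y × Z), βhat q t = ⨅ y : t.2.1, β q y.1) :
    (∑ q : Q, ∑ t ∈ Finset.univ.filter (fun t : Finset X × Finset Y × Z =>
        (0 < σ q t ∧ 0 < τ q t ∧ t.2.2 = z q) ∧ θ q ≤ αhat q t * βhat q t),
      ω q t * (∑ x : X, ∑ y : Y, if x ∈ t.1 ∧ y ∈ t.2.1 then μ x y else 0)) ≤ δ := by
  classical
  -- basic positivity facts
  have hg_nonneg : ∀ (q : Q) (x : X) (y : Y), 0 ≤ μ x y * (α q x * β q y) :=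
    fun q x y => mul_nonneg (hμ0 x y) (mul_nonneg (hα q x) (hβ q y))
  have hpq_ge : ∀ (q : Q) (x : X) (y : Y), μ x y * (α q x * β q y) ≤ pq q := by
    intro q x y
    rw [hpq q]
    calc μ x y * (α q x * β q y)
        ≤ ∑ y' : Y, μ x y' * (α q x * β q y') :=
          Finset.single_le_sum (fun y' _ => hg_nonneg q x y') (Finset.mem_univ y)
      _ ≤ ∑ x' : X, ∑ y' : Y, μ x' y' * (α q x' * β q y') :=
          Finset.single_le_sum
            (fun x' _ => Finset.sum_nonneg fun y' _ => hg_nonneg q x' y')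
            (Finset.mem_univ x)
  have hpq_sum : ∑ q : Q, pq q = 1 := by
    calc ∑ q : Q, pq q
        = ∑ q : Q, ∑ x : X, ∑ y : Y, μ x y * (α q x * β q y) :=
          Finset.sum_congr rfl fun q _ => hpq q
      _ = ∑ x : X, ∑ q : Q, ∑ y : Y, μ x y * (α q x * β q y) := Finset.sum_comm
      _ = ∑ x : X, ∑ y : Y, ∑ q : Q, μ x y * (α q x * β q y) :=
          Finset.sum_congr rfl fun x _ => Finset.sum_comm
      _ = ∑ x : X, ∑ y : Y, μ x y := by
          refine Finset.sum_congr rfl fun x _ => Finset.sum_congr rfl fun y _ => ?_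
          rw [← Finset.mul_sum, hp1 x y, mul_one]
      _ = 1 := hμ1
  -- constant c = 1/(e ln 2)
  set c : ℝ := 1 / (Real.exp 1 * Real.log 2) with hc
  have hlog2 : 0 < Real.log 2 := Real.log_pos one_lt_two
  have he : 0 < Real.exp 1 := Real.exp_pos 1
  have hc_pos : 0 < c := by positivity
  have hc_lt : c < 1 := by
    rw [hc, div_lt_one (by positivity)]
    nlinarith [Real.exp_one_gt_d9, Real.log_two_gt_d9]
  -- triple-sum monotonicity helper
  have tri_le : ∀ (F G : Q → X → Y → ℝ), (∀ q x y, F q x y ≤ G q x y) →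
      (∑ q : Q, ∑ x : X, ∑ y : Y, F q x y) ≤ ∑ q : Q, ∑ x : X, ∑ y : Y, G q x y :=
    fun F G h => Finset.sum_le_sum fun q _ => Finset.sum_le_sum fun x _ =>
      Finset.sum_le_sum fun y _ => h q x y
  -- the slice bounds
  have slice_x : ∀ (q : Q) (x : X),
      (∑ S : Finset X, if 0 < ((⨅ x' : S, α q x'.1) - (⨆ x' : (Sᶜ : Finset X), α q x'.1)) ∧ x ∈ S
        then ((⨅ x' : S, α q x'.1) - (⨆ x' : (Sᶜ : Finset X), α q x'.1)) else 0) ≤ α q x :=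
    fun q x => sum_slices_le (α q) (hα q) x
  have slice_y : ∀ (q : Q) (y : Y),
      (∑ T : Finset Y, if 0 < ((⨅ y' : T, β q y'.1) - (⨆ y' : (Tᶜ : Finset Y), β q y'.1)) ∧ y ∈ T
        then ((⨅ y' : T, β q y'.1) - (⨆ y' : (Tᶜ : Finset Y), β q y'.1)) else 0) ≤ β q y :=
    fun q y => sum_slices_le (β q) (hβ q) y
  -- key pointwise tile bound
  have key : ∀ (q : Q) (x : X) (y : Y),
      (∑ t : Finset X × Finset Y × Z,
        if ((0 < σ q t ∧ 0 < τ q t ∧ t.2.2 = z q) ∧ θ q ≤ αhat q t * βhat q t)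
            ∧ (x ∈ t.1 ∧ y ∈ t.2.1) then ω q t else 0)
      ≤ (if θ q ≤ α q x * β q y then α q x * β q y else 0) := by
    intro q x y
    by_cases hθq : θ q ≤ α q x * β q y
    · rw [if_pos hθq]
      calc (∑ t : Finset X × Finset Y × Z,
            if ((0 < σ q t ∧ 0 < τ q t ∧ t.2.2 = z q) ∧ θ q ≤ αhat q t * βhat q t)
                ∧ (x ∈ t.1 ∧ y ∈ t.2.1) then ω q t else 0)
          ≤ ∑ t : Finset X × Finset Y × Z,
            (if t.2.2 = z q then
              (if 0 < ((⨅ x' : t.1, α q x'.1) - (⨆ x' : (t.1ᶜ : Finset X), α q x'.1)) ∧ x ∈ t.1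
                then ((⨅ x' : t.1, α q x'.1) - (⨆ x' : (t.1ᶜ : Finset X), α q x'.1)) else 0) *
              (if 0 < ((⨅ y' : t.2.1, β q y'.1) - (⨆ y' : (t.2.1ᶜ : Finset Y), β q y'.1)) ∧ y ∈ t.2.1
                then ((⨅ y' : t.2.1, β q y'.1) - (⨆ y' : (t.2.1ᶜ : Finset Y), β q y'.1)) else 0)
              else 0) := by
            refine Finset.sum_le_sum fun t _ => ?_
            by_cases hcond : ((0 < σ q t ∧ 0 < τ q t ∧ t.2.2 = z q) ∧ θ q ≤ αhat q t * βhat q t)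
                ∧ (x ∈ t.1 ∧ y ∈ t.2.1)
            · rw [if_pos hcond, if_pos hcond.1.1.2.2,
                if_pos ⟨by rw [← hσ q t]; exact hcond.1.1.1, hcond.2.1⟩,
                if_pos ⟨by rw [← hτ q t]; exact hcond.1.1.2.1, hcond.2.2⟩,
                hω, hσ, hτ]
            · rw [if_neg hcond]
              split_ifs with h1 h2 h3 h4 h5
              · exact le_of_lt (mul_pos h2.1 h3.1)
              · rw [mul_zero]
              · rw [zero_mul]
              · rw [zero_mul]
              · exact le_rfl
        _ = (∑ S : Finset X,
              if 0 < ((⨅ x' : S, α q x'.1) - (⨆ x' : (Sᶜ : Finset X), α q x'.1)) ∧ x ∈ S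
                then ((⨅ x' : S, α q x'.1) - (⨆ x' : (Sᶜ : Finset X), α q x'.1)) else 0) *
            (∑ T : Finset Y,
              if 0 < ((⨅ y' : T, β q y'.1) - (⨆ y' : (Tᶜ : Finset Y), β q y'.1)) ∧ y ∈ T
                then ((⨅ y' : T, β q y'.1) - (⨆ y' : (Tᶜ : Finset Y), β q y'.1)) else 0) :=
            prod_sum_helper
              (fun S : Finset X =>
                if 0 < ((⨅ x' : S, α q x'.1) - (⨆ x' : (Sᶜ : Finset X), α q x'.1)) ∧ x ∈ S
                  then ((⨅ x' : S, α q x'.1) - (⨆ x' : (Sᶜ : Finset X), α q x'.1)) else 0)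
              (fun T : Finset Y =>
                if 0 < ((⨅ y' : T, β q y'.1) - (⨆ y' : (Tᶜ : Finset Y), β q y'.1)) ∧ y ∈ T
                  then ((⨅ y' : T, β q y'.1) - (⨆ y' : (Tᶜ : Finset Y), β q y'.1)) else 0)
              (z q)
        _ ≤ α q x * β q y := by
            refine mul_le_mul (slice_x q x) (slice_y q y) ?_ (hα q x)
            refine Finset.sum_nonneg fun T _ => ?_
            split_ifs with h
            · exact le_of_lt h.1
            · exact le_rfl
    · rw [if_neg hθq]
      apply le_of_eq
      apply Finset.sum_eq_zero
      intro t _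
      rw [if_neg]
      rintro ⟨⟨⟨hσt, hτt, hzt⟩, hhat⟩, hx, hy⟩
      apply hθq
      have h1 : αhat q t ≤ α q x := by
        rw [hαhat]
        exact ciInf_le (f := fun x' : t.1 => α q x'.1)
          (Set.Finite.bddBelow (Set.finite_range _)) ⟨x, hx⟩
      have h2 : βhat q t ≤ β q y := by
        rw [hβhat]
        exact ciInf_le (f := fun y' : t.2.1 => β q y'.1)
          (Set.Finite.bddBelow (Set.finite_range _)) ⟨y, hy⟩
      have h3 : 0 ≤ αhat q t := by
        rw [hαhat]; exact Real.iInf_nonneg fun i => hα q i.1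
      have h4 : 0 ≤ βhat q t := by
        rw [hβhat]; exact Real.iInf_nonneg fun i => hβ q i.1
      calc θ q ≤ αhat q t * βhat q t := hhat
        _ ≤ α q x * β q y := mul_le_mul h1 h2 h4 (hα q x)
  -- rearrangement of the LHS
  have rearr : ∀ q : Q,
      (∑ t : Finset X × Finset Y × Z,
        if (0 < σ q t ∧ 0 < τ q t ∧ t.2.2 = z q) ∧ θ q ≤ αhat q t * βhat q t then
          ω q t * (∑ x : X, ∑ y : Y, if x ∈ t.1 ∧ y ∈ t.2.1 then μ x y else 0) else 0)
      = ∑ x : X, ∑ y : Y, μ x y *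
          (∑ t : Finset X × Finset Y × Z,
            if ((0 < σ q t ∧ 0 < τ q t ∧ t.2.2 = z q) ∧ θ q ≤ αhat q t * βhat q t)
              ∧ (x ∈ t.1 ∧ y ∈ t.2.1) then ω q t else 0) := by
    intro q
    have h1 : ∀ t : Finset X × Finset Y × Z,
        (if (0 < σ q t ∧ 0 < τ q t ∧ t.2.2 = z q) ∧ θ q ≤ αhat q t * βhat q t then
          ω q t * (∑ x : X, ∑ y : Y, if x ∈ t.1 ∧ y ∈ t.2.1 then μ x y else 0) else 0)
        = ∑ x : X, ∑ y : Y,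
            (if ((0 < σ q t ∧ 0 < τ q t ∧ t.2.2 = z q) ∧ θ q ≤ αhat q t * βhat q t)
              ∧ (x ∈ t.1 ∧ y ∈ t.2.1) then ω q t * μ x y else 0) := by
      intro t
      by_cases hP : (0 < σ q t ∧ 0 < τ q t ∧ t.2.2 = z q) ∧ θ q ≤ αhat q t * βhat q t
      · rw [if_pos hP, Finset.mul_sum]
        refine Finset.sum_congr rfl fun x _ => ?_
        rw [Finset.mul_sum]
        refine Finset.sum_congr rfl fun y _ => ?_
        by_cases hm : x ∈ t.1 ∧ y ∈ t.2.1
        · rw [if_pos hm, if_pos ⟨hP, hm⟩]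
        · rw [if_neg hm, if_neg (by tauto), mul_zero]
      · rw [if_neg hP]
        refine (Finset.sum_eq_zero fun x _ => Finset.sum_eq_zero fun y _ => ?_).symm
        rw [if_neg (by tauto)]
    rw [Finset.sum_congr rfl fun t _ => h1 t, Finset.sum_comm]
    refine Finset.sum_congr rfl fun x _ => ?_
    rw [Finset.sum_comm]
    refine Finset.sum_congr rfl fun y _ => ?_
    rw [Finset.mul_sum]
    refine Finset.sum_congr rfl fun t _ => ?_
    by_cases hc' : ((0 < σ q t ∧ 0 < τ q t ∧ t.2.2 = z q) ∧ θ q ≤ αhat q t * βhat q t)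
        ∧ (x ∈ t.1 ∧ y ∈ t.2.1)
    · rw [if_pos hc', if_pos hc', mul_comm]
    · rw [if_neg hc', if_neg hc', mul_zero]
  -- the bad-mass quantity
  set B : ℝ := ∑ q : Q, ∑ x : X, ∑ y : Y,
      μ x y * (if θ q ≤ α q x * β q y then α q x * β q y else 0) with hB
  have main1 : (∑ q : Q, ∑ t ∈ Finset.univ.filter (fun t : Finset X × Finset Y × Z =>
        (0 < σ q t ∧ 0 < τ q t ∧ t.2.2 = z q) ∧ θ q ≤ αhat q t * βhat q t),
      ω q t * (∑ x : X, ∑ y : Y, if x ∈ t.1 ∧ y ∈ t.2.1 then μ x y else 0)) ≤ B := by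
    rw [hB]
    calc (∑ q : Q, ∑ t ∈ Finset.univ.filter (fun t : Finset X × Finset Y × Z =>
            (0 < σ q t ∧ 0 < τ q t ∧ t.2.2 = z q) ∧ θ q ≤ αhat q t * βhat q t),
          ω q t * (∑ x : X, ∑ y : Y, if x ∈ t.1 ∧ y ∈ t.2.1 then μ x y else 0))
        = ∑ q : Q, ∑ x : X, ∑ y : Y, μ x y *
            (∑ t : Finset X × Finset Y × Z,
              if ((0 < σ q t ∧ 0 < τ q t ∧ t.2.2 = z q) ∧ θ q ≤ αhat q t * βhat q t)
                ∧ (x ∈ t.1 ∧ y ∈ t.2.1) then ω q t else 0) := by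
          refine Finset.sum_congr rfl fun q _ => ?_
          rw [Finset.sum_filter]
          exact rearr q
      _ ≤ ∑ q : Q, ∑ x : X, ∑ y : Y,
            μ x y * (if θ q ≤ α q x * β q y then α q x * β q y else 0) :=
          tri_le _ _ fun q x y => mul_le_mul_of_nonneg_left (key q x y) (hμ0 x y)
  -- information-theoretic bound: B ≤ δ
  have step2 : B * Δ ≤ ∑ q : Q, ∑ x : X, ∑ y : Y,
      (if θ q ≤ α q x * β q y ∧ 0 < μ x y * (α q x * β q y) then
        μ x y * (α q x * β q y) * Real.logb 2 ((α q x * β q y) / pq q) else 0) := by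
    rw [hB, Finset.sum_mul]
    simp only [Finset.sum_mul]
    refine tri_le _ _ fun q x y => ?_
    by_cases hθq : θ q ≤ α q x * β q y
    · rw [if_pos hθq]
      by_cases hg : 0 < μ x y * (α q x * β q y)
      · rw [if_pos ⟨hθq, hg⟩]
        have hpqpos : 0 < pq q := lt_of_lt_of_le hg (hpq_ge q x y)
        have hfpos : 0 < α q x * β q y := by
          rcases (mul_nonneg (hα q x) (hβ q y)).lt_or_eq with h | h
          · exact h
          · exfalso; rw [← h, mul_zero] at hg; exact lt_irrefl 0 hg
        have h2Δ : (2:ℝ) ^ Δ ≤ (α q x * β q y) / pq q := by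
          rw [le_div_iff₀ hpqpos]
          rw [hθ] at hθq
          nlinarith
        have hΔL : Δ ≤ Real.logb 2 ((α q x * β q y) / pq q) := by
          calc Δ = Real.logb 2 ((2:ℝ) ^ Δ) :=
                (Real.logb_rpow (by norm_num) (by norm_num)).symm
            _ ≤ Real.logb 2 ((α q x * β q y) / pq q) :=
                (Real.logb_le_logb one_lt_two (Real.rpow_pos_of_pos two_pos Δ)
                  (div_pos hfpos hpqpos)).mpr h2Δ
        exact mul_le_mul_of_nonneg_left hΔL hg.le
      · rw [if_neg (by tauto)]
        have h0 : μ x y * (α q x * β q y) = 0 :=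
          le_antisymm (not_lt.mp hg) (hg_nonneg q x y)
        rw [h0, zero_mul]
    · rw [if_neg hθq, if_neg (by tauto), mul_zero, zero_mul]
  -- the negative-part sum N
  set N : ℝ := ∑ q : Q, ∑ x : X, ∑ y : Y,
      (if 0 < μ x y * (α q x * β q y) then
        μ x y * (α q x * β q y) * max 0 (-Real.logb 2 ((α q x * β q y) / pq q)) else 0)
    with hN
  have hN_pt : ∀ (q : Q) (x : X) (y : Y),
      (if 0 < μ x y * (α q x * β q y) then
        μ x y * (α q x * β q y) * max 0 (-Real.logb 2 ((α q x * β q y) / pq q)) else 0)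
      ≤ μ x y * pq q * c := by
    intro q x y
    by_cases hg : 0 < μ x y * (α q x * β q y)
    · rw [if_pos hg]
      have hμpos : 0 < μ x y := by
        rcases (hμ0 x y).lt_or_eq with h | h
        · exact h
        · exfalso; rw [← h, zero_mul] at hg; exact lt_irrefl 0 hg
      have hfpos : 0 < α q x * β q y := by
        rcases (mul_nonneg (hα q x) (hβ q y)).lt_or_eq with h | h
        · exact h
        · exfalso; rw [← h, mul_zero] at hg; exact lt_irrefl 0 hg
      have hpqpos : 0 < pq q := lt_of_lt_of_le hg (hpq_ge q x y)
      set r : ℝ := (α q x * β q y) / pq q with hr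
      have hrpos : 0 < r := by positivity
      have key2 : r * max 0 (-Real.logb 2 r) ≤ c := by
        rcases le_or_gt (-Real.logb 2 r) 0 with h | h
        · rw [max_eq_left h, mul_zero]; exact hc_pos.le
        · rw [max_eq_right h.le]; exact mul_neg_logb_le r hrpos
      have heq : μ x y * (α q x * β q y) * max 0 (-Real.logb 2 r)
          = μ x y * (pq q * (r * max 0 (-Real.logb 2 r))) := by
        rw [hr]; field_simp
      rw [heq]
      calc μ x y * (pq q * (r * max 0 (-Real.logb 2 r)))
          ≤ μ x y * (pq q * c) :=
            mul_le_mul_of_nonneg_left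
              (mul_le_mul_of_nonneg_left key2 hpqpos.le) hμpos.le
        _ = μ x y * pq q * c := by ring
    · rw [if_neg hg]
      have hpq0 : 0 ≤ pq q := le_trans (hg_nonneg q x y) (hpq_ge q x y)
      exact mul_nonneg (mul_nonneg (hμ0 x y) hpq0) hc_pos.le
  have hN_le : N ≤ c := by
    rw [hN]
    calc (∑ q : Q, ∑ x : X, ∑ y : Y,
          (if 0 < μ x y * (α q x * β q y) then
            μ x y * (α q x * β q y) * max 0 (-Real.logb 2 ((α q x * β q y) / pq q)) else 0))
        ≤ ∑ q : Q, ∑ x : X, ∑ y : Y, μ x y * pq q * c := tri_le _ _ hN_pt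
      _ = ∑ q : Q, pq q * c := by
          refine Finset.sum_congr rfl fun q _ => ?_
          calc (∑ x : X, ∑ y : Y, μ x y * pq q * c)
              = ∑ x : X, ∑ y : Y, μ x y * (pq q * c) := by
                refine Finset.sum_congr rfl fun x _ => Finset.sum_congr rfl fun y _ => ?_
                ring
            _ = (∑ x : X, ∑ y : Y, μ x y) * (pq q * c) := by
                rw [Finset.sum_mul]
                refine Finset.sum_congr rfl fun x _ => ?_
                rw [Finset.sum_mul]
            _ = pq q * c := by rw [hμ1, one_mul]
      _ = c := by rw [← Finset.sum_mul, hpq_sum, one_mul]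
  -- pointwise nonnegativity of I-term + N-term
  have hpt_nonneg : ∀ (q : Q) (x : X) (y : Y),
      0 ≤ (if 0 < μ x y * (α q x * β q y) then
            μ x y * (α q x * β q y) * Real.logb 2 ((α q x * β q y) / pq q) else 0)
          + (if 0 < μ x y * (α q x * β q y) then
            μ x y * (α q x * β q y) * max 0 (-Real.logb 2 ((α q x * β q y) / pq q)) else 0) := by
    intro q x y
    by_cases hg : 0 < μ x y * (α q x * β q y)
    · rw [if_pos hg, if_pos hg]
      set L : ℝ := Real.logb 2 ((α q x * β q y) / pq q) with hL
      have hx : 0 ≤ L + max 0 (-L) := by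
        have := le_max_right (0:ℝ) (-L); linarith
      calc (0:ℝ) ≤ μ x y * (α q x * β q y) * (L + max 0 (-L)) :=
            mul_nonneg hg.le hx
        _ = μ x y * (α q x * β q y) * L
            + μ x y * (α q x * β q y) * max 0 (-L) := by ring
    · rw [if_neg hg, if_neg hg, add_zero]
  have hIN : 0 ≤ I + N := by
    rw [hI, hN, ← Finset.sum_add_distrib]
    refine Finset.sum_nonneg fun q _ => ?_
    rw [← Finset.sum_add_distrib]
    refine Finset.sum_nonneg fun x _ => ?_
    rw [← Finset.sum_add_distrib]
    exact Finset.sum_nonneg fun y _ => hpt_nonneg q x y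
  -- step3 : the restricted sum is at most I + N
  have step3 : (∑ q : Q, ∑ x : X, ∑ y : Y,
      (if θ q ≤ α q x * β q y ∧ 0 < μ x y * (α q x * β q y) then
        μ x y * (α q x * β q y) * Real.logb 2 ((α q x * β q y) / pq q) else 0)) ≤ I + N := by
    rw [hI, hN, ← Finset.sum_add_distrib]
    refine Finset.sum_le_sum fun q _ => ?_
    rw [← Finset.sum_add_distrib]
    refine Finset.sum_le_sum fun x _ => ?_
    rw [← Finset.sum_add_distrib]
    refine Finset.sum_le_sum fun y _ => ?_
    by_cases h1 : θ q ≤ α q x * β q y ∧ 0 < μ x y * (α q x * β q y)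
    · rw [if_pos h1, if_pos h1.2, if_pos h1.2]
      have : 0 ≤ μ x y * (α q x * β q y) *
          max 0 (-Real.logb 2 ((α q x * β q y) / pq q)) :=
        mul_nonneg h1.2.le (le_max_left _ _)
      linarith
    · rw [if_neg h1]
      exact hpt_nonneg q x y
  -- conclude
  have hI1 : 0 < I + 1 := by linarith
  have hΔpos : 0 < Δ := by rw [hΔ]; exact div_pos hI1 hδ0
  have hδΔ : δ * Δ = I + 1 := by rw [hΔ]; field_simp
  have hBδ : B ≤ δ := by
    have hchain : B * Δ ≤ δ * Δ := by
      rw [hδΔ]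
      calc B * Δ ≤ _ := step2
        _ ≤ I + N := step3
        _ ≤ I + 1 := by linarith
    exact le_of_mul_le_mul_right hchain hΔpos
  exact le_trans main1 hBδ
end

section
/- Let M, N be positive integers, let 0 = a_0 ≤ a_1 ≤ … ≤ a_M and 0 = b_0 ≤ b_1 ≤ … ≤ b_N be real numbers, and let θ > 0 satisfy θ ≤ a_M · b_N. Then Σ over pairs (i,j) with 1 ≤ i ≤ M, 1 ≤ j ≤ N and a_i · b_j < θ of (a_i − a_{i−1})·(b_j − b_{j−1}) ≤ θ + θ · ln( a_M · b_N / θ ), where ln denotes the natural logarithm. -/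
lemma aux_log (x : ℝ) (hx : 0 < x) : 1 - 1/x ≤ Real.log x := by
  have h := Real.log_le_sub_one_of_pos (x := 1/x) (by positivity)
  rw [Real.log_div one_ne_zero (ne_of_gt hx), Real.log_one] at h
  linarith

lemma aux_tele (f : ℕ → ℝ) (J : ℕ) :
    ∑ j ∈ Finset.Icc 1 J, (f j - f (j - 1)) = f J - f 0 := by
  induction J with
  | zero => simp
  | succ J ih =>
      rw [Finset.sum_Icc_succ_top (Nat.succ_le_succ (Nat.zero_le _)), ih]
      simp only [Nat.add_sub_cancel]
      ring

lemma aux_key (θ Bn u v w : ℝ) (hθ : 0 < θ) (hB : 0 < Bn)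
    (hu : 0 ≤ u) (huv : u ≤ v) (hw0 : 0 ≤ w) (hwB : w ≤ Bn) (hvw : v * w ≤ θ) :
    (v - u) * w ≤
      (if v ≤ θ / Bn then Bn * v else θ + θ * Real.log (v * Bn / θ)) -
      (if u ≤ θ / Bn then Bn * u else θ + θ * Real.log (u * Bn / θ)) := by
  by_cases hv : v ≤ θ / Bn
  · rw [if_pos hv, if_pos (le_trans huv hv)]
    nlinarith
  · rw [if_neg hv]
    push_neg at hv
    have hv0 : 0 < v := lt_trans (by positivity) hv
    have ht : 0 < v * Bn / θ := by positivity
    have hL := aux_log _ ht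
    have h5 : v * Bn - θ ≤ v * Bn * Real.log (v * Bn / θ) := by
      have he : 1/(v * Bn / θ) = θ / (v * Bn) := by field_simp
      rw [he] at hL
      have h6 : (1 - θ / (v * Bn)) * (v * Bn) ≤ Real.log (v * Bn / θ) * (v * Bn) :=
        mul_le_mul_of_nonneg_right hL (by positivity)
      have h7 : (1 - θ / (v * Bn)) * (v * Bn) = v * Bn - θ := by field_simp
      nlinarith
    by_cases hu' : u ≤ θ / Bn
    · rw [if_pos hu']
      have h3 : Bn * u ≤ θ := by
        rw [le_div_iff₀ hB] at hu'; linarith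
      have h4 : θ ≤ Bn * v := by
        rw [div_lt_iff₀ hB] at hv; linarith
      nlinarith [mul_nonneg (mul_nonneg hB.le (sub_nonneg.mpr huv)) (sub_nonneg.mpr hvw),
        mul_nonneg (sub_nonneg.mpr h3) (sub_nonneg.mpr h4), h5, mul_pos hv0 hB, hθ]
    · rw [if_neg hu']
      push_neg at hu'
      have hu0 : 0 < u := lt_trans (by positivity) hu'
      have hvu : 0 < v / u := by positivity
      have hL2 := aux_log _ hvu
      have h8 : Real.log (v * Bn / θ) - Real.log (u * Bn / θ) = Real.log (v / u) := by
        rw [← Real.log_div (by positivity) (by positivity)]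
        congr 1
        field_simp
      have h9 : v - u ≤ v * (Real.log (v * Bn / θ) - Real.log (u * Bn / θ)) := by
        rw [h8]
        have he2 : 1/(v/u) = u/v := one_div_div v u
        rw [he2] at hL2
        have h10 := mul_le_mul_of_nonneg_right hL2 hv0.le
        have h11 : (1 - u/v) * v = v - u := by field_simp
        nlinarith
      nlinarith [mul_nonneg (sub_nonneg.mpr huv) (sub_nonneg.mpr hvw), h9, hθ, hv0]

/-- geometric lemma: given `0 = a₀ ≤ a₁ ≤ … ≤ a_M`,
`0 = b₀ ≤ b₁ ≤ … ≤ b_N`, and `0 < θ ≤ a_M · b_N`, the total area of the rectangles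
`R_{ij}` (with corners `(a_{i-1}, b_{j-1})`, `(a_i, b_j)`) whose top-right corner lies
strictly below the hyperbola `xy = θ` is at most `θ + θ · ln(a_M · b_N / θ)`. -/
theorem area_under_hyperbola (M N : ℕ) (hM : 0 < M) (hN : 0 < N)
    (a b : ℕ → ℝ)
    (ha0 : a 0 = 0) (hb0 : b 0 = 0)
    (hamono : ∀ i < M, a i ≤ a (i + 1))
    (hbmono : ∀ j < N, b j ≤ b (j + 1))
    (θ : ℝ) (hθ0 : 0 < θ) (hθ : θ ≤ a M * b N) :
    (∑ i ∈ Finset.Icc 1 M, ∑ j ∈ Finset.Icc 1 N,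
        if a i * b j < θ then (a i - a (i - 1)) * (b j - b (j - 1)) else 0)
      ≤ θ + θ * Real.log (a M * b N / θ) := by
  have hamon : ∀ k, k ≤ M → ∀ i, i ≤ k → a i ≤ a k := by
    intro k
    induction k with
    | zero => intro _ i hi; interval_cases i; exact le_refl _
    | succ k ih =>
        intro hk i hi
        rcases Nat.eq_or_lt_of_le hi with h | h
        · rw [h]
        · exact le_trans (ih (by omega) i (Nat.lt_succ_iff.mp h))
            (hamono k (by omega))
  have hbmon : ∀ k, k ≤ N → ∀ j, j ≤ k → b j ≤ b k := by
    intro k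
    induction k with
    | zero => intro _ j hj; interval_cases j; exact le_refl _
    | succ k ih =>
        intro hk j hj
        rcases Nat.eq_or_lt_of_le hj with h | h
        · rw [h]
        · exact le_trans (ih (by omega) j (Nat.lt_succ_iff.mp h))
            (hbmono k (by omega))
  have ha_nn : ∀ i, i ≤ M → 0 ≤ a i := by
    intro i hi
    have := hamon i hi 0 (Nat.zero_le _)
    rwa [ha0] at this
  have hb_nn : ∀ j, j ≤ N → 0 ≤ b j := by
    intro j hj
    have := hbmon j hj 0 (Nat.zero_le _)
    rwa [hb0] at this
  have haM : 0 ≤ a M := ha_nn M le_rfl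
  have hbN : 0 < b N := by
    by_contra h
    push_neg at h
    nlinarith
  have step : ∀ i ∈ Finset.Icc 1 M,
      (∑ j ∈ Finset.Icc 1 N, if a i * b j < θ then (a i - a (i-1)) * (b j - b (j-1)) else 0)
        ≤ (if a i ≤ θ / b N then b N * a i else θ + θ * Real.log (a i * b N / θ)) -
          (if a (i-1) ≤ θ / b N then b N * a (i-1) else θ + θ * Real.log (a (i-1) * b N / θ)) := by
    intro i hi
    rw [Finset.mem_Icc] at hi
    have hai1 : a (i-1) ≤ a i := by
      have := hamono (i-1) (by omega)
      rwa [Nat.sub_add_cancel hi.1] at this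
    have hai1nn : 0 ≤ a (i-1) := ha_nn _ (by omega)
    have hain : 0 ≤ a i := ha_nn _ hi.2
    have hsum : (∑ j ∈ Finset.Icc 1 N, if a i * b j < θ then (a i - a (i-1)) * (b j - b (j-1)) else 0)
        = (a i - a (i-1)) * ∑ j ∈ Finset.Icc 1 N, (if a i * b j < θ then (b j - b (j-1)) else 0) := by
      rw [Finset.mul_sum]
      apply Finset.sum_congr rfl
      intro j _
      split <;> simp
    rw [hsum]
    obtain ⟨w, hw0, hwB, hvw, hsle⟩ : ∃ w, 0 ≤ w ∧ w ≤ b N ∧ a i * w ≤ θ ∧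
        (∑ j ∈ Finset.Icc 1 N, (if a i * b j < θ then (b j - b (j-1)) else 0)) ≤ w := by
      have hsum2 : (∑ j ∈ Finset.Icc 1 N, (if a i * b j < θ then (b j - b (j-1)) else 0))
          = ∑ j ∈ (Finset.Icc 1 N).filter (fun j => a i * b j < θ), (b j - b (j-1)) :=
        (Finset.sum_filter _ _).symm
      set S := (Finset.Icc 1 N).filter (fun j => a i * b j < θ) with hS
      rcases S.eq_empty_or_nonempty with hSe | hSne
      · refine ⟨0, le_refl _, hbN.le, by simpa using hθ0.le, ?_⟩
        rw [hsum2, hSe, Finset.sum_empty]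
      · set J := S.max' hSne with hJ
        have hJS : J ∈ S := S.max'_mem hSne
        rw [hS, Finset.mem_filter, Finset.mem_Icc] at hJS
        have hSeq : S = Finset.Icc 1 J := by
          ext j
          rw [hS, Finset.mem_filter, Finset.mem_Icc, Finset.mem_Icc]
          constructor
          · rintro ⟨⟨h1, h2⟩, h3⟩
            refine ⟨h1, Finset.le_max' S j ?_⟩
            rw [hS, Finset.mem_filter, Finset.mem_Icc]
            exact ⟨⟨h1, h2⟩, h3⟩
          · rintro ⟨h1, h2⟩
            refine ⟨⟨h1, le_trans h2 hJS.1.2⟩, ?_⟩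
            calc a i * b j ≤ a i * b J :=
                  mul_le_mul_of_nonneg_left (hbmon J hJS.1.2 j h2) hain
              _ < θ := hJS.2
        refine ⟨b J, hb_nn J hJS.1.2, hbmon N le_rfl J hJS.1.2, hJS.2.le, ?_⟩
        rw [hsum2, hSeq, aux_tele, hb0]
        linarith
    calc (a i - a (i-1)) * (∑ j ∈ Finset.Icc 1 N, (if a i * b j < θ then (b j - b (j-1)) else 0))
        ≤ (a i - a (i-1)) * w := mul_le_mul_of_nonneg_left hsle (by linarith)
      _ ≤ _ := aux_key θ (b N) (a (i-1)) (a i) w hθ0 hbN hai1nn hai1 hw0 hwB hvw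
  calc (∑ i ∈ Finset.Icc 1 M, ∑ j ∈ Finset.Icc 1 N,
        if a i * b j < θ then (a i - a (i - 1)) * (b j - b (j - 1)) else 0)
      ≤ ∑ i ∈ Finset.Icc 1 M,
          ((if a i ≤ θ / b N then b N * a i else θ + θ * Real.log (a i * b N / θ)) -
           (if a (i-1) ≤ θ / b N then b N * a (i-1) else θ + θ * Real.log (a (i-1) * b N / θ))) :=
        Finset.sum_le_sum step
    _ = (if a M ≤ θ / b N then b N * a M else θ + θ * Real.log (a M * b N / θ)) -
        (if a 0 ≤ θ / b N then b N * a 0 else θ + θ * Real.log (a 0 * b N / θ)) :=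
        aux_tele (fun i => if a i ≤ θ / b N then b N * a i else θ + θ * Real.log (a i * b N / θ)) M
    _ ≤ θ + θ * Real.log (a M * b N / θ) := by
        have h0 : (if a 0 ≤ θ / b N then b N * a 0 else θ + θ * Real.log (a 0 * b N / θ)) = 0 := by
          rw [if_pos (by rw [ha0]; positivity), ha0, mul_zero]
        rw [h0, sub_zero]
        have hlog : 0 ≤ Real.log (a M * b N / θ) :=
          Real.log_nonneg ((one_le_div hθ0).mpr hθ)
        by_cases h : a M ≤ θ / b N
        · rw [if_pos h]
          rw [le_div_iff₀ hbN] at h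
          nlinarith
        · rw [if_neg h]
end

section
/- Let X, Y, Z be finite nonempty types with |X|·|Y| ≥ 2, Q a finite nonempty type, μ a probability mass function on X × Y, and let α : Q × X → ℝ≥0, β : Q × Y → ℝ≥0 be such that p(q|x,y) := α(q,x)·β(q,y) satisfies Σ_q p(q|x,y) = 1 for all (x,y). With σ_{q,t}, τ_{q,t}, the output map q ↦ z_q, T_q, ω_{q,t}, p(q), I, δ ∈ (0,1], Δ = (I+1)/δ, θ_q = p(q)·2^Δ, α̂(q,t), β̂(q,t) defined as follows: for a tile t = (X_t, Y_t, z_t), σ_{q,t} = min_{x∈X_t} α(q,x) − max_{x'∉X_t} α(q,x') and τ_{q,t} = min_{y∈Y_t} β(q,y) − max_{y'∉Y_t} β(q,y') (maxima over empty sets are 0), T_q = { t : σ_{q,t} > 0, τ_{q,t} > 0, z_t = z_q }, ω_{q,t} = σ_{q,t}·τ_{q,t}, p(q) = Σ_{(x,y)} μ(x,y) p(q|x,y), I = Σ_{(q,x,y): μ(x,y)p(q|x,y)>0} μ(x,y) p(q|x,y) log₂( p(q|x,y)/p(q) ), α̂(q,t) = min_{x∈X_t} α(q,x), β̂(q,t)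 = min_{y∈Y_t} β(q,y) — one has: Σ over pairs (q,t) with t ∈ T_q and α̂(q,t)·β̂(q,t) < θ_q of ω_{q,t} ≤ 2^( Δ + log₂ log₂(|X|·|Y|) + 2 ). -/
open Finset

noncomputable def msup (V : Finset ℝ) : ℝ := sSup (V : Set ℝ)

noncomputable def predv (V : Finset ℝ) (a : ℝ) : ℝ := msup (V.filter (· < a))

lemma msup_empty : msup (∅ : Finset ℝ) = 0 := by simp [msup, Real.sSup_empty]

lemma msup_eq_max' (V : Finset ℝ) (h : V.Nonempty) : msup V = V.max' h :=
  Finset.Nonempty.csSup_eq_max' h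

lemma le_msup {V : Finset ℝ} {a : ℝ} (ha : a ∈ V) : a ≤ msup V := by
  rw [msup_eq_max' V ⟨a, ha⟩]; exact Finset.le_max' _ _ ha

lemma msup_le {V : Finset ℝ} {c : ℝ} (hc : 0 ≤ c) (h : ∀ a ∈ V, a ≤ c) : msup V ≤ c := by
  rcases V.eq_empty_or_nonempty with rfl | hV
  · simpa [msup_empty] using hc
  · rw [msup_eq_max' V hV]; exact Finset.max'_le _ _ _ h

lemma msup_nonneg {V : Finset ℝ} (h : ∀ a ∈ V, 0 ≤ a) : 0 ≤ msup V := by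
  rcases V.eq_empty_or_nonempty with rfl | hV
  · simp [msup_empty]
  · obtain ⟨a, ha⟩ := hV; exact (h a ha).trans (le_msup ha)

lemma msup_mem_of_nonempty {V : Finset ℝ} (h : V.Nonempty) : msup V ∈ V := by
  rw [msup_eq_max' V h]; exact V.max'_mem h

lemma predv_nonneg {V : Finset ℝ} (hV : ∀ v ∈ V, 0 ≤ v) (a : ℝ) : 0 ≤ predv V a :=
  msup_nonneg (fun v hv => hV v (Finset.mem_filter.1 hv).1)

lemma predv_le {V : Finset ℝ} (a : ℝ) (ha : 0 ≤ a) : predv V a ≤ a := by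
  apply msup_le ha
  intro v hv
  exact le_of_lt (Finset.mem_filter.1 hv).2

/-- Telescoping identity. -/
lemma tele (V : Finset ℝ) : ∑ b ∈ V, (b - predv V b) = msup V := by
  induction V using Finset.induction_on_max with
  | empty => simp [msup_empty]
  | insert a s hlt ih =>
    have hns : a ∉ s := fun h => lt_irrefl a (hlt a h)
    rw [Finset.sum_insert hns]
    have h1 : predv (insert a s) a = msup s := by
      unfold predv
      congr 1
      rw [Finset.filter_insert]
      rw [if_neg (lt_irrefl a)]
      exact Finset.filter_true_of_mem (fun x hx => hlt x hx)
    have h2 : ∀ b ∈ s, predv (insert a s) b = predv s b := by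
      intro b hb
      unfold predv
      congr 1
      rw [Finset.filter_insert, if_neg (not_lt.2 (le_of_lt (hlt b hb)))]
    have h3 : msup (insert a s) = a := by
      rw [msup_eq_max' _ ⟨a, Finset.mem_insert_self a s⟩]
      apply le_antisymm
      · apply Finset.max'_le
        intro y hy
        rcases Finset.mem_insert.1 hy with rfl | hy
        · exact le_rfl
        · exact le_of_lt (hlt y hy)
      · exact Finset.le_max' _ _ (Finset.mem_insert_self a s)
    rw [h1, Finset.sum_congr rfl (fun b hb => by rw [h2 b hb]), ih, h3]
    ring

lemma tele_filter (W : Finset ℝ) (r : ℝ) :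
    ∑ b ∈ W.filter (· < r), (b - predv W b) = msup (W.filter (· < r)) := by
  rw [← tele (W.filter (· < r))]
  apply Finset.sum_congr rfl
  intro b hb
  have hbr : b < r := (Finset.mem_filter.1 hb).2
  unfold predv
  congr 2
  ext v
  simp only [Finset.mem_filter, and_assoc]
  constructor
  · rintro ⟨hv, hvb⟩; exact ⟨hv, hvb.trans hbr, hvb⟩
  · rintro ⟨hv, _, hvb⟩; exact ⟨hv, hvb⟩



noncomputable def gpot (θ B a : ℝ) : ℝ :=
  if a ≤ θ / B then B * a else θ + θ * Real.log (a * B / θ)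

lemma one_sub_div_le_log {c a : ℝ} (hc : 0 < c) (ha : 0 < a) : 1 - c / a ≤ Real.log (a / c) := by
  have h := Real.log_le_sub_one_of_pos (show 0 < c / a by positivity)
  have hl : Real.log (c / a) = - Real.log (a / c) := by
    rw [← Real.log_inv]
    congr 1
    field_simp
  nlinarith [h, hl]

lemma gstep {θ B : ℝ} (hθ : 0 < θ) (hB : 0 < B) {a a' : ℝ} (h0 : 0 ≤ a') (h1 : a' ≤ a) :
    (a - a') * min B (θ / a) ≤ gpot θ B a - gpot θ B a' := by
  unfold gpot
  by_cases hab : a ≤ θ / B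
  · rw [if_pos hab, if_pos (h1.trans hab)]
    have : min B (θ / a) ≤ B := min_le_left _ _
    nlinarith [min_le_left B (θ / a)]
  · push_neg at hab
    have ha : 0 < a := lt_trans (by positivity) hab
    have hmin : min B (θ / a) = θ / a := by
      apply min_eq_right
      rw [div_le_iff₀ ha]
      have := (div_lt_iff₀ hB).1 hab
      nlinarith
    rw [if_neg (not_le.2 hab), hmin]
    by_cases ha' : a' ≤ θ / B
    · rw [if_pos ha']
      -- (a - a') * (θ/a) ≤ θ + θ log (aB/θ) - B a'
      have hlog : 1 - (θ / B) / a ≤ Real.log (a / (θ / B)) := one_sub_div_le_log (by positivity) ha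
      have hrw : Real.log (a / (θ / B)) = Real.log (a * B / θ) := by
        congr 1; field_simp
      rw [hrw] at hlog
      have hBa : (a - a') * (θ / a) = θ - a' * (θ / a) := by field_simp
      have hθa : θ / a ≤ B := by
        rw [div_le_iff₀ ha]
        have := (div_lt_iff₀ hB).1 hab
        nlinarith
      -- a' * (B - θ/a) ≤ (θ/B) * (B - θ/a) = θ (1 - (θ/B)/a) ≤ θ log(aB/θ)
      have key : a' * (B - θ / a) ≤ (θ / B) * (B - θ / a) :=
        mul_le_mul_of_nonneg_right ha' (by linarith)
      have hexp : (θ / B) * (B - θ / a) = θ * (1 - (θ / B) / a) := by field_simp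
      nlinarith [mul_le_mul_of_nonneg_left hlog (le_of_lt hθ)]
    · push_neg at ha'
      rw [if_neg (not_le.2 ha')]
      have ha'0 : 0 < a' := lt_trans (by positivity) ha'
      have hlog : 1 - a' / a ≤ Real.log (a / a') := one_sub_div_le_log ha'0 ha
      have hrw : Real.log (a * B / θ) - Real.log (a' * B / θ) = Real.log (a / a') := by
        rw [← Real.log_div (by positivity) (by positivity)]
        congr 1
        field_simp
      have hBa : (a - a') * (θ / a) = θ * (1 - a' / a) := by field_simp
      nlinarith [mul_le_mul_of_nonneg_left hlog (le_of_lt hθ)]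

lemma gpot_mono {θ B : ℝ} (hθ : 0 < θ) (hB : 0 < B) {a a' : ℝ} (h0 : 0 ≤ a') (h1 : a' ≤ a) :
    gpot θ B a' ≤ gpot θ B a := by
  have := gstep hθ hB h0 h1
  have hmin : 0 ≤ min B (θ / a) := le_min (le_of_lt hB) (div_nonneg hθ.le (h0.trans h1))
  nlinarith

lemma pot {θ B : ℝ} (hθ : 0 < θ) (hB : 0 < B) (V : Finset ℝ) (hV : ∀ v ∈ V, 0 < v) :
    ∑ a ∈ V, (a - predv V a) * min B (θ / a) ≤ gpot θ B (msup V) := by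
  induction V using Finset.induction_on_max with
  | empty => simp [msup_empty, gpot, le_div_iff₀ hB, hθ.le]
  | insert a s hlt ih =>
    have hns : a ∉ s := fun h => lt_irrefl a (hlt a h)
    have ha : 0 < a := hV a (Finset.mem_insert_self a s)
    have hs : ∀ v ∈ s, 0 < v := fun v hv => hV v (Finset.mem_insert_of_mem hv)
    have h1 : predv (insert a s) a = msup s := by
      unfold predv
      congr 1
      rw [Finset.filter_insert, if_neg (lt_irrefl a)]
      exact Finset.filter_true_of_mem (fun x hx => hlt x hx)
    have h2 : ∀ b ∈ s, predv (insert a s) b = predv s b := by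
      intro b hb
      unfold predv
      congr 1
      rw [Finset.filter_insert, if_neg (not_lt.2 (le_of_lt (hlt b hb)))]
    have h3 : msup (insert a s) = a := by
      apply le_antisymm
      · exact msup_le ha.le (by
          intro y hy
          rcases Finset.mem_insert.1 hy with rfl | hy
          · exact le_rfl
          · exact le_of_lt (hlt y hy))
      · exact le_msup (Finset.mem_insert_self a s)
    have hms0 : 0 ≤ msup s := msup_nonneg (fun v hv => (hs v hv).le)
    have hmsa : msup s ≤ a := msup_le ha.le (fun v hv => (hlt v hv).le)
    rw [Finset.sum_insert hns, h1, h3,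
      Finset.sum_congr rfl (fun b hb => by rw [h2 b hb])]
    have := gstep hθ hB hms0 hmsa
    have := ih hs
    linarith

/-- The hyperbola bound. -/
lemma hyper {θ B A : ℝ} (hθ : 0 < θ) (hB : 0 < B) (hA : 0 < A) (V W : Finset ℝ)
    (hV : ∀ v ∈ V, 0 < v) (hW : ∀ w ∈ W, 0 < w) (hWB : ∀ w ∈ W, w ≤ B)
    (hVA : ∀ v ∈ V, v ≤ A) :
    ∑ a ∈ V, ∑ b ∈ W.filter (fun b => a * b < θ), (a - predv V a) * (b - predv W b)
      ≤ θ + θ * max 0 (Real.log (A * B / θ)) := by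
  have step1 : ∀ a ∈ V,
      ∑ b ∈ W.filter (fun b => a * b < θ), (a - predv V a) * (b - predv W b)
        ≤ (a - predv V a) * min B (θ / a) := by
    intro a haV
    have ha : 0 < a := hV a haV
    have hfe : W.filter (fun b => a * b < θ) = W.filter (· < θ / a) := by
      apply Finset.filter_congr
      intro b _
      simp only [lt_div_iff₀ ha, eq_iff_iff]
      constructor <;> intro h <;> nlinarith
    rw [← Finset.mul_sum, hfe, tele_filter]
    apply mul_le_mul_of_nonneg_left
    · apply msup_le (le_min hB.le (by positivity))
      intro v hv
      rcases Finset.mem_filter.1 hv with ⟨hvW, hvr⟩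
      exact le_min (hWB v hvW) hvr.le
    · have := predv_le (V := V) a ha.le
      linarith
  calc ∑ a ∈ V, ∑ b ∈ W.filter (fun b => a * b < θ), (a - predv V a) * (b - predv W b)
      ≤ ∑ a ∈ V, (a - predv V a) * min B (θ / a) := Finset.sum_le_sum step1
    _ ≤ gpot θ B (msup V) := pot hθ hB V hV
    _ ≤ gpot θ B A := gpot_mono hθ hB (msup_nonneg fun v hv => (hV v hv).le)
        (msup_le hA.le hVA)
    _ ≤ θ + θ * max 0 (Real.log (A * B / θ)) := by
        unfold gpot
        by_cases h : A ≤ θ / B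
        · rw [if_pos h]
          have : B * A ≤ θ := by rw [le_div_iff₀ hB] at h; linarith
          have : 0 ≤ θ * max 0 (Real.log (A * B / θ)) :=
            mul_nonneg hθ.le (le_max_left _ _)
          linarith
        · rw [if_neg h]
          have : Real.log (A * B / θ) ≤ max 0 (Real.log (A * B / θ)) := le_max_right _ _
          nlinarith



section slicing
variable {X : Type*} [Fintype X] [DecidableEq X] [Nonempty X]

noncomputable def minv (f : X → ℝ) (S : Finset X) : ℝ := ⨅ x : S, f x.1
noncomputable def supc (f : X → ℝ) (S : Finset X) : ℝ := ⨆ x : (Sᶜ : Finset X), f x.1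
noncomputable def vals (f : X → ℝ) : Finset ℝ := (Finset.univ.image f).filter (0 < ·)
noncomputable def lev (f : X → ℝ) (a : ℝ) : Finset X := Finset.univ.filter (fun x => a ≤ f x)

lemma minv_spec (f : X → ℝ) (S : Finset X) (hS : S.Nonempty) :
    ∃ x0 ∈ S, minv f S = f x0 ∧ ∀ x ∈ S, f x0 ≤ f x := by
  obtain ⟨x0, hx0, hmin⟩ := S.exists_min_image f hS
  have hne : Nonempty {x // x ∈ S} := ⟨⟨x0, hx0⟩⟩
  refine ⟨x0, hx0, ?_, hmin⟩
  unfold minv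
  exact le_antisymm (ciInf_le (f := fun x : {x // x ∈ S} => f x.1) (Set.Finite.bddBelow (Set.finite_range _)) ⟨x0, hx0⟩)
    (le_ciInf fun x => hmin x.1 x.2)

lemma supc_spec (f : X → ℝ) (S : Finset X) (hS : Sᶜ.Nonempty) :
    ∃ x0 ∈ Sᶜ, supc f S = f x0 ∧ ∀ x ∈ Sᶜ, f x ≤ f x0 := by
  obtain ⟨x0, hx0, hmax⟩ := Sᶜ.exists_max_image f hS
  have hne : Nonempty {x // x ∈ (Sᶜ : Finset X)} := ⟨⟨x0, hx0⟩⟩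
  refine ⟨x0, hx0, ?_, hmax⟩
  unfold supc
  exact le_antisymm (ciSup_le fun x => hmax x.1 x.2)
    (le_ciSup (f := fun x : {x // x ∈ (Sᶜ : Finset X)} => f x.1)
      (Set.Finite.bddAbove (Set.finite_range _)) ⟨x0, hx0⟩)

lemma minv_empty (f : X → ℝ) : minv f (∅ : Finset X) = 0 := by
  have : IsEmpty {x // x ∈ (∅ : Finset X)} := Finset.isEmpty_coe_sort.2 rfl
  exact Real.iInf_of_isEmpty _

lemma supc_of_compl_empty (f : X → ℝ) {S : Finset X} (h : Sᶜ = ∅) : supc f S = 0 := by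
  have : IsEmpty {x // x ∈ (Sᶜ : Finset X)} := Finset.isEmpty_coe_sort.2 h
  exact Real.iSup_of_isEmpty _

lemma supc_nonneg (f : X → ℝ) (hf : ∀ x, 0 ≤ f x) (S : Finset X) : 0 ≤ supc f S := by
  rcases (Sᶜ : Finset X).eq_empty_or_nonempty with h | h
  · rw [supc_of_compl_empty f h]
  · obtain ⟨x0, hx0, heq, _⟩ := supc_spec f S h
    rw [heq]; exact hf x0

lemma sigma_pos_facts (f : X → ℝ) (hf : ∀ x, 0 ≤ f x) (S : Finset X)
    (h : 0 < minv f S - supc f S) :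
    minv f S ∈ vals f ∧ S = lev f (minv f S) ∧ supc f S = predv (vals f) (minv f S) := by
  have hSne : S.Nonempty := by
    rcases S.eq_empty_or_nonempty with rfl | hne
    · exfalso
      rw [minv_empty] at h
      have := supc_nonneg f hf (∅ : Finset X)
      linarith
    · exact hne
  obtain ⟨x0, hx0, heq, hmin⟩ := minv_spec f S hSne
  set a := minv f S with ha
  have hsc : supc f S < a := by linarith
  have hscn : 0 ≤ supc f S := supc_nonneg f hf S
  have hapos : 0 < a := lt_of_le_of_lt hscn hsc
  have hout : ∀ x ∉ S, f x < a := by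
    intro x hx
    have hxc : x ∈ Sᶜ := Finset.mem_compl.2 hx
    have : f x ≤ supc f S :=
      le_ciSup (f := fun y : (Sᶜ : Finset X) => f y.1)
        (Set.Finite.bddAbove (Set.finite_range _)) ⟨x, hxc⟩
    linarith
  have hlev : S = lev f a := by
    ext x
    simp only [lev, Finset.mem_filter, Finset.mem_univ, true_and]
    constructor
    · intro hxS
      rw [heq]; exact hmin x hxS
    · intro hax
      by_contra hxS
      exact absurd hax (not_le.2 (hout x hxS))
  refine ⟨?_, hlev, ?_⟩
  · simp only [vals, Finset.mem_filter, Finset.mem_image, Finset.mem_univ]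
    exact ⟨⟨x0, by simp, heq.symm⟩, hapos⟩
  · -- supc f S = predv (vals f) a
    rcases (Sᶜ : Finset X).eq_empty_or_nonempty with hc | hc
    · rw [supc_of_compl_empty f hc]
      have : (vals f).filter (· < a) = ∅ := by
        apply Finset.filter_false_of_mem
        intro v hv
        simp only [vals, Finset.mem_filter, Finset.mem_image, Finset.mem_univ, true_and] at hv
        obtain ⟨⟨x, _, rfl⟩, hvpos⟩ := hv
        have hxS : x ∈ S := by
          by_contra hxS
          have : x ∈ Sᶜ := Finset.mem_compl.2 hxS
          rw [hc] at this; exact absurd this (Finset.notMem_empty x)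
        rw [heq]
        exact not_lt.2 (hmin x hxS)
      rw [predv, this, msup_empty]
    · obtain ⟨x1, hx1, heq1, hmax1⟩ := supc_spec f S hc
      by_cases hfx1 : 0 < f x1
      · -- supc = f x1 ∈ vals, is the max of filter
        rw [heq1, predv]
        have hmem : f x1 ∈ (vals f).filter (· < a) := by
          simp only [vals, Finset.mem_filter, Finset.mem_image, Finset.mem_univ, true_and]
          refine ⟨⟨⟨x1, by simp⟩, hfx1⟩, ?_⟩
          rw [← heq1]; exact hsc
        apply le_antisymm (le_msup hmem)
        apply msup_le (hf x1)
        intro v hv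
        simp only [vals, Finset.mem_filter, Finset.mem_image, Finset.mem_univ, true_and] at hv
        obtain ⟨⟨⟨x, _, rfl⟩, _⟩, hva⟩ := hv
        have hxS : x ∉ S := by
          intro hxS
          exact absurd hva (not_lt.2 (heq ▸ hmin x hxS))
        exact hmax1 x (Finset.mem_compl.2 hxS)
      · push_neg at hfx1
        have hfx1 : f x1 = 0 := le_antisymm hfx1 (hf x1)
        rw [heq1, hfx1, predv]
        have : (vals f).filter (· < a) = ∅ := by
          apply Finset.filter_false_of_mem
          intro v hv
          simp only [vals, Finset.mem_filter, Finset.mem_image, Finset.mem_univ, true_and] at hv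
          obtain ⟨⟨x, _, rfl⟩, hvpos⟩ := hv
          intro hva
          have hxS : x ∉ S := by
            intro hxS
            exact absurd hva (not_lt.2 (heq ▸ hmin x hxS))
          have := hmax1 x (Finset.mem_compl.2 hxS)
          rw [hfx1] at this
          linarith
        rw [this, msup_empty]

lemma lev_facts (f : X → ℝ) (hf : ∀ x, 0 ≤ f x) (a : ℝ) (ha : a ∈ vals f) :
    minv f (lev f a) = a ∧ 0 < minv f (lev f a) - supc f (lev f a) := by
  simp only [vals, Finset.mem_filter, Finset.mem_image, Finset.mem_univ, true_and] at ha
  obtain ⟨⟨x0, hx0⟩, hapos⟩ := ha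
  have hx0mem : x0 ∈ lev f a := by
    simp only [lev, Finset.mem_filter, Finset.mem_univ, true_and]
    exact le_of_eq hx0.symm
  have hne : (lev f a).Nonempty := ⟨x0, hx0mem⟩
  obtain ⟨x1, hx1, heq, hmin⟩ := minv_spec f (lev f a) hne
  have hminva : minv f (lev f a) = a := by
    rw [heq]
    apply le_antisymm
    · rw [← hx0]; exact hmin x0 hx0mem
    · exact (Finset.mem_filter.1 hx1).2
  refine ⟨hminva, ?_⟩
  rw [hminva]
  rcases ((lev f a)ᶜ : Finset X).eq_empty_or_nonempty with hc | hc
  · rw [supc_of_compl_empty f hc]; linarith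
  · obtain ⟨x2, hx2, heq2, _⟩ := supc_spec f (lev f a) hc
    rw [heq2]
    have : x2 ∉ lev f a := Finset.mem_compl.1 hx2
    simp only [lev, Finset.mem_filter, Finset.mem_univ, true_and, not_le] at this
    linarith

end slicing


section slicesum
variable {X : Type*} [Fintype X] [DecidableEq X] [Nonempty X]

lemma slice_sum_eq (f : X → ℝ) (hf : ∀ x, 0 ≤ f x) (F : ℝ → ℝ → ℝ) :
    ∑ S : Finset X, (if 0 < minv f S - supc f S
        then F (minv f S) (minv f S - supc f S) else 0)
      = ∑ a ∈ vals f, F a (a - predv (vals f) a) := by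
  rw [← Finset.sum_filter]
  refine Finset.sum_nbij' (fun S => minv f S) (fun a => lev f a) ?_ ?_ ?_ ?_ ?_
  · intro S hS
    exact (sigma_pos_facts f hf S (Finset.mem_filter.1 hS).2).1
  · intro a ha
    simp only [Finset.mem_filter, Finset.mem_univ, true_and]
    exact (lev_facts f hf a ha).2
  · intro S hS
    exact ((sigma_pos_facts f hf S (Finset.mem_filter.1 hS).2).2.1).symm
  · intro a ha
    exact (lev_facts f hf a ha).1
  · intro S hS
    obtain ⟨_, _, h3⟩ := sigma_pos_facts f hf S (Finset.mem_filter.1 hS).2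
    rw [h3]

end slicesum

section perq
variable {X Y : Type*} [Fintype X] [DecidableEq X] [Nonempty X]
  [Fintype Y] [DecidableEq Y] [Nonempty Y]

lemma perq (f : X → ℝ) (g : Y → ℝ) (hf : ∀ x, 0 ≤ f x) (hg : ∀ y, 0 ≤ g y)
    (θ A B : ℝ) (hθ : 0 < θ) (hfA : ∀ x, f x ≤ A) (hgB : ∀ y, g y ≤ B) :
    ∑ S : Finset X, ∑ T : Finset Y,
      (if (0 < minv f S - supc f S) ∧ (0 < minv g T - supc g T) ∧
          minv f S * minv g T < θ
        then (minv f S - supc f S) * (minv g T - supc g T) else 0)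
      ≤ θ + θ * max 0 (Real.log (A * B / θ)) := by
  set σ' : Finset X → ℝ := fun S => minv f S - supc f S with hσ'
  set τ' : Finset Y → ℝ := fun T => minv g T - supc g T with hτ'
  have e1 : ∀ S : Finset X,
      (∑ T : Finset Y, if (0 < σ' S) ∧ (0 < τ' T) ∧ minv f S * minv g T < θ
          then σ' S * τ' T else 0)
        = if 0 < σ' S then
            σ' S * ∑ T : Finset Y,
              (if (0 < τ' T) ∧ minv f S * minv g T < θ then τ' T else 0)
          else 0 := by
    intro S
    by_cases h : 0 < σ' S
    · simp only [h, true_and, if_true, Finset.mul_sum]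
      apply Finset.sum_congr rfl
      intro T _
      by_cases h2 : (0 < τ' T) ∧ minv f S * minv g T < θ
      · rw [if_pos h2, if_pos h2]
      · rw [if_neg h2, if_neg h2, mul_zero]
    · simp [h]
  have e2 : ∀ a : ℝ,
      (∑ T : Finset Y, if (0 < τ' T) ∧ a * minv g T < θ then τ' T else 0)
        = ∑ b ∈ (vals g).filter (fun b => a * b < θ), (b - predv (vals g) b) := by
    intro a
    have := slice_sum_eq g hg (fun b w => if a * b < θ then w else 0)
    rw [Finset.sum_filter]
    rw [← this]
    apply Finset.sum_congr rfl
    intro T _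
    by_cases h1 : 0 < τ' T <;> by_cases h2 : a * minv g T < θ <;>
      simp [h1, h2, hτ']
  have e3 : (∑ S : Finset X, ∑ T : Finset Y,
      if (0 < σ' S) ∧ (0 < τ' T) ∧ minv f S * minv g T < θ
        then σ' S * τ' T else 0)
      = ∑ a ∈ vals f, (a - predv (vals f) a) *
          ∑ b ∈ (vals g).filter (fun b => a * b < θ), (b - predv (vals g) b) := by
    rw [Finset.sum_congr rfl (fun S _ => e1 S)]
    have := slice_sum_eq f hf (fun a w => w *
      ∑ b ∈ (vals g).filter (fun b => a * b < θ), (b - predv (vals g) b))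
    rw [← this]
    apply Finset.sum_congr rfl
    intro S _
    by_cases h : 0 < σ' S
    · rw [if_pos h, if_pos (show 0 < minv f S - supc f S from h), e2 (minv f S)]
    · rw [if_neg h, if_neg (show ¬ 0 < minv f S - supc f S from h)]
  rw [e3]
  rcases (vals f).eq_empty_or_nonempty with hVe | hVne
  · rw [hVe]
    simp only [Finset.sum_empty]
    have : 0 ≤ θ * max 0 (Real.log (A * B / θ)) := mul_nonneg hθ.le (le_max_left _ _)
    linarith
  rcases (vals g).eq_empty_or_nonempty with hWe | hWne
  · rw [hWe]
    simp only [Finset.filter_empty, Finset.sum_empty, mul_zero, Finset.sum_const_zero]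
    have : 0 ≤ θ * max 0 (Real.log (A * B / θ)) := mul_nonneg hθ.le (le_max_left _ _)
    linarith
  have hVpos : ∀ v ∈ vals f, 0 < v := fun v hv => (Finset.mem_filter.1 hv).2
  have hWpos : ∀ w ∈ vals g, 0 < w := fun w hw => (Finset.mem_filter.1 hw).2
  have hVA : ∀ v ∈ vals f, v ≤ A := by
    intro v hv
    obtain ⟨x, _, rfl⟩ := Finset.mem_image.1 (Finset.mem_filter.1 hv).1
    exact hfA x
  have hWB : ∀ w ∈ vals g, w ≤ B := by
    intro w hw
    obtain ⟨y, _, rfl⟩ := Finset.mem_image.1 (Finset.mem_filter.1 hw).1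
    exact hgB y
  have hA : 0 < A := by
    obtain ⟨v, hv⟩ := hVne
    exact lt_of_lt_of_le (hVpos v hv) (hVA v hv)
  have hB : 0 < B := by
    obtain ⟨w, hw⟩ := hWne
    exact lt_of_lt_of_le (hWpos w hw) (hWB w hw)
  have := hyper hθ hB hA (vals f) (vals g) hVpos hWpos hWB hVA
  calc ∑ a ∈ vals f, (a - predv (vals f) a) *
          ∑ b ∈ (vals g).filter (fun b => a * b < θ), (b - predv (vals g) b)
      = ∑ a ∈ vals f, ∑ b ∈ (vals g).filter (fun b => a * b < θ),
          (a - predv (vals f) a) * (b - predv (vals g) b) := by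
        apply Finset.sum_congr rfl
        intro a _
        rw [Finset.mul_sum]
    _ ≤ θ + θ * max 0 (Real.log (A * B / θ)) := this

end perq

section gibbs
variable {X Y Q : Type*} [Fintype X] [Fintype Y] [Fintype Q]

lemma gibbs_nonneg (μ : X → Y → ℝ) (hμ0 : ∀ x y, 0 ≤ μ x y)
    (hμ1 : ∑ x : X, ∑ y : Y, μ x y = 1)
    (α : Q → X → ℝ) (β : Q → Y → ℝ)
    (hα : ∀ q x, 0 ≤ α q x) (hβ : ∀ q y, 0 ≤ β q y)
    (hp1 : ∀ x y, ∑ q : Q, α q x * β q y = 1)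
    (pq : Q → ℝ) (hpq : ∀ q, pq q = ∑ x : X, ∑ y : Y, μ x y * (α q x * β q y)) :
    0 ≤ ∑ q : Q, ∑ x : X, ∑ y : Y,
        if 0 < μ x y * (α q x * β q y) then
          μ x y * (α q x * β q y) * Real.logb 2 ((α q x * β q y) / pq q)
        else 0 := by
  have hlog2 : 0 < Real.log 2 := Real.log_pos one_lt_two
  have hπsum : ∑ q : Q, ∑ x : X, ∑ y : Y, μ x y * (α q x * β q y) = 1 := by
    rw [Finset.sum_comm]
    have : ∀ x : X, ∑ q : Q, ∑ y : Y, μ x y * (α q x * β q y)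
        = ∑ y : Y, μ x y := by
      intro x
      rw [Finset.sum_comm]
      apply Finset.sum_congr rfl
      intro y _
      rw [← Finset.mul_sum, hp1 x y, mul_one]
    rw [Finset.sum_congr rfl (fun x _ => this x), hμ1]
  have hμpqsum : ∑ q : Q, ∑ x : X, ∑ y : Y, μ x y * pq q = 1 := by
    have : ∀ q : Q, ∑ x : X, ∑ y : Y, μ x y * pq q = pq q := by
      intro q
      have : ∀ x : X, ∑ y : Y, μ x y * pq q = (∑ y : Y, μ x y) * pq q := by
        intro x; rw [Finset.sum_mul]
      rw [Finset.sum_congr rfl (fun x _ => this x), ← Finset.sum_mul, hμ1, one_mul]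
    rw [Finset.sum_congr rfl (fun q _ => this q)]
    rw [← hπsum]
    apply Finset.sum_congr rfl
    intro q _
    exact hpq q
  have hterm : ∀ q x y,
      (μ x y * (α q x * β q y) - μ x y * pq q) / Real.log 2 ≤
        (if 0 < μ x y * (α q x * β q y) then
          μ x y * (α q x * β q y) * Real.logb 2 ((α q x * β q y) / pq q)
        else 0) := by
    intro q x y
    set π := μ x y * (α q x * β q y) with hπ
    by_cases h : 0 < π
    · rw [if_pos h]
      have hμpos : 0 < μ x y := by
        rcases mul_pos_iff.1 h with ⟨h1, _⟩ | ⟨h1, h2⟩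
        · exact h1
        · exact absurd h1 (not_lt.2 (hμ0 x y))
      have hpxy : 0 < α q x * β q y := by
        rcases mul_pos_iff.1 h with ⟨_, h2⟩ | ⟨h1, _⟩
        · exact h2
        · exact absurd h1 (not_lt.2 (hμ0 x y))
      have hpqpos : 0 < pq q := by
        have h1 : π ≤ ∑ y : Y, μ x y * (α q x * β q y) :=
          Finset.single_le_sum (f := fun y => μ x y * (α q x * β q y))
            (fun i _ => mul_nonneg (hμ0 x i) (mul_nonneg (hα q x) (hβ q i)))
            (Finset.mem_univ y)
        have h2 : (∑ y : Y, μ x y * (α q x * β q y)) ≤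
            ∑ x : X, ∑ y : Y, μ x y * (α q x * β q y) :=
          Finset.single_le_sum (f := fun x => ∑ y : Y, μ x y * (α q x * β q y))
            (fun i _ => Finset.sum_nonneg fun j _ =>
              mul_nonneg (hμ0 i j) (mul_nonneg (hα q i) (hβ q j)))
            (Finset.mem_univ x)
        rw [hpq q]
        linarith
      have hlb : Real.log (pq q / (α q x * β q y)) ≤ pq q / (α q x * β q y) - 1 :=
        Real.log_le_sub_one_of_pos (by positivity)
      have hneg : Real.log ((α q x * β q y) / pq q)
          = - Real.log (pq q / (α q x * β q y)) := by
        rw [← Real.log_inv]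
        congr 1
        field_simp
      have hπdiv : π * (pq q / (α q x * β q y)) = μ x y * pq q := by
        rw [hπ, mul_assoc, mul_div_assoc', mul_div_cancel_left₀ _ hpxy.ne']
      rw [Real.logb, ← mul_div_assoc]
      rw [div_le_div_iff_of_pos_right hlog2, hneg]
      nlinarith [mul_le_mul_of_nonneg_left hlb h.le]
    · rw [if_neg h]
      push_neg at h
      have hπ0 : π = 0 :=
        le_antisymm h (mul_nonneg (hμ0 x y) (mul_nonneg (hα q x) (hβ q y)))
      have : 0 ≤ μ x y * pq q := by
        apply mul_nonneg (hμ0 x y)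
        rw [hpq q]
        exact Finset.sum_nonneg fun i _ => Finset.sum_nonneg fun j _ =>
          mul_nonneg (hμ0 i j) (mul_nonneg (hα q i) (hβ q j))
      apply div_nonpos_of_nonpos_of_nonneg ?_ hlog2.le
      nlinarith
  calc (0:ℝ) = (∑ q : Q, ∑ x : X, ∑ y : Y,
        (μ x y * (α q x * β q y) - μ x y * pq q)) / Real.log 2 := by
        rw [Finset.sum_congr rfl (fun q _ => Finset.sum_congr rfl (fun x _ =>
          Finset.sum_sub_distrib _ _)), Finset.sum_congr rfl (fun q _ =>
          Finset.sum_sub_distrib _ _), Finset.sum_sub_distrib, hπsum, hμpqsum]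
        simp
    _ ≤ _ := by
        rw [Finset.sum_div]
        apply Finset.sum_le_sum
        intro q _
        rw [Finset.sum_div]
        apply Finset.sum_le_sum
        intro x _
        rw [Finset.sum_div]
        apply Finset.sum_le_sum
        intro y _
        exact hterm q x y

end gibbs

lemma frac_bound {L : ℝ} (h : Real.log 2 ≤ L) : 2 + L ≤ 4 * (L / Real.log 2) := by
  have hl2 : 0 < Real.log 2 := Real.log_pos one_lt_two
  have hl2' : Real.log 2 ≤ 1 := by
    have := Real.log_le_sub_one_of_pos (show (0:ℝ) < 2 by norm_num)
    linarith
  have hLpos : 0 < L := lt_of_lt_of_le hl2 h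
  rw [show (4:ℝ) * (L / Real.log 2) = 4 * L / Real.log 2 by ring, le_div_iff₀ hl2]
  nlinarith [mul_nonneg hLpos.le (sub_nonneg.2 hl2')]

/-- surviving tile weight: In the slicing construction, the total
weight `∑ ω_{q,t}` over pairs `(q,t)` with `t ∈ T_q` and `α̂(q,t)·β̂(q,t) < θ_q`
is at most `2^(Δ + log₂ log₂(|X|·|Y|) + 2)`. -/
theorem surviving_tile_weight_le {X Y Z Q : Type*}
    [Fintype X] [Fintype Y] [Fintype Z] [Fintype Q]
    [Nonempty X] [Nonempty Y] [Nonempty Z] [Nonempty Q]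
    [DecidableEq X] [DecidableEq Y] [DecidableEq Z]
    (hcard : 2 ≤ Fintype.card X * Fintype.card Y)
    (μ : X → Y → ℝ) (hμ0 : ∀ x y, 0 ≤ μ x y) (hμ1 : ∑ x : X, ∑ y : Y, μ x y = 1)
    (α : Q → X → ℝ) (β : Q → Y → ℝ)
    (hα : ∀ q x, 0 ≤ α q x) (hβ : ∀ q y, 0 ≤ β q y)
    (hp1 : ∀ x y, ∑ q : Q, α q x * β q y = 1)
    (z : Q → Z)
    (σ τ ω : Q → Finset X × Finset Y × Z → ℝ)
    (hσ : ∀ q (t : Finset X × Finset Y × Z),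
      σ q t = (⨅ x : t.1, α q x.1) - (⨆ x : (t.1ᶜ : Finset X), α q x.1))
    (hτ : ∀ q (t : Finset X × Finset Y × Z),
      τ q t = (⨅ y : t.2.1, β q y.1) - (⨆ y : (t.2.1ᶜ : Finset Y), β q y.1))
    (hω : ∀ q t, ω q t = σ q t * τ q t)
    (pq : Q → ℝ) (hpq : ∀ q, pq q = ∑ x : X, ∑ y : Y, μ x y * (α q x * β q y))
    (I : ℝ)
    (hI : I = ∑ q : Q, ∑ x : X, ∑ y : Y,
        if 0 < μ x y * (α q x * β q y) then
          μ x y * (α q x * β q y) * Real.logb 2 ((α q x * β q y) / pq q)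
        else 0)
    (δ : ℝ) (hδ0 : 0 < δ) (hδ1 : δ ≤ 1)
    (Δ : ℝ) (hΔ : Δ = (I + 1) / δ)
    (θ : Q → ℝ) (hθ : ∀ q, θ q = pq q * (2 : ℝ) ^ Δ)
    (αhat βhat : Q → Finset X × Finset Y × Z → ℝ)
    (hαhat : ∀ q (t : Finset X × Finset Y × Z), αhat q t = ⨅ x : t.1, α q x.1)
    (hβhat : ∀ q (t : Finset X × Finset Y × Z), βhat q t = ⨅ y : t.2.1, β q y.1) :
    (∑ q : Q, ∑ t ∈ Finset.univ.filter (fun t : Finset X × Finset Y × Z =>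
        (0 < σ q t ∧ 0 < τ q t ∧ t.2.2 = z q) ∧ αhat q t * βhat q t < θ q),
      ω q t)
      ≤ (2 : ℝ) ^ (Δ + Real.logb 2
            (Real.logb 2 ((Fintype.card X : ℝ) * (Fintype.card Y : ℝ))) + 2) := by
  set N : ℝ := (Fintype.card X : ℝ) * (Fintype.card Y : ℝ) with hNdef
  have hN2 : 2 ≤ N := by
    rw [hNdef, ← Nat.cast_mul]
    exact_mod_cast hcard
  have hN0 : 0 < N := by linarith
  -- I ≥ 0
  have hI0 : 0 ≤ I := hI ▸ gibbs_nonneg μ hμ0 hμ1 α β hα hβ hp1 pq hpq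
  have hΔ1 : 1 ≤ Δ := by
    rw [hΔ, le_div_iff₀ hδ0]
    linarith
  set E : ℝ := (2 : ℝ) ^ Δ with hEdef
  have hE0 : 0 < E := Real.rpow_pos_of_pos two_pos Δ
  have hE2 : 2 ≤ E := by
    calc (2:ℝ) = (2:ℝ) ^ (1:ℝ) := (Real.rpow_one 2).symm
      _ ≤ (2:ℝ) ^ Δ := Real.rpow_le_rpow_of_exponent_le one_le_two hΔ1
  have hE1 : 1 ≤ E := by linarith
  -- pq basics
  have hpq0 : ∀ q, 0 ≤ pq q := by
    intro q
    rw [hpq q]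
    exact Finset.sum_nonneg fun i _ => Finset.sum_nonneg fun j _ =>
      mul_nonneg (hμ0 i j) (mul_nonneg (hα q i) (hβ q j))
  have hpqsum : ∑ q : Q, pq q = 1 := by
    rw [Finset.sum_congr rfl (fun q _ => hpq q), Finset.sum_comm]
    have : ∀ x : X, ∑ q : Q, ∑ y : Y, μ x y * (α q x * β q y) = ∑ y : Y, μ x y := by
      intro x
      rw [Finset.sum_comm]
      apply Finset.sum_congr rfl
      intro y _
      rw [← Finset.mul_sum, hp1 x y, mul_one]
    rw [Finset.sum_congr rfl (fun x _ => this x), hμ1]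
  have hθE : ∀ q, θ q = pq q * E := fun q => hθ q
  have hθ0 : ∀ q, 0 ≤ θ q := fun q => (hθE q) ▸ mul_nonneg (hpq0 q) hE0.le
  -- the max quantities
  set A : Q → ℝ := fun q => Finset.univ.sup' Finset.univ_nonempty (α q) with hAdef
  set B : Q → ℝ := fun q => Finset.univ.sup' Finset.univ_nonempty (β q) with hBdef
  set M : Q → ℝ := fun q => A q * B q with hMdef
  have hAub : ∀ q x, α q x ≤ A q := fun q x => Finset.le_sup' (α q) (Finset.mem_univ x)
  have hBub : ∀ q y, β q y ≤ B q := fun q y => Finset.le_sup' (β q) (Finset.mem_univ y)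
  have hA0 : ∀ q, 0 ≤ A q := fun q => le_trans (hα q (Classical.arbitrary X)) (hAub q _)
  have hB0 : ∀ q, 0 ≤ B q := fun q => le_trans (hβ q (Classical.arbitrary Y)) (hBub q _)
  have hM0 : ∀ q, 0 ≤ M q := fun q => mul_nonneg (hA0 q) (hB0 q)
  have hMsum : ∑ q : Q, M q ≤ N := by
    have hle : ∀ q : Q, M q ≤ ∑ x : X, ∑ y : Y, α q x * β q y := by
      intro q
      obtain ⟨x0, _, hx0⟩ := Finset.exists_mem_eq_sup' Finset.univ_nonempty (α q)
      obtain ⟨y0, _, hy0⟩ := Finset.exists_mem_eq_sup' Finset.univ_nonempty (β q)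
      have : M q = α q x0 * β q y0 := by rw [hMdef, hAdef, hBdef]; simp [hx0, hy0]
      rw [this]
      calc α q x0 * β q y0 ≤ ∑ y : Y, α q x0 * β q y :=
            Finset.single_le_sum (f := fun y => α q x0 * β q y)
              (fun j _ => mul_nonneg (hα q x0) (hβ q j)) (Finset.mem_univ y0)
        _ ≤ ∑ x : X, ∑ y : Y, α q x * β q y :=
            Finset.single_le_sum (f := fun x => ∑ y : Y, α q x * β q y)
              (fun i _ => Finset.sum_nonneg fun j _ => mul_nonneg (hα q i) (hβ q j))
              (Finset.mem_univ x0)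
    calc ∑ q : Q, M q ≤ ∑ q : Q, ∑ x : X, ∑ y : Y, α q x * β q y :=
          Finset.sum_le_sum fun q _ => hle q
      _ = N := by
          rw [Finset.sum_comm]
          have : ∀ x : X, ∑ q : Q, ∑ y : Y, α q x * β q y = (Fintype.card Y : ℝ) := by
            intro x
            rw [Finset.sum_comm]
            rw [Finset.sum_congr rfl (fun y (_ : y ∈ Finset.univ) => hp1 x y)]
            simp [Finset.card_univ]
          rw [Finset.sum_congr rfl (fun x _ => this x)]
          simp [Finset.card_univ, hNdef, mul_comm]
  -- per-q bound
  have keyq : ∀ q : Q,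
      (∑ t ∈ Finset.univ.filter (fun t : Finset X × Finset Y × Z =>
          (0 < σ q t ∧ 0 < τ q t ∧ t.2.2 = z q) ∧ αhat q t * βhat q t < θ q), ω q t)
        ≤ (if 0 < pq q then θ q + θ q * max 0 (Real.log (M q / θ q)) else 0) := by
    intro q
    by_cases hq : 0 < pq q
    · rw [if_pos hq]
      have hθq : 0 < θ q := by
        rw [hθE q]; exact mul_pos hq hE0
      have heq : (∑ t ∈ Finset.univ.filter (fun t : Finset X × Finset Y × Z =>
            (0 < σ q t ∧ 0 < τ q t ∧ t.2.2 = z q) ∧ αhat q t * βhat q t < θ q), ω q t)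
          = ∑ S : Finset X, ∑ T : Finset Y,
              (if (0 < minv (α q) S - supc (α q) S) ∧ (0 < minv (β q) T - supc (β q) T) ∧
                  minv (α q) S * minv (β q) T < θ q
                then (minv (α q) S - supc (α q) S) * (minv (β q) T - supc (β q) T)
                else 0) := by
        rw [Finset.sum_filter, Fintype.sum_prod_type]
        apply Finset.sum_congr rfl
        intro S _
        rw [Fintype.sum_prod_type]
        apply Finset.sum_congr rfl
        intro T _
        have hrw : ∀ w : Z,
            (if (0 < σ q (S, T, w) ∧ 0 < τ q (S, T, w) ∧ (S, T, w).2.2 = z q) ∧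
                αhat q (S, T, w) * βhat q (S, T, w) < θ q then ω q (S, T, w) else 0)
            = (if (0 < minv (α q) S - supc (α q) S) ∧ (0 < minv (β q) T - supc (β q) T) ∧
                  w = z q ∧ minv (α q) S * minv (β q) T < θ q
                then (minv (α q) S - supc (α q) S) * (minv (β q) T - supc (β q) T)
                else 0) := by
          intro w
          rw [hσ, hτ, hω, hαhat, hβhat, hσ, hτ]
          apply if_congr _ rfl rfl
          constructor
          · rintro ⟨⟨h1, h2, h3⟩, h4⟩; exact ⟨h1, h2, h3, h4⟩
          · rintro ⟨h1, h2, h3, h4⟩; exact ⟨⟨h1, h2, h3⟩, h4⟩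
        rw [Finset.sum_congr rfl (fun w _ => hrw w)]
        rw [Finset.sum_eq_single (z q)]
        · apply if_congr _ rfl rfl
          constructor
          · rintro ⟨h1, h2, _, h4⟩; exact ⟨h1, h2, h4⟩
          · rintro ⟨h1, h2, h4⟩; exact ⟨h1, h2, rfl, h4⟩
        · intro w _ hw
          apply if_neg
          rintro ⟨_, _, rfl, _⟩
          exact hw rfl
        · intro h
          exact absurd (Finset.mem_univ _) h
      rw [heq]
      have := perq (α q) (β q) (hα q) (hβ q) (θ q) (A q) (B q) hθq (hAub q) (hBub q)
      rw [hMdef]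
      exact this
    · rw [if_neg hq]
      have hpq0q : pq q = 0 := le_antisymm (not_lt.1 hq) (hpq0 q)
      have hθq0 : θ q = 0 := by rw [hθE q, hpq0q, zero_mul]
      have hempty : Finset.univ.filter (fun t : Finset X × Finset Y × Z =>
          (0 < σ q t ∧ 0 < τ q t ∧ t.2.2 = z q) ∧ αhat q t * βhat q t < θ q) = ∅ := by
        apply Finset.filter_false_of_mem
        rintro t _ ⟨_, hlt⟩
        rw [hθq0] at hlt
        have h1 : 0 ≤ αhat q t := by
          rw [hαhat]
          exact Real.iInf_nonneg fun x => hα q x.1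
        have h2 : 0 ≤ βhat q t := by
          rw [hβhat]
          exact Real.iInf_nonneg fun y => hβ q y.1
        nlinarith
      rw [hempty, Finset.sum_empty]
  -- assemble
  set c : ℝ := max (Real.exp 1) (N / E) with hcdef
  have hc0 : 0 < c := lt_of_lt_of_le (Real.exp_pos 1) (le_max_left _ _)
  have hlogc1 : 1 ≤ Real.log c := by
    rw [Real.le_log_iff_exp_le hc0]
    exact le_max_left _ _
  have hstep2 : ∀ q : Q,
      (if 0 < pq q then θ q + θ q * max 0 (Real.log (M q / θ q)) else 0)
        ≤ θ q + (M q / c + θ q * (Real.log c - 1)) := by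
    intro q
    by_cases hq : 0 < pq q
    · rw [if_pos hq]
      have hθq : 0 < θ q := by rw [hθE q]; exact mul_pos hq hE0
      have key : θ q * max 0 (Real.log (M q / θ q)) ≤ M q / c + θ q * (Real.log c - 1) := by
        rcases eq_or_lt_of_le (hM0 q) with hM | hM
        · rw [← hM]
          simp only [zero_div, Real.log_zero, max_self, mul_zero]
          have : 0 ≤ θ q * (Real.log c - 1) := mul_nonneg hθq.le (by linarith)
          linarith
        · set u : ℝ := M q / θ q with hu
          have hu0 : 0 < u := div_pos hM hθq
          have hmax : max 0 (Real.log u) ≤ u / c + (Real.log c - 1) := by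
            rcases le_or_gt (Real.log u) 0 with h | h
            · rw [max_eq_left h]
              have : 0 ≤ u / c := (div_pos hu0 hc0).le
              linarith
            · rw [max_eq_right h.le]
              have hrw : Real.log u = Real.log (u / c) + Real.log c := by
                rw [← Real.log_mul (by positivity) (ne_of_gt hc0)]
                congr 1
                field_simp
              have := Real.log_le_sub_one_of_pos (div_pos hu0 hc0)
              linarith
          calc θ q * max 0 (Real.log u) ≤ θ q * (u / c + (Real.log c - 1)) :=
                mul_le_mul_of_nonneg_left hmax hθq.le
            _ = θ q * u / c + θ q * (Real.log c - 1) := by ring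
            _ = M q / c + θ q * (Real.log c - 1) := by
                rw [hu]
                congr 1
                rw [mul_div_assoc']
                congr 1
                field_simp
      linarith
    · rw [if_neg hq]
      have hθq0 : θ q = 0 := by
        rw [hθE q, le_antisymm (not_lt.1 hq) (hpq0 q), zero_mul]
      rw [hθq0]
      have : 0 ≤ M q / c := div_nonneg (hM0 q) hc0.le
      simp only [zero_add, zero_mul, add_zero]
      linarith
  have hθsum : ∑ q : Q, θ q = E := by
    rw [Finset.sum_congr rfl (fun q _ => hθE q), ← Finset.sum_mul, hpqsum, one_mul]
  have htotal : (∑ q : Q, ∑ t ∈ Finset.univ.filter (fun t : Finset X × Finset Y × Z =>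
        (0 < σ q t ∧ 0 < τ q t ∧ t.2.2 = z q) ∧ αhat q t * βhat q t < θ q), ω q t)
      ≤ E + (N / c + E * (Real.log c - 1)) := by
    calc (∑ q : Q, ∑ t ∈ Finset.univ.filter (fun t : Finset X × Finset Y × Z =>
          (0 < σ q t ∧ 0 < τ q t ∧ t.2.2 = z q) ∧ αhat q t * βhat q t < θ q), ω q t)
        ≤ ∑ q : Q, (θ q + (M q / c + θ q * (Real.log c - 1))) :=
          Finset.sum_le_sum fun q _ => le_trans (keyq q) (hstep2 q)
      _ = (∑ q : Q, θ q) + ((∑ q : Q, M q) / c + (∑ q : Q, θ q) * (Real.log c - 1)) := by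
          rw [Finset.sum_add_distrib, Finset.sum_add_distrib, ← Finset.sum_div,
            ← Finset.sum_mul]
      _ ≤ E + (N / c + E * (Real.log c - 1)) := by
          rw [hθsum]
          have h1 : (∑ q : Q, M q) / c ≤ N / c := by gcongr
          linarith
  -- final numeric estimate
  have hl2 : 0 < Real.log 2 := Real.log_pos one_lt_two
  have hl2' : Real.log 2 ≤ 1 := by
    have := Real.log_le_sub_one_of_pos (show (0:ℝ) < 2 by norm_num)
    linarith
  have hlogN : Real.log 2 ≤ Real.log N := Real.log_le_log two_pos hN2
  have hbound : E + (N / c + E * (Real.log c - 1)) ≤ E * (2 + Real.log N) := by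
    rcases le_or_gt (Real.exp 1) (N / E) with hce | hce
    · have hcc : c = N / E := max_eq_right hce
      have hNE0 : 0 < N / E := div_pos hN0 hE0
      have hNc : N / c = E := by
        rw [hcc]
        field_simp
      have hlogle : Real.log c ≤ Real.log N := by
        rw [hcc]
        apply Real.log_le_log hNE0
        calc N / E ≤ N / 1 := by gcongr
          _ = N := div_one N
      have : E * (Real.log c - 1) ≤ E * (Real.log N - 1) := by
        apply mul_le_mul_of_nonneg_left _ hE0.le
        linarith
      rw [hNc]
      nlinarith
    · have hcc : c = Real.exp 1 := max_eq_left hce.le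
      have hNe : N / c ≤ E := by
        rw [hcc]
        rw [div_le_iff₀ (Real.exp_pos 1)]
        rw [div_lt_iff₀ hE0] at hce
        linarith [mul_comm E (Real.exp 1)]
      have hlogcc : Real.log c = 1 := by rw [hcc, Real.log_exp]
      rw [hlogcc]
      have : 0 < Real.log N := lt_of_lt_of_le hl2 hlogN
      nlinarith
  have hrhs : (2 : ℝ) ^ (Δ + Real.logb 2 (Real.logb 2 N) + 2)
      = E * Real.logb 2 N * 4 := by
    rw [Real.rpow_add two_pos, Real.rpow_add two_pos]
    have h1 : (2:ℝ) ^ (Real.logb 2 (Real.logb 2 N)) = Real.logb 2 N := by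
      apply Real.rpow_logb two_pos (by norm_num)
      have h3 : Real.logb 2 2 ≤ Real.logb 2 N :=
        Real.logb_le_logb_of_le one_lt_two two_pos hN2
      have h4 : Real.logb 2 2 = 1 := Real.logb_self_eq_one one_lt_two
      linarith
    have h2 : (2:ℝ) ^ (2:ℝ) = 4 := by
      rw [show (2:ℝ) = ((2:ℕ):ℝ) by norm_num, Real.rpow_natCast]
      norm_num
    rw [h1, h2, ← hEdef]
  calc (∑ q : Q, ∑ t ∈ Finset.univ.filter (fun t : Finset X × Finset Y × Z =>
        (0 < σ q t ∧ 0 < τ q t ∧ t.2.2 = z q) ∧ αhat q t * βhat q t < θ q), ω q t)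
      ≤ E + (N / c + E * (Real.log c - 1)) := htotal
    _ ≤ E * (2 + Real.log N) := hbound
    _ ≤ E * Real.logb 2 N * 4 := by
        have hfrac : 2 + Real.log N ≤ 4 * (Real.log N / Real.log 2) := frac_bound hlogN
        calc E * (2 + Real.log N) ≤ E * (4 * (Real.log N / Real.log 2)) :=
              mul_le_mul_of_nonneg_left hfrac hE0.le
          _ = E * Real.logb 2 N * 4 := by
              rw [Real.logb]
              ring
    _ = (2 : ℝ) ^ (Δ + Real.logb 2 (Real.logb 2 N) + 2) := hrhs.symm
end

section
/- Let X, Y, Q be finite nonempty types and let p be a probability mass function on X × Y × Q, with marginals and conditionals defined by the usual sums. Define (with all sums restricted to triples/pairs of positive probability, and log₂ the base-2 logarithm): I(X;Y) = Σ p(x,y) log₂( p(x,y)/(p(x)p(y)) ); I(X;Y|Q) = Σ p(x,y,q) log₂( p(x,y|q)/(p(x|q)p(y|q)) ); I(XY;Q) = Σ p(x,y,q) log₂( p(x,y,q)/(p(x,y)p(q)) ); I(X;Q|Y) = Σ p(x,y,q) log₂( p(x,q|y)/(p(x|y)p(q|y)) ); and I(Y;Q|X) = Σ p(x,y,q) log₂(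 p(y,q|x)/(p(y|x)p(q|x)) ). If I(X;Y|Q) ≤ I(X;Y), then I(X;Q|Y) + I(Y;Q|X) ≤ I(XY;Q). -/
private lemma logb_expand4 (a b c d : ℝ) (ha : 0 < a) (hb : 0 < b) (hc : 0 < c) (hd : 0 < d) :
    Real.logb 2 ((a * b) / (c * d)) =
      Real.logb 2 a + Real.logb 2 b - Real.logb 2 c - Real.logb 2 d := by
  rw [Real.logb_div (by positivity) (by positivity), Real.logb_mul ha.ne' hb.ne',
    Real.logb_mul hc.ne' hd.ne']
  ring

private lemma logb_expand3 (a c d : ℝ) (ha : 0 < a) (hc : 0 < c) (hd : 0 < d) :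
    Real.logb 2 (a / (c * d)) = Real.logb 2 a - Real.logb 2 c - Real.logb 2 d := by
  rw [Real.logb_div ha.ne' (by positivity), Real.logb_mul hc.ne' hd.ne']
  ring

/-- For finite random variables `X, Y, Q` with joint pmf `p`, if
`I(X;Y|Q) ≤ I(X;Y)` (the refined pseudotranscript condition), then
`I(X;Q|Y) + I(Y;Q|X) ≤ I(XY;Q)`: internal information cost is at most external
information cost. -/
theorem internal_le_external_of_refined {X Y Q : Type*} [Fintype X] [Fintype Y] [Fintype Q]
    [Nonempty X] [Nonempty Y] [Nonempty Q]
    (p : X → Y → Q → ℝ) (hp0 : ∀ x y q, 0 ≤ p x y q)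
    (hp1 : ∑ x : X, ∑ y : Y, ∑ q : Q, p x y q = 1)
    (pXY : X → Y → ℝ) (hpXY : ∀ x y, pXY x y = ∑ q : Q, p x y q)
    (pX : X → ℝ) (hpX : ∀ x, pX x = ∑ y : Y, ∑ q : Q, p x y q)
    (pY : Y → ℝ) (hpY : ∀ y, pY y = ∑ x : X, ∑ q : Q, p x y q)
    (pQ : Q → ℝ) (hpQ : ∀ q, pQ q = ∑ x : X, ∑ y : Y, p x y q)
    (pXQ : X → Q → ℝ) (hpXQ : ∀ x q, pXQ x q = ∑ y : Y, p x y q)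
    (pYQ : Y → Q → ℝ) (hpYQ : ∀ y q, pYQ y q = ∑ x : X, p x y q)
    (IXY IXYgQ IXYQ IXQgY IYQgX : ℝ)
    (hIXY : IXY = ∑ x : X, ∑ y : Y,
      if 0 < pXY x y then pXY x y * Real.logb 2 (pXY x y / (pX x * pY y)) else 0)
    (hIXYgQ : IXYgQ = ∑ x : X, ∑ y : Y, ∑ q : Q,
      if 0 < p x y q then
        p x y q * Real.logb 2 ((p x y q / pQ q) / ((pXQ x q / pQ q) * (pYQ y q / pQ q)))
      else 0)
    (hIXYQ : IXYQ = ∑ x : X, ∑ y : Y, ∑ q : Q,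
      if 0 < p x y q then
        p x y q * Real.logb 2 (p x y q / (pXY x y * pQ q))
      else 0)
    (hIXQgY : IXQgY = ∑ x : X, ∑ y : Y, ∑ q : Q,
      if 0 < p x y q then
        p x y q * Real.logb 2 ((p x y q / pY y) / ((pXY x y / pY y) * (pYQ y q / pY y)))
      else 0)
    (hIYQgX : IYQgX = ∑ x : X, ∑ y : Y, ∑ q : Q,
      if 0 < p x y q then
        p x y q * Real.logb 2 ((p x y q / pX x) / ((pXY x y / pX x) * (pXQ x q / pX x)))
      else 0)
    (hrefined : IXYgQ ≤ IXY) :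
    IXQgY + IYQgX ≤ IXYQ := by
  -- rewrite IXY as a triple sum
  have hIXY' : IXY = ∑ x : X, ∑ y : Y, ∑ q : Q,
      if 0 < p x y q then p x y q * Real.logb 2 (pXY x y / (pX x * pY y)) else 0 := by
    rw [hIXY]
    refine Finset.sum_congr rfl fun x _ => Finset.sum_congr rfl fun y _ => ?_
    have hsum : ∑ q : Q, (if 0 < p x y q then p x y q * Real.logb 2 (pXY x y / (pX x * pY y))
        else 0) = pXY x y * Real.logb 2 (pXY x y / (pX x * pY y)) := by
      rw [hpXY, Finset.sum_mul]
      refine Finset.sum_congr rfl fun q _ => ?_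
      by_cases h : 0 < p x y q
      · rw [if_pos h]
      · rw [if_neg h]
        have : p x y q = 0 := le_antisymm (not_lt.mp h) (hp0 x y q)
        rw [this, zero_mul]
    rw [hsum]
    by_cases h : 0 < pXY x y
    · rw [if_pos h]
    · rw [if_neg h]
      have : pXY x y = 0 := by
        have h0 : 0 ≤ pXY x y := by
          rw [hpXY]; exact Finset.sum_nonneg fun q _ => hp0 x y q
        exact le_antisymm (not_lt.mp h) h0
      rw [this, zero_mul]
  -- key identity
  have key : IXQgY + IYQgX + IXY = IXYQ + IXYgQ := by
    rw [hIXQgY, hIYQgX, hIXY', hIXYQ, hIXYgQ]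
    simp only [← Finset.sum_add_distrib]
    refine Finset.sum_congr rfl fun x _ => Finset.sum_congr rfl fun y _ =>
      Finset.sum_congr rfl fun q _ => ?_
    by_cases hp : 0 < p x y q
    · simp only [if_pos hp]
      have hxy : 0 < pXY x y := by
        rw [hpXY]
        exact lt_of_lt_of_le hp (Finset.single_le_sum (fun q _ => hp0 x y q) (Finset.mem_univ q))
      have hxq : 0 < pXQ x q := by
        rw [hpXQ]
        exact lt_of_lt_of_le hp (Finset.single_le_sum (fun y _ => hp0 x y q) (Finset.mem_univ y))
      have hyq : 0 < pYQ y q := by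
        rw [hpYQ]
        exact lt_of_lt_of_le hp (Finset.single_le_sum (fun x _ => hp0 x y q) (Finset.mem_univ x))
      have hx : 0 < pX x := by
        rw [hpX]
        refine lt_of_lt_of_le hp ?_
        calc p x y q ≤ ∑ q : Q, p x y q :=
              Finset.single_le_sum (fun q _ => hp0 x y q) (Finset.mem_univ q)
          _ ≤ ∑ y : Y, ∑ q : Q, p x y q :=
              Finset.single_le_sum (fun y _ => Finset.sum_nonneg fun q _ => hp0 x y q)
                (Finset.mem_univ y)
      have hy : 0 < pY y := by
        rw [hpY]
        refine lt_of_lt_of_le hp ?_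
        calc p x y q ≤ ∑ q : Q, p x y q :=
              Finset.single_le_sum (fun q _ => hp0 x y q) (Finset.mem_univ q)
          _ ≤ ∑ x : X, ∑ q : Q, p x y q :=
              Finset.single_le_sum (fun x _ => Finset.sum_nonneg fun q _ => hp0 x y q)
                (Finset.mem_univ x)
      have hq : 0 < pQ q := by
        rw [hpQ]
        refine lt_of_lt_of_le hp ?_
        calc p x y q ≤ ∑ y : Y, p x y q :=
              Finset.single_le_sum (fun y _ => hp0 x y q) (Finset.mem_univ y)
          _ ≤ ∑ x : X, ∑ y : Y, p x y q :=
              Finset.single_le_sum (fun x _ => Finset.sum_nonneg fun y _ => hp0 x y q)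
                (Finset.mem_univ x)
      have e1 : (p x y q / pY y) / ((pXY x y / pY y) * (pYQ y q / pY y))
          = (p x y q * pY y) / (pXY x y * pYQ y q) := by
        field_simp
      have e2 : (p x y q / pX x) / ((pXY x y / pX x) * (pXQ x q / pX x))
          = (p x y q * pX x) / (pXY x y * pXQ x q) := by
        field_simp
      have e3 : (p x y q / pQ q) / ((pXQ x q / pQ q) * (pYQ y q / pQ q))
          = (p x y q * pQ q) / (pXQ x q * pYQ y q) := by
        field_simp
      rw [e1, e2, e3,
        logb_expand4 _ _ _ _ hp hy hxy hyq,
        logb_expand4 _ _ _ _ hp hx hxy hxq,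
        logb_expand4 _ _ _ _ hp hq hxq hyq,
        logb_expand3 _ _ _ hxy hx hy,
        logb_expand3 _ _ _ hp hxy hq]
      ring
    · simp [if_neg hp]
  linarith
end
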